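/- arXiv:2205.01535 — 7 statements merged into one kernel-verified Lean document; each statement's English description precedes it below -/
import Mathlib

section
/- Under the hypotheses of the CMS separation theorem, for each k = 1,...,m−1 there exists an index ν_k with ℓ(k) < ν_k ≤ ℓ(k+1) and a number ξ_k ∈ (0,1] such that ∑_{j=1}^{ν_k−1} |w_j|² + ξ_k |w_{ν_k}|² = ∑_{j=1}^k |c_j|², where ℓ(k) is defined by λ_{ℓ(k)} ≤ θ_k < λ_{ℓ(k)+1}. -/
open Polynomial

namespace CMS6

section Helpers
open Finset

lemma sum_count_le (F : Finset ℝ) (s : Multiset ℝ) :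
    ∑ a ∈ F, s.count a ≤ Multiset.card s := by
  classical
  have h1 : ∑ a ∈ F, s.count a = ∑ a ∈ F.filter (fun a => a ∈ s), s.count a := by
    rw [Finset.sum_filter_of_ne]
    intro a _ h
    by_contra hmem
    exact h (by simp [Multiset.count_eq_zero_of_notMem hmem])
  rw [h1, ← Multiset.toFinset_sum_count_eq s]
  apply Finset.sum_le_sum_of_subset_of_nonneg
  · intro a ha
    simp only [Finset.mem_filter] at ha
    simpa [Multiset.mem_toFinset] using ha.2
  · intro _ _ _; positivity

lemma hermite {M : ℕ} (t : Fin M → ℝ) (ht : Function.Injective t) (c : Fin M)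
    (v : Fin M → ℝ) :
    ∃ p : ℝ[X], p.natDegree ≤ 2 * M - 2 ∧ (∀ j, p.eval (t j) = v j) ∧
      ∀ j, j ≠ c → (Polynomial.derivative p).eval (t j) = 0 := by
  classical
  have hM : 0 < M := c.pos
  let Φ : Polynomial.degreeLT ℝ (2 * M - 1) →ₗ[ℝ]
      ((Fin M → ℝ) × ({j : Fin M // j ≠ c} → ℝ)) :=
    { toFun := fun q => (fun j => Polynomial.eval (t j) (q : ℝ[X]),
        fun j => Polynomial.eval (t j.1) (Polynomial.derivative (q : ℝ[X])))
      map_add' := by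
        intro a b
        refine Prod.ext (funext fun j => ?_) (funext fun j => ?_) <;>
          simp [Prod.fst_add, Prod.snd_add, Pi.add_apply]
      map_smul' := by
        intro r a
        refine Prod.ext (funext fun j => ?_) (funext fun j => ?_) <;>
          simp [Prod.smul_fst, Prod.smul_snd, Pi.smul_apply, smul_eq_mul] }
  have hinj : Function.Injective Φ := by
    rw [← LinearMap.ker_eq_bot, Submodule.eq_bot_iff]
    rintro ⟨p, hpmem⟩ hker
    have h1 : ∀ j, Polynomial.eval (t j) p = 0 := fun j =>
      congrFun (congrArg Prod.fst hker) j
    have h2 : ∀ j, j ≠ c → Polynomial.eval (t j) (Polynomial.derivative p) = 0 := by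
      intro j hj
      exact congrFun (congrArg Prod.snd hker) ⟨j, hj⟩
    ext1
    show p = 0
    by_contra hp
    have hmul : ∀ j : Fin M, (if j = c then 1 else 2) ≤ p.rootMultiplicity (t j) := by
      intro j
      by_cases hj : j = c
      · simp only [hj, if_pos rfl]
        exact (Polynomial.rootMultiplicity_pos hp).2 (h1 c)
      · simp only [if_neg hj]
        exact (Polynomial.one_lt_rootMultiplicity_iff_isRoot hp).2 ⟨h1 j, h2 j hj⟩
    have hsum : (2 * M - 1 : ℕ) ≤ p.natDegree := by
      have e1 : ∑ j : Fin M, (if j = c then 1 else 2) = 2 * M - 1 := by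
        rw [← Finset.add_sum_erase Finset.univ _ (Finset.mem_univ c), if_pos rfl]
        have e2 : ∑ j ∈ Finset.univ.erase c, (if j = c then 1 else 2) =
            ∑ _j ∈ Finset.univ.erase c, 2 :=
          Finset.sum_congr rfl fun j hj => by
            simp [Finset.ne_of_mem_erase hj]
        rw [e2, Finset.sum_const, Finset.card_erase_of_mem (Finset.mem_univ c),
          Finset.card_univ, Fintype.card_fin, smul_eq_mul]
        omega
      calc (2 * M - 1 : ℕ) = ∑ j : Fin M, (if j = c then 1 else 2) := e1.symm
        _ ≤ ∑ j : Fin M, p.rootMultiplicity (t j) := Finset.sum_le_sum fun j _ => hmul j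
        _ = ∑ a ∈ Finset.univ.image t, p.rootMultiplicity a := by
            rw [Finset.sum_image (fun a _ b _ h => ht h)]
        _ = ∑ a ∈ Finset.univ.image t, p.roots.count a := by
            exact Finset.sum_congr rfl fun a _ => (Polynomial.count_roots p).symm
        _ ≤ Multiset.card p.roots := sum_count_le _ _
        _ ≤ p.natDegree := Polynomial.card_roots' p
    have hdeg : p.natDegree < 2 * M - 1 := by
      have := Polynomial.mem_degreeLT.1 hpmem
      rwa [← Polynomial.natDegree_lt_iff_degree_lt hp] at this
    omega
  have hfd : FiniteDimensional ℝ (Polynomial.degreeLT ℝ (2 * M - 1)) :=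
    Module.Finite.equiv (Polynomial.degreeLTEquiv ℝ (2 * M - 1)).symm
  have hdim : Module.finrank ℝ (Polynomial.degreeLT ℝ (2 * M - 1)) =
      Module.finrank ℝ ((Fin M → ℝ) × ({j : Fin M // j ≠ c} → ℝ)) := by
    rw [(Polynomial.degreeLTEquiv ℝ (2 * M - 1)).finrank_eq]
    rw [Module.finrank_prod, Module.finrank_fintype_fun_eq_card,
      Module.finrank_fintype_fun_eq_card, Module.finrank_fintype_fun_eq_card]
    have : Fintype.card {j : Fin M // j ≠ c} = M - 1 := by
      rw [Fintype.card_subtype_compl, Fintype.card_subtype_eq, Fintype.card_fin]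
    rw [this]
    simp only [Fintype.card_fin]
    omega
  have hsurj : Function.Surjective Φ :=
    (LinearMap.injective_iff_surjective_of_finrank_eq_finrank hdim).1 hinj
  obtain ⟨q, hq⟩ := hsurj (v, 0)
  refine ⟨(q : ℝ[X]), ?_, ?_, ?_⟩
  · by_cases hq0 : (q : ℝ[X]) = 0
    · simp [hq0]
    · have := Polynomial.mem_degreeLT.1 q.2
      rw [← Polynomial.natDegree_lt_iff_degree_lt hq0] at this
      omega
  · intro j
    exact congrFun (congrArg Prod.fst hq) j
  · intro j hj
    exact congrFun (congrArg Prod.snd hq) ⟨j, hj⟩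

lemma core {M K : ℕ} (t : Fin M → ℝ) (ht : StrictMono t) (hK : K + 1 < M) :
    ∃ p : ℝ[X], p.natDegree ≤ 2 * M - 2
      ∧ (∀ j : Fin M, (j : ℕ) ≤ K → p.eval (t j) = 1)
      ∧ (∀ j : Fin M, K < (j : ℕ) → p.eval (t j) = 0)
      ∧ (∀ x : ℝ, p.eval x ≤ 1)
      ∧ (∀ x : ℝ, t ⟨K + 1, hK⟩ ≤ x → p.eval x ≤ 0)
      ∧ (∀ x : ℝ, t ⟨K, by omega⟩ < x → x < t ⟨K + 1, hK⟩ →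
          0 < p.eval x ∧ p.eval x < 1) := by
  classical
  have hM : 2 ≤ M := by omega
  -- ℕ-indexed nodes
  set tt : ℕ → ℝ := fun j => t ⟨min j (M - 1), by omega⟩ with htt_def
  have htt : ∀ j (h : j < M), tt j = t ⟨j, h⟩ := by
    intro j h
    simp only [htt_def]
    congr 1
    exact Fin.ext (by simp; omega)
  have tmono : ∀ {i j : ℕ}, i < j → j < M → tt i < tt j := by
    intro i j hij hj
    rw [htt i (by omega), htt j hj]
    exact ht (by rw [Fin.mk_lt_mk]; omega)
  have tmono' : ∀ {i j : ℕ}, i ≤ j → j < M → tt i ≤ tt j := by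
    intro i j hij hj
    rcases eq_or_lt_of_le hij with h | h
    · rw [h]
    · exact (tmono h hj).le
  -- Hermite interpolant
  obtain ⟨p, hdeg, hvalF, hderF⟩ := hermite t (fun a b h => ht.injective h) ⟨K + 1, hK⟩
    (fun j => if (j : ℕ) ≤ K then 1 else 0)
  have hval : ∀ j, j < M → p.eval (tt j) = if j ≤ K then 1 else 0 := by
    intro j hj
    rw [htt j hj]
    exact hvalF ⟨j, hj⟩
  have hder : ∀ j, j < M → j ≠ K + 1 → (Polynomial.derivative p).eval (tt j) = 0 := by
    intro j hj hjK
    rw [htt j hj]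
    exact hderF ⟨j, hj⟩ (by simp [Fin.ext_iff]; omega)
  set p' := Polynomial.derivative p with hp'def
  have hp'ne : p' ≠ 0 := by
    intro h0
    have hnd : p.natDegree = 0 := Polynomial.natDegree_eq_zero_of_derivative_eq_zero h0
    have hC := Polynomial.eq_C_of_natDegree_eq_zero hnd
    have e1 : p.eval (tt 0) = 1 := by rw [hval 0 (by omega)]; simp
    have e2 : p.eval (tt (M - 1)) = 0 := by
      rw [hval (M - 1) (by omega), if_neg (by omega)]
    rw [hC] at e1 e2
    simp at e1 e2
    rw [e1] at e2; norm_num at e2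
  -- Rolle points
  have hζex : ∀ j : ℕ, ∃ z : ℝ, (j + 1 < M ∧ j ≠ K) →
      (z ∈ Set.Ioo (tt j) (tt (j + 1)) ∧ p'.eval z = 0) := by
    intro j
    by_cases hj : j + 1 < M ∧ j ≠ K
    · have hab : tt j < tt (j + 1) := tmono (by omega) hj.1
      have heq : p.eval (tt j) = p.eval (tt (j + 1)) := by
        rw [hval j (by omega), hval (j + 1) hj.1]
        rcases lt_or_gt_of_ne hj.2 with h | h
        · rw [if_pos (by omega), if_pos (by omega)]
        · rw [if_neg (by omega), if_neg (by omega)]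
      obtain ⟨z, hz1, hz2⟩ := exists_hasDerivAt_eq_zero hab
        (Polynomial.continuous p).continuousOn heq
        (fun x _ => Polynomial.hasDerivAt p x)
      exact ⟨z, fun _ => ⟨hz1, hz2⟩⟩
    · exact ⟨0, fun h => absurd h hj⟩
  choose ζ hζ using hζex
  have hζIoo : ∀ j, j + 1 < M → j ≠ K → ζ j ∈ Set.Ioo (tt j) (tt (j + 1)) :=
    fun j h1 h2 => (hζ j ⟨h1, h2⟩).1
  have hζroot : ∀ j, j + 1 < M → j ≠ K → p'.eval (ζ j) = 0 :=
    fun j h1 h2 => (hζ j ⟨h1, h2⟩).2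
  -- index sets and root sets
  set NI : Finset ℕ := (Finset.range M).erase (K + 1) with hNI
  set GI : Finset ℕ := (Finset.range (M - 1)).erase K with hGI
  have hNImem : ∀ {j}, j ∈ NI ↔ (j < M ∧ j ≠ K + 1) := by
    intro j; rw [hNI, Finset.mem_erase, Finset.mem_range]; tauto
  have hGImem : ∀ {j}, j ∈ GI ↔ (j + 1 < M ∧ j ≠ K) := by
    intro j; rw [hGI, Finset.mem_erase, Finset.mem_range]
    constructor
    · rintro ⟨h1, h2⟩; omega
    · rintro ⟨h1, h2⟩; omega
  set N : Finset ℝ := NI.image tt with hN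
  set G : Finset ℝ := GI.image ζ with hG
  have ttinj : Set.InjOn tt ↑NI := by
    intro a ha b hb hab
    rw [Finset.mem_coe, hNImem] at ha hb
    by_contra hne
    rcases lt_or_gt_of_ne hne with h | h
    · exact absurd hab (tmono h hb.1).ne
    · exact absurd hab.symm (tmono h ha.1).ne
  have ζζlt : ∀ {i j}, i ∈ GI → j ∈ GI → i < j → ζ i < ζ j := by
    intro i j hi hj hij
    rw [hGImem] at hi hj
    calc ζ i < tt (i + 1) := (hζIoo i hi.1 hi.2).2
      _ ≤ tt j := tmono' (by omega) (by omega)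
      _ < ζ j := (hζIoo j hj.1 hj.2).1
  have ζinj : Set.InjOn ζ ↑GI := by
    intro a ha b hb hab
    rw [Finset.mem_coe] at ha hb
    by_contra hne
    rcases lt_or_gt_of_ne hne with h | h
    · exact absurd hab (ζζlt ha hb h).ne
    · exact absurd hab.symm (ζζlt hb ha h).ne
  have hNG : Disjoint N G := by
    rw [Finset.disjoint_left]
    intro x hxN hxG
    rw [hN, Finset.mem_image] at hxN
    rw [hG, Finset.mem_image] at hxG
    obtain ⟨i, hi, rfl⟩ := hxN
    obtain ⟨j, hj, hζj⟩ := hxG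
    rw [hNImem] at hi; rw [hGImem] at hj
    have h1 := (hζIoo j hj.1 hj.2).1
    have h2 := (hζIoo j hj.1 hj.2).2
    rw [hζj] at h1 h2
    rcases le_or_gt i j with h | h
    · exact absurd (tmono' h (by omega)) (by push_neg; exact h1)
    · exact absurd (tmono' (by omega : j + 1 ≤ i) (by omega)) (by push_neg; exact h2)
  set Z : Finset ℝ := N ∪ G with hZ
  have cardZ : Z.card = 2 * M - 3 := by
    rw [hZ, Finset.card_union_of_disjoint hNG, hN, hG,
      Finset.card_image_of_injOn ttinj, Finset.card_image_of_injOn ζinj, hNI, hGI,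
      Finset.card_erase_of_mem (by rw [Finset.mem_range]; omega),
      Finset.card_erase_of_mem (by rw [Finset.mem_range]; omega),
      Finset.card_range, Finset.card_range]
    omega
  have hZroot : ∀ z ∈ Z, p'.eval z = 0 := by
    intro z hz
    rw [hZ, Finset.mem_union] at hz
    rcases hz with hz | hz
    · rw [hN, Finset.mem_image] at hz
      obtain ⟨i, hi, rfl⟩ := hz
      rw [hNImem] at hi
      exact hder i hi.1 hi.2
    · rw [hG, Finset.mem_image] at hz
      obtain ⟨i, hi, rfl⟩ := hz
      rw [hGImem] at hi
      exact hζroot i hi.1 hi.2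
  -- factorization
  have hdvd : (∏ z ∈ Z, (X - C z)) ∣ p' := by
    rw [Finset.prod_eq_multiset_prod]
    have : Multiset.map (fun z => X - C z) Z.val = Multiset.map (fun z => X - C z) Z.val := rfl
    rw [show (Z.val.map fun z => X - C z) = (Z.val.map fun z => X - C z) from rfl]
    refine (Multiset.prod_X_sub_C_dvd_iff_le_roots hp'ne Z.val).2 ?_
    rw [Multiset.le_iff_count]
    intro a
    by_cases ha : a ∈ Z
    · have h1 : Z.val.count a = 1 := Multiset.count_eq_one_of_mem Z.nodup ha
      rw [h1, Polynomial.count_roots]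
      exact (Polynomial.rootMultiplicity_pos hp'ne).2 (hZroot a ha)
    · rw [Multiset.count_eq_zero_of_notMem (by exact ha)]
      exact Nat.zero_le _
  obtain ⟨g, hg⟩ := hdvd
  have hgne : g ≠ 0 := by
    intro h0; rw [h0, mul_zero] at hg; exact hp'ne hg
  have hprodne : (∏ z ∈ Z, (X - C z) : ℝ[X]) ≠ 0 := by
    apply Finset.prod_ne_zero_iff.2
    intro z _; exact Polynomial.X_sub_C_ne_zero z
  have hproddeg : (∏ z ∈ Z, (X - C z) : ℝ[X]).natDegree = 2 * M - 3 := by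
    rw [Polynomial.natDegree_prod _ _ (fun z _ => Polynomial.X_sub_C_ne_zero z)]
    simp [Polynomial.natDegree_X_sub_C, cardZ]
  have hp'deg : p'.natDegree ≤ 2 * M - 3 := by
    have := Polynomial.natDegree_derivative_le p
    rw [← hp'def] at this
    omega
  have hgdeg : g.natDegree = 0 := by
    have := Polynomial.natDegree_mul hprodne hgne
    rw [← hg, hproddeg] at this
    omega
  set d : ℝ := g.coeff 0 with hd
  have hgC : g = C d := by rw [hd]; exact Polynomial.eq_C_of_natDegree_eq_zero hgdeg
  have hdne : d ≠ 0 := by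
    intro h0; rw [h0] at hgC; simp at hgC; exact hgne hgC
  have heval : ∀ x : ℝ, p'.eval x = (∏ z ∈ Z, (x - z)) * d := by
    intro x
    rw [hg, hgC]
    rw [Polynomial.eval_mul, Polynomial.eval_prod, Polynomial.eval_C]
    congr 1
    exact Finset.prod_congr rfl fun z _ => by simp
  -- master sign lemma
  have master : ∀ x : ℝ, x ∉ Z → ∃ r : ℝ, 0 < r ∧
      p'.eval x = d * (-1) ^ ((Z.filter (fun z => x < z)).card) * r := by
    intro x hx
    refine ⟨(∏ z ∈ Z.filter (fun z => x < z), (z - x)) *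
      ∏ z ∈ Z.filter (fun z => ¬ x < z), (x - z), ?_, ?_⟩
    · apply mul_pos
      · apply Finset.prod_pos
        intro z hz
        rw [Finset.mem_filter] at hz
        linarith [hz.2]
      · apply Finset.prod_pos
        intro z hz
        rw [Finset.mem_filter] at hz
        have hzx : z ≠ x := fun h => hx (h ▸ hz.1)
        rcases lt_or_gt_of_ne hzx with h | h
        · linarith
        · exact absurd h hz.2
    · rw [heval x, ← Finset.prod_filter_mul_prod_filter_not Z (fun z => x < z) (fun z => x - z)]
      have e1 : ∏ z ∈ Z.filter (fun z => x < z), (x - z)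
          = (-1) ^ ((Z.filter (fun z => x < z)).card) * ∏ z ∈ Z.filter (fun z => x < z), (z - x) := by
        rw [← Finset.prod_const, ← Finset.prod_mul_distrib]
        exact Finset.prod_congr rfl fun z _ => by ring
      rw [e1]
      ring
  -- counting lemmas
  have cardNf : ∀ (x : ℝ) (a : ℕ), a ≤ M →
      (∀ i, i < M → i ≠ K + 1 → ((i < a → tt i < x) ∧ (a ≤ i → x < tt i))) →
      (N.filter (fun z => x < z)).card = M - a - (if a ≤ K + 1 then 1 else 0) := by
    intro x a ha hchar
    have e1 : N.filter (fun z => x < z) = ((Finset.Ico a M).erase (K + 1)).image tt := by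
      rw [hN, Finset.filter_image]
      congr 1
      ext i
      rw [Finset.mem_filter, hNImem, Finset.mem_erase, Finset.mem_Ico]
      constructor
      · rintro ⟨⟨h1, h2⟩, h3⟩
        refine ⟨h2, ?_, h1⟩
        by_contra h4
        exact absurd h3 (by push_neg; exact ((hchar i h1 h2).1 (by omega)).le)
      · rintro ⟨h1, h2, h3⟩
        exact ⟨⟨h3, h1⟩, (hchar i h3 h1).2 h2⟩
    rw [e1, Finset.card_image_of_injOn ?inj]
    case inj =>
      intro i hi j hj hij
      rw [Finset.coe_erase, Set.mem_diff, Finset.mem_coe, Finset.mem_Ico] at hi hj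
      by_contra hne
      rcases lt_or_gt_of_ne hne with h | h
      · exact absurd hij (tmono h hj.1.2).ne
      · exact absurd hij.symm (tmono h hi.1.2).ne
    by_cases hc : a ≤ K + 1
    · rw [Finset.card_erase_of_mem (by rw [Finset.mem_Ico]; omega), Nat.card_Ico, if_pos hc]
    · rw [Finset.erase_eq_of_notMem (by rw [Finset.mem_Ico]; omega), Nat.card_Ico, if_neg hc]
      omega
  have cardGf : ∀ (x : ℝ) (b : ℕ), b ≤ M - 1 →
      (∀ i, i + 1 < M → i ≠ K → ((i < b → ζ i < x) ∧ (b ≤ i → x < ζ i))) →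
      (G.filter (fun z => x < z)).card = (M - 1) - b - (if b ≤ K then 1 else 0) := by
    intro x b hb hchar
    have e1 : G.filter (fun z => x < z) = ((Finset.Ico b (M - 1)).erase K).image ζ := by
      rw [hG, Finset.filter_image]
      congr 1
      ext i
      rw [Finset.mem_filter, hGImem, Finset.mem_erase, Finset.mem_Ico]
      constructor
      · rintro ⟨⟨h1, h2⟩, h3⟩
        refine ⟨h2, ?_, by omega⟩
        by_contra h4
        exact absurd h3 (by push_neg; exact ((hchar i h1 h2).1 (by omega)).le)
      · rintro ⟨h1, h2, h3⟩
        exact ⟨⟨by omega, h1⟩, (hchar i (by omega) h1).2 h2⟩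
    rw [e1, Finset.card_image_of_injOn ?inj2]
    case inj2 =>
      intro i hi j hj hij
      rw [Finset.coe_erase, Set.mem_diff, Finset.mem_coe, Finset.mem_Ico] at hi hj
      by_contra hne
      rcases lt_or_gt_of_ne hne with h | h
      · exact absurd hij (ζζlt (hGImem.2 ⟨by omega, hi.2⟩) (hGImem.2 ⟨by omega, hj.2⟩) h).ne
      · exact absurd hij.symm (ζζlt (hGImem.2 ⟨by omega, hj.2⟩) (hGImem.2 ⟨by omega, hi.2⟩) h).ne
    by_cases hc : b ≤ K
    · rw [Finset.card_erase_of_mem (by rw [Finset.mem_Ico]; omega), Nat.card_Ico, if_pos hc]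
    · rw [Finset.erase_eq_of_notMem (by rw [Finset.mem_Ico]; omega), Nat.card_Ico, if_neg hc]
      omega
  -- combined count
  have cntAt : ∀ (x : ℝ) (a b : ℕ), a ≤ M → b ≤ M - 1 →
      (∀ i, i < M → i ≠ K + 1 → ((i < a → tt i < x) ∧ (a ≤ i → x < tt i))) →
      (∀ i, i + 1 < M → i ≠ K → ((i < b → ζ i < x) ∧ (b ≤ i → x < ζ i))) →
      x ∉ Z ∧ (Z.filter (fun z => x < z)).card
        = (M - a - (if a ≤ K + 1 then 1 else 0)) + ((M - 1) - b - (if b ≤ K then 1 else 0)) := by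
    intro x a b ha hb hcN hcG
    have hxZ : x ∉ Z := by
      rw [hZ, Finset.mem_union, hN, hG, Finset.mem_image, Finset.mem_image]
      rintro (⟨i, hi, hix⟩ | ⟨i, hi, hix⟩)
      · rw [hNImem] at hi
        rcases lt_or_ge i a with h | h
        · exact absurd hix ((hcN i hi.1 hi.2).1 h).ne
        · exact absurd hix ((hcN i hi.1 hi.2).2 h).ne'
      · rw [hGImem] at hi
        rcases lt_or_ge i b with h | h
        · exact absurd hix ((hcG i hi.1 hi.2).1 h).ne
        · exact absurd hix ((hcG i hi.1 hi.2).2 h).ne'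
    refine ⟨hxZ, ?_⟩
    rw [hZ, Finset.filter_union, Finset.card_union_of_disjoint
      (Finset.disjoint_filter_filter hNG), cardNf x a ha hcN, cardGf x b hb hcG]
  -- derivative of eval
  have hderiv : ∀ y : ℝ, deriv (fun x => p.eval x) y = p'.eval y := by
    intro y; rw [hp'def]; exact Polynomial.deriv (p := p)
  -- d is negative
  have hdneg : d < 0 := by
    have hab : tt K < tt (K + 1) := tmono (by omega) hK
    obtain ⟨y, hy, hy2⟩ := exists_hasDerivAt_eq_slope (fun x => p.eval x) (fun x => p'.eval x)
      hab (Polynomial.continuous p).continuousOn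
      (fun x _ => by rw [hp'def]; exact Polynomial.hasDerivAt p x)
    have hyval : p'.eval y < 0 := by
      rw [hy2, hval K (by omega), hval (K + 1) (by omega), if_pos (le_refl K),
        if_neg (by omega)]
      apply div_neg_of_neg_of_pos <;> [norm_num; linarith [hab]]
    have hcN : ∀ i, i < M → i ≠ K + 1 → ((i < K + 1 → tt i < y) ∧ (K + 1 ≤ i → y < tt i)) := by
      intro i hi hiK
      constructor
      · intro h; exact lt_of_le_of_lt (tmono' (by omega) (by omega)) hy.1
      · intro h; exact lt_of_lt_of_le hy.2 (tmono' (by omega) hi)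
    have hcG : ∀ i, i + 1 < M → i ≠ K → ((i < K + 1 → ζ i < y) ∧ (K + 1 ≤ i → y < ζ i)) := by
      intro i hi hiK
      constructor
      · intro h
        calc ζ i < tt (i + 1) := (hζIoo i hi hiK).2
          _ ≤ tt K := tmono' (by omega) (by omega)
          _ < y := hy.1
      · intro h
        calc y < tt (K + 1) := hy.2
          _ ≤ tt i := tmono' (by omega) (by omega)
          _ < ζ i := (hζIoo i hi hiK).1
    obtain ⟨hyZ, hycnt⟩ := cntAt y (K + 1) (K + 1) (by omega) (by omega) hcN hcG
    obtain ⟨r, hr, hre⟩ := master y hyZ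
    rw [hycnt] at hre
    have hev : Even (M - (K + 1) - (if K + 1 ≤ K + 1 then 1 else 0)
        + (M - 1 - (K + 1) - (if K + 1 ≤ K then 1 else 0))) := by
      simp only [Nat.even_iff]; split_ifs <;> omega
    rw [hev.neg_one_pow, mul_one] at hre
    rw [hre] at hyval
    nlinarith
  -- region sign lemmas
  have regNeg : ∀ (x : ℝ) (a b : ℕ), a ≤ M → b ≤ M - 1 →
      (∀ i, i < M → i ≠ K + 1 → ((i < a → tt i < x) ∧ (a ≤ i → x < tt i))) →
      (∀ i, i + 1 < M → i ≠ K → ((i < b → ζ i < x) ∧ (b ≤ i → x < ζ i))) →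
      Even (M - a - (if a ≤ K + 1 then 1 else 0) + (M - 1 - b - (if b ≤ K then 1 else 0))) →
      p'.eval x < 0 := by
    intro x a b ha hb hcN hcG hev
    obtain ⟨hxZ, hcnt⟩ := cntAt x a b ha hb hcN hcG
    obtain ⟨r, hr, hre⟩ := master x hxZ
    rw [hcnt, hev.neg_one_pow, mul_one] at hre
    rw [hre]
    exact mul_neg_of_neg_of_pos hdneg hr
  have regPos : ∀ (x : ℝ) (a b : ℕ), a ≤ M → b ≤ M - 1 →
      (∀ i, i < M → i ≠ K + 1 → ((i < a → tt i < x) ∧ (a ≤ i → x < tt i))) →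
      (∀ i, i + 1 < M → i ≠ K → ((i < b → ζ i < x) ∧ (b ≤ i → x < ζ i))) →
      ¬ Even (M - a - (if a ≤ K + 1 then 1 else 0) + (M - 1 - b - (if b ≤ K then 1 else 0))) →
      0 < p'.eval x := by
    intro x a b ha hb hcN hcG hev
    obtain ⟨hxZ, hcnt⟩ := cntAt x a b ha hb hcN hcG
    obtain ⟨r, hr, hre⟩ := master x hxZ
    rw [hcnt, (Nat.not_even_iff_odd.1 hev).neg_one_pow] at hre
    rw [hre]
    nlinarith
  -- monotonicity helpers
  have antiIcc : ∀ u v : ℝ, u < v → (∀ y, u < y → y < v → p'.eval y < 0) →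
      StrictAntiOn (fun x => p.eval x) (Set.Icc u v) := by
    intro u v huv hneg
    apply strictAntiOn_of_deriv_neg (convex_Icc u v) (Polynomial.continuous p).continuousOn
    intro y hy
    rw [interior_Icc, Set.mem_Ioo] at hy
    rw [hderiv]
    exact hneg y hy.1 hy.2
  have monoIcc : ∀ u v : ℝ, u < v → (∀ y, u < y → y < v → 0 < p'.eval y) →
      StrictMonoOn (fun x => p.eval x) (Set.Icc u v) := by
    intro u v huv hpos
    apply strictMonoOn_of_deriv_pos (convex_Icc u v) (Polynomial.continuous p).continuousOn
    intro y hy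
    rw [interior_Icc, Set.mem_Ioo] at hy
    rw [hderiv]
    exact hpos y hy.1 hy.2
  -- Region A : x < tt 0 gives p' > 0
  have RA : ∀ x : ℝ, x < tt 0 → 0 < p'.eval x := by
    intro x hx
    apply regPos x 0 0 (by omega) (by omega)
    · intro i hi hiK
      exact ⟨by omega, fun _ => lt_of_lt_of_le hx (tmono' (by omega) hi)⟩
    · intro i hi hiK
      refine ⟨by omega, fun _ => ?_⟩
      calc x < tt 0 := hx
        _ ≤ tt i := tmono' (by omega) (by omega)
        _ < ζ i := (hζIoo i hi hiK).1
    · simp only [Nat.even_iff]; split_ifs <;> omega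
  -- Region B : tt j < x < ζ j gives p' < 0
  have RB : ∀ (j : ℕ), j + 1 < M → j ≠ K → ∀ x : ℝ, tt j < x → x < ζ j → p'.eval x < 0 := by
    intro j hj hjK x hx1 hx2
    have hζj := hζIoo j hj hjK
    apply regNeg x (j + 1) j (by omega) (by omega)
    · intro i hi hiK
      constructor
      · intro h; exact lt_of_le_of_lt (tmono' (by omega) (by omega)) hx1
      · intro h
        calc x < ζ j := hx2
          _ < tt (j + 1) := hζj.2
          _ ≤ tt i := tmono' (by omega) hi
    · intro i hi hiK
      constructor
      · intro h
        calc ζ i < tt (i + 1) := (hζIoo i hi hiK).2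
          _ ≤ tt j := tmono' (by omega) (by omega)
          _ < x := hx1
      · intro h
        rcases eq_or_lt_of_le h with rfl | h'
        · exact hx2
        · calc x < ζ j := hx2
            _ < tt (j + 1) := hζj.2
            _ ≤ tt i := tmono' (by omega) (by omega)
            _ < ζ i := (hζIoo i hi hiK).1
    · simp only [Nat.even_iff]; split_ifs <;> omega
  -- Region C : ζ j < x < tt (j+1) gives p' > 0
  have RC : ∀ (j : ℕ), j + 1 < M → j ≠ K → ∀ x : ℝ, ζ j < x → x < tt (j + 1) →
      0 < p'.eval x := by
    intro j hj hjK x hx1 hx2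
    have hζj := hζIoo j hj hjK
    apply regPos x (j + 1) (j + 1) (by omega) (by omega)
    · intro i hi hiK
      constructor
      · intro h
        calc tt i ≤ tt j := tmono' (by omega) (by omega)
          _ < ζ j := hζj.1
          _ < x := hx1
      · intro h; exact lt_of_lt_of_le hx2 (tmono' (by omega) hi)
    · intro i hi hiK
      constructor
      · intro h
        rcases eq_or_lt_of_le (show i ≤ j by omega) with rfl | h'
        · exact hx1
        · calc ζ i < tt (i + 1) := (hζIoo i hi hiK).2
            _ ≤ tt j := tmono' (by omega) (by omega)
            _ < ζ j := hζj.1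
            _ < x := hx1
      · intro h
        calc x < tt (j + 1) := hx2
          _ ≤ tt i := tmono' (by omega) (by omega)
          _ < ζ i := (hζIoo i hi hiK).1
    · simp only [Nat.even_iff]; split_ifs <;> omega
  -- Region D : tt K < x < tt (K+1) gives p' < 0
  have RD : ∀ x : ℝ, tt K < x → x < tt (K + 1) → p'.eval x < 0 := by
    intro x hx1 hx2
    apply regNeg x (K + 1) (K + 1) (by omega) (by omega)
    · intro i hi hiK
      constructor
      · intro h; exact lt_of_le_of_lt (tmono' (by omega) (by omega)) hx1
      · intro h; exact lt_of_lt_of_le hx2 (tmono' (by omega) hi)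
    · intro i hi hiK
      constructor
      · intro h
        calc ζ i < tt (i + 1) := (hζIoo i hi hiK).2
          _ ≤ tt K := tmono' (by omega) (by omega)
          _ < x := hx1
      · intro h
        calc x < tt (K + 1) := hx2
          _ ≤ tt i := tmono' (by omega) (by omega)
          _ < ζ i := (hζIoo i hi hiK).1
    · simp only [Nat.even_iff]; split_ifs <;> omega
  -- Region E : x > tt (M-1) gives p' < 0
  have RE : ∀ x : ℝ, tt (M - 1) < x → p'.eval x < 0 := by
    intro x hx
    apply regNeg x M (M - 1) (by omega) (by omega)
    · intro i hi hiK
      exact ⟨fun _ => lt_of_le_of_lt (tmono' (by omega) (by omega)) hx, by omega⟩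
    · intro i hi hiK
      refine ⟨fun _ => ?_, by omega⟩
      calc ζ i < tt (i + 1) := (hζIoo i hi hiK).2
        _ ≤ tt (M - 1) := tmono' (by omega) (by omega)
        _ < x := hx
    · simp only [Nat.even_iff]; split_ifs <;> omega
  -- value facts
  have hv0 : p.eval (tt 0) = 1 := by rw [hval 0 (by omega), if_pos (by omega)]
  have hvK : p.eval (tt K) = 1 := by rw [hval K (by omega), if_pos (le_refl K)]
  have hvK1 : p.eval (tt (K + 1)) = 0 := by rw [hval (K + 1) (by omega), if_neg (by omega)]
  have hvM1 : p.eval (tt (M - 1)) = 0 := by rw [hval (M - 1) (by omega), if_neg (by omega)]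
  -- bound on (-infty, tt 0]
  have SA : ∀ x : ℝ, x ≤ tt 0 → p.eval x ≤ 1 := by
    intro x hx
    rcases eq_or_lt_of_le hx with rfl | hlt
    · rw [hv0]
    · have hmono : StrictMonoOn (fun x => p.eval x) (Set.Iic (tt 0)) := by
        apply strictMonoOn_of_deriv_pos (convex_Iic (tt 0))
          (Polynomial.continuous p).continuousOn
        intro y hy
        rw [interior_Iic, Set.mem_Iio] at hy
        rw [hderiv]
        exact RA y hy
      have := hmono (Set.mem_Iic.2 hx) (Set.mem_Iic.2 (le_refl _)) hlt
      simpa [hv0] using this.le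
  -- bound on node intervals avoiding K
  have SB : ∀ (j : ℕ), j + 1 < M → j ≠ K → ∀ x : ℝ, tt j ≤ x → x ≤ tt (j + 1) →
      p.eval x ≤ (if j ≤ K then 1 else 0) := by
    intro j hj hjK x hx1 hx2
    have hζj := hζIoo j hj hjK
    have hvj : p.eval (tt j) = (if j ≤ K then 1 else 0) := hval j (by omega)
    have hvj1 : p.eval (tt (j + 1)) = (if j ≤ K then 1 else 0) := by
      rw [hval (j + 1) hj]
      rcases lt_or_gt_of_ne hjK with h | h
      · rw [if_pos (by omega), if_pos (by omega)]
      · rw [if_neg (by omega), if_neg (by omega)]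
    rcases le_or_gt x (ζ j) with hle | hgt
    · rcases eq_or_lt_of_le hx1 with rfl | hlt
      · rw [hvj]
      · have hanti := antiIcc (tt j) (ζ j) hζj.1 (fun y h1 h2 => RB j hj hjK y h1 h2)
        have := hanti (Set.mem_Icc.2 ⟨le_refl _, hζj.1.le⟩) (Set.mem_Icc.2 ⟨hx1, hle⟩) hlt
        rw [← hvj]
        exact this.le
    · rcases eq_or_lt_of_le hx2 with rfl | hlt
      · rw [hvj1]
      · have hmono := monoIcc (ζ j) (tt (j + 1)) hζj.2 (fun y h1 h2 => RC j hj hjK y h1 h2)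
        have := hmono (Set.mem_Icc.2 ⟨hgt.le, hx2⟩)
          (Set.mem_Icc.2 ⟨hζj.2.le, le_refl _⟩) hlt
        rw [← hvj1]
        exact this.le
  -- strict antitone on the crossing interval
  have SD : StrictAntiOn (fun x => p.eval x) (Set.Icc (tt K) (tt (K + 1))) :=
    antiIcc (tt K) (tt (K + 1)) (tmono (by omega) hK) (fun y h1 h2 => RD y h1 h2)
  -- bound on [tt (M-1), infty)
  have SE : ∀ x : ℝ, tt (M - 1) ≤ x → p.eval x ≤ 0 := by
    intro x hx
    rcases eq_or_lt_of_le hx with rfl | hlt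
    · rw [hvM1]
    · have hanti : StrictAntiOn (fun x => p.eval x) (Set.Ici (tt (M - 1))) := by
        apply strictAntiOn_of_deriv_neg (convex_Ici (tt (M - 1)))
          (Polynomial.continuous p).continuousOn
        intro y hy
        rw [interior_Ici, Set.mem_Ioi] at hy
        rw [hderiv]
        exact RE y hy
      have := hanti (Set.mem_Ici.2 (le_refl _)) (Set.mem_Ici.2 hx) hlt
      simpa [hvM1] using this.le
  -- interval finder
  have finder : ∀ x : ℝ, tt 0 ≤ x → x < tt (M - 1) →
      ∃ j, j + 1 < M ∧ tt j ≤ x ∧ x < tt (j + 1) ∧ (tt (K + 1) ≤ x → K + 1 ≤ j) := by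
    intro x hx0 hxM
    set s : Finset ℕ := (Finset.range M).filter (fun j => tt j ≤ x) with hs
    have hmem : ∀ {j}, j ∈ s ↔ (j < M ∧ tt j ≤ x) := by
      intro j; rw [hs, Finset.mem_filter, Finset.mem_range]
    have hne : s.Nonempty := ⟨0, hmem.2 ⟨by omega, hx0⟩⟩
    set j := s.max' hne with hj
    have hjmem : j < M ∧ tt j ≤ x := hmem.1 (s.max'_mem hne)
    have hjM1 : j ≠ M - 1 := by
      intro h
      rw [h] at hjmem
      exact absurd hjmem.2 (by push_neg; exact hxM)
    have hj1 : j + 1 < M := by omega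
    have hnot : ¬ (tt (j + 1) ≤ x) := by
      intro h
      have := Finset.le_max' s (j + 1) (hmem.2 ⟨hj1, h⟩)
      omega
    refine ⟨j, hj1, hjmem.2, by push_neg at hnot; exact hnot, fun h => ?_⟩
    exact Finset.le_max' s (K + 1) (hmem.2 ⟨by omega, h⟩)
  -- global bound C1
  have C1 : ∀ x : ℝ, p.eval x ≤ 1 := by
    intro x
    rcases le_or_gt x (tt 0) with h0 | h0
    · exact SA x h0
    rcases le_or_gt (tt (M - 1)) x with hM1 | hM1
    · linarith [SE x hM1]
    obtain ⟨j, hj1, hj2, hj3, _⟩ := finder x h0.le hM1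
    by_cases hjK : j = K
    · subst hjK
      rcases eq_or_lt_of_le hj2 with rfl | hlt
      · rw [hvK]
      · have := SD (Set.mem_Icc.2 ⟨le_refl _, (tmono (by omega) hK).le⟩)
          (Set.mem_Icc.2 ⟨hj2, hj3.le⟩) hlt
        rw [← hvK]
        exact this.le
    · have := SB j hj1 hjK x hj2 hj3.le
      split_ifs at this <;> linarith
  -- bound to the right of tt (K+1)
  have C2 : ∀ x : ℝ, tt (K + 1) ≤ x → p.eval x ≤ 0 := by
    intro x hx
    rcases le_or_gt (tt (M - 1)) x with hM1 | hM1
    · exact SE x hM1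
    have h00 : tt 0 ≤ x := le_trans (tmono' (by omega) (by omega)) hx
    obtain ⟨j, hj1, hj2, hj3, hj4⟩ := finder x h00 hM1
    have hjK : K + 1 ≤ j := hj4 hx
    have := SB j hj1 (by omega) x hj2 hj3.le
    rwa [if_neg (by omega)] at this
  -- strict bounds inside the crossing interval
  have C3 : ∀ x : ℝ, tt K < x → x < tt (K + 1) → 0 < p.eval x ∧ p.eval x < 1 := by
    intro x hx1 hx2
    have hmem1 : tt K ∈ Set.Icc (tt K) (tt (K + 1)) :=
      Set.mem_Icc.2 ⟨le_refl _, (tmono (by omega) hK).le⟩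
    have hmem2 : x ∈ Set.Icc (tt K) (tt (K + 1)) := Set.mem_Icc.2 ⟨hx1.le, hx2.le⟩
    have hmem3 : tt (K + 1) ∈ Set.Icc (tt K) (tt (K + 1)) :=
      Set.mem_Icc.2 ⟨(tmono (by omega) hK).le, le_refl _⟩
    constructor
    · have := SD hmem2 hmem3 hx2
      simpa [hvK1] using this
    · have := SD hmem1 hmem2 hx1
      simpa [hvK] using this
  -- package
  refine ⟨p, hdeg, ?_, ?_, C1, ?_, ?_⟩
  · intro j hj
    rw [hvalF j, if_pos hj]
  · intro j hj
    rw [hvalF j, if_neg (by omega)]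
  · intro x hx
    apply C2
    rwa [htt (K + 1) hK]
  · intro x hx1 hx2
    apply C3
    · rwa [htt K (by omega)]
    · rwa [htt (K + 1) hK]

lemma coreGe {M K : ℕ} (t : Fin M → ℝ) (ht : StrictMono t) (hK : K + 1 < M) :
    ∃ q : ℝ[X], q.natDegree ≤ 2 * M - 2
      ∧ (∀ j : Fin M, (j : ℕ) ≤ K → q.eval (t j) = 1)
      ∧ (∀ j : Fin M, K < (j : ℕ) → q.eval (t j) = 0)
      ∧ (∀ x : ℝ, 0 ≤ q.eval x)
      ∧ (∀ x : ℝ, x ≤ t ⟨K, by omega⟩ → 1 ≤ q.eval x)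
      ∧ (∀ x : ℝ, t ⟨K, by omega⟩ < x → x < t ⟨K + 1, hK⟩ → 0 < q.eval x ∧ q.eval x < 1) := by
  have hM : 2 ≤ M := by omega
  set u : Fin M → ℝ := fun j => - t j.rev with hu
  have hus : StrictMono u := by
    intro i j hij
    rw [hu]
    simp only [neg_lt_neg_iff]
    exact ht (Fin.rev_lt_rev.2 hij)
  have hK' : (M - K - 2) + 1 < M := by omega
  obtain ⟨p, hdeg, hone, hzero, hle1, hright, hmid⟩ := core u hus hK'
  set q : ℝ[X] := C 1 - p.comp (-X) with hq
  have heq : ∀ x : ℝ, q.eval x = 1 - p.eval (-x) := by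
    intro x
    rw [hq]
    simp [Polynomial.eval_comp]
  have hrev : ∀ j : Fin M, u j.rev = - t j := by
    intro j; rw [hu]; simp [Fin.rev_rev]
  have hrevval : ∀ j : Fin M, (j.rev : ℕ) = M - 1 - (j : ℕ) := by
    intro j; rw [Fin.val_rev]; omega
  refine ⟨q, ?_, ?_, ?_, ?_, ?_, ?_⟩
  · rw [hq]
    refine le_trans (Polynomial.natDegree_sub_le _ _) ?_
    rw [Polynomial.natDegree_C]
    refine max_le (by omega) ?_
    rw [Polynomial.natDegree_comp]
    have : (-X : ℝ[X]).natDegree = 1 := by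
      rw [Polynomial.natDegree_neg, Polynomial.natDegree_X]
    rw [this, mul_one]
    exact hdeg
  · intro j hj
    rw [heq]
    have h2 : p.eval (u j.rev) = 0 := hzero j.rev (by rw [hrevval]; omega)
    rw [hrev] at h2
    rw [h2]
    norm_num
  · intro j hj
    rw [heq]
    have h2 : p.eval (u j.rev) = 1 := hone j.rev (by rw [hrevval]; omega)
    rw [hrev] at h2
    rw [h2]
    norm_num
  · intro x
    rw [heq]
    linarith [hle1 (-x)]
  · intro x hx
    rw [heq]
    have hmk : u ⟨(M - K - 2) + 1, hK'⟩ = - t ⟨K, by omega⟩ := by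
      have : (⟨(M - K - 2) + 1, hK'⟩ : Fin M).rev = ⟨K, by omega⟩ := by
        apply Fin.ext
        rw [Fin.val_rev]
        simp
        omega
      show -t (⟨(M - K - 2) + 1, hK'⟩ : Fin M).rev = - t ⟨K, by omega⟩
      rw [this]
    have := hright (-x) (by rw [hmk]; linarith)
    linarith
  · intro x hx1 hx2
    have hmkK : u ⟨(M - K - 2) + 1, hK'⟩ = - t ⟨K, by omega⟩ := by
      have h1 : (⟨(M - K - 2) + 1, hK'⟩ : Fin M).rev = ⟨K, by omega⟩ := by
        apply Fin.ext
        rw [Fin.val_rev]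
        simp
        omega
      show -t (⟨(M - K - 2) + 1, hK'⟩ : Fin M).rev = - t ⟨K, by omega⟩
      rw [h1]
    have hmkK1 : u ⟨M - K - 2, by omega⟩ = - t ⟨K + 1, hK⟩ := by
      have h1 : (⟨M - K - 2, by omega⟩ : Fin M).rev = ⟨K + 1, hK⟩ := by
        apply Fin.ext
        rw [Fin.val_rev]
        simp
        omega
      show -t (⟨M - K - 2, by omega⟩ : Fin M).rev = - t ⟨K + 1, hK⟩
      rw [h1]
    have := hmid (-x) (by rw [hmkK1]; linarith) (by rw [hmkK]; linarith)
    rw [heq]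
    constructor <;> linarith [this.1, this.2]

theorem stmt_6' {n m : ℕ}
    (lam : Fin n → ℝ) (hlam : StrictMono lam)
    (w : Fin n → ℂ) (hw : ∀ j, w j ≠ 0)
    (θ : Fin m → ℝ) (hθ : StrictMono θ)
    (c : Fin m → ℂ)
    (hinter : ∀ (k : Fin m) (hk : (k : ℕ) + 1 < m),
      ∃ j, θ k < lam j ∧ lam j < θ ⟨(k : ℕ) + 1, hk⟩)
    (hquad : ∀ p : Polynomial ℝ, p.natDegree ≤ 2 * m - 2 →
      ∑ j, ‖w j‖ ^ 2 * p.eval (lam j) = ∑ j, ‖c j‖ ^ 2 * p.eval (θ j))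
    (ℓ : Fin m → Fin n)
    (hℓle : ∀ k, lam (ℓ k) ≤ θ k)
    (hℓmax : ∀ (k : Fin m) (i : Fin n), lam i ≤ θ k → i ≤ ℓ k)
    (hℓne : ∀ k, lam (ℓ k) ≠ θ k) :
    ∀ (k : Fin m) (hk : (k : ℕ) + 1 < m),
      ∃ (ν : Fin n) (ξ : ℝ), 0 < ξ ∧ ξ ≤ 1 ∧
        ℓ k < ν ∧ ν ≤ ℓ ⟨(k : ℕ) + 1, hk⟩ ∧
        (∑ j ∈ Finset.univ.filter fun j => j < ν, ‖w j‖ ^ 2) + ξ * ‖w ν‖ ^ 2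
          = ∑ j ∈ Finset.univ.filter fun j => j ≤ k, ‖c j‖ ^ 2 := by
  classical
  intro k hk
  set c1 : Fin m := ⟨(k : ℕ) + 1, hk⟩ with hc1
  have hkk : (⟨(k : ℕ), by omega⟩ : Fin m) = k := Fin.ext rfl
  have hwpos : ∀ j : Fin n, (0:ℝ) < ‖w j‖ ^ 2 := fun j => by
    have : 0 < ‖w j‖ := norm_pos_iff.2 (hw j)
    positivity
  have hwnn : ∀ j : Fin n, (0:ℝ) ≤ ‖w j‖ ^ 2 := fun j => (hwpos j).le
  have memle : ∀ j : Fin n, j ≤ ℓ k ↔ lam j ≤ θ k :=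
    fun j => ⟨fun h => le_trans (hlam.monotone h) (hℓle k), fun h => hℓmax k j h⟩
  have memle1 : ∀ j : Fin n, j ≤ ℓ c1 ↔ lam j ≤ θ c1 :=
    fun j => ⟨fun h => le_trans (hlam.monotone h) (hℓle c1), fun h => hℓmax c1 j h⟩
  have hltk1 : ∀ j : Fin n, j ≤ ℓ c1 → lam j < θ c1 := by
    intro j hj
    rcases lt_or_eq_of_le ((memle1 j).1 hj) with h | h
    · exact h
    · exfalso
      apply hℓne c1
      have h1 : lam j ≤ lam (ℓ c1) := hlam.monotone hj
      have h2 : lam (ℓ c1) ≤ θ c1 := hℓle c1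
      rw [h] at h1
      linarith
  have hgtk1 : ∀ j : Fin n, ℓ c1 < j → θ c1 < lam j := by
    intro j hj
    by_contra h
    push_neg at h
    exact absurd ((memle1 j).2 h) (by push_neg; exact hj)
  have hgtk : ∀ j : Fin n, ℓ k < j → θ k < lam j := by
    intro j hj
    by_contra h
    push_neg at h
    exact absurd ((memle j).2 h) (by push_neg; exact hj)
  -- the two polynomials
  obtain ⟨P, hPdeg, hP1, hP0, hPle1, hPle0, hPmid⟩ := core θ hθ hk
  obtain ⟨Q, hQdeg, hQ1, hQ0, hQ0le, hQ1le, hQmid⟩ := coreGe θ hθ hk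
  set S : ℝ := ∑ j ∈ Finset.univ.filter (fun j => j ≤ k), ‖c j‖ ^ 2 with hS
  have hθside : ∀ R : ℝ[X], (∀ j : Fin m, (j : ℕ) ≤ (k : ℕ) → R.eval (θ j) = 1) →
      (∀ j : Fin m, (k : ℕ) < (j : ℕ) → R.eval (θ j) = 0) →
      ∑ j, ‖c j‖ ^ 2 * R.eval (θ j) = S := by
    intro R h1 h0
    rw [hS, ← Finset.sum_filter_add_sum_filter_not Finset.univ (fun j => j ≤ k)
      (fun j => ‖c j‖ ^ 2 * R.eval (θ j))]
    have e1 : ∑ j ∈ Finset.univ.filter (fun j => j ≤ k), ‖c j‖ ^ 2 * R.eval (θ j)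
        = ∑ j ∈ Finset.univ.filter (fun j => j ≤ k), ‖c j‖ ^ 2 := by
      refine Finset.sum_congr rfl fun j hj => ?_
      rw [Finset.mem_filter] at hj
      rw [h1 j hj.2, mul_one]
    have e0 : ∑ j ∈ Finset.univ.filter (fun j => ¬ j ≤ k), ‖c j‖ ^ 2 * R.eval (θ j) = 0 := by
      refine Finset.sum_eq_zero fun j hj => ?_
      rw [Finset.mem_filter] at hj
      rw [h0 j (by have := hj.2; rw [Fin.not_le] at this; exact this), mul_zero]
    rw [e1, e0, add_zero]
  -- upper bound : S ≤ B
  have hB : S ≤ ∑ j ∈ Finset.univ.filter (fun j => j ≤ ℓ c1), ‖w j‖ ^ 2 := by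
    have hq := hquad P hPdeg
    rw [hθside P hP1 hP0] at hq
    rw [← hq, ← Finset.sum_filter_add_sum_filter_not Finset.univ (fun j => j ≤ ℓ c1)
      (fun j => ‖w j‖ ^ 2 * P.eval (lam j))]
    have e1 : ∑ j ∈ Finset.univ.filter (fun j => j ≤ ℓ c1), ‖w j‖ ^ 2 * P.eval (lam j)
        ≤ ∑ j ∈ Finset.univ.filter (fun j => j ≤ ℓ c1), ‖w j‖ ^ 2 := by
      refine Finset.sum_le_sum fun j hj => ?_
      calc ‖w j‖ ^ 2 * P.eval (lam j) ≤ ‖w j‖ ^ 2 * 1 :=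
            mul_le_mul_of_nonneg_left (hPle1 _) (hwnn j)
        _ = ‖w j‖ ^ 2 := mul_one _
    have e0 : ∑ j ∈ Finset.univ.filter (fun j => ¬ j ≤ ℓ c1), ‖w j‖ ^ 2 * P.eval (lam j)
        ≤ 0 := by
      refine Finset.sum_nonpos fun j hj => ?_
      rw [Finset.mem_filter] at hj
      have hj2 : ℓ c1 < j := by rw [← Fin.not_le]; exact hj.2
      exact mul_nonpos_of_nonneg_of_nonpos (hwnn j) (hPle0 _ (hgtk1 j hj2).le)
    linarith
  -- lower bound : A < S
  obtain ⟨j0, hj01, hj02⟩ := hinter k hk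
  have hj0gt : ℓ k < j0 := by
    by_contra h
    push_neg at h
    have := (memle j0).1 h
    linarith
  have hj0le : j0 ≤ ℓ c1 := hℓmax c1 j0 hj02.le
  have hA : ∑ j ∈ Finset.univ.filter (fun j => j ≤ ℓ k), ‖w j‖ ^ 2 < S := by
    have hq := hquad Q hQdeg
    rw [hθside Q hQ1 hQ0] at hq
    rw [← hq, ← Finset.sum_filter_add_sum_filter_not Finset.univ (fun j => j ≤ ℓ k)
      (fun j => ‖w j‖ ^ 2 * Q.eval (lam j))]
    have e1 : ∑ j ∈ Finset.univ.filter (fun j => j ≤ ℓ k), ‖w j‖ ^ 2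
        ≤ ∑ j ∈ Finset.univ.filter (fun j => j ≤ ℓ k), ‖w j‖ ^ 2 * Q.eval (lam j) := by
      refine Finset.sum_le_sum fun j hj => ?_
      rw [Finset.mem_filter] at hj
      have hj2 : lam j ≤ θ k := (memle j).1 hj.2
      calc ‖w j‖ ^ 2 = ‖w j‖ ^ 2 * 1 := (mul_one _).symm
        _ ≤ ‖w j‖ ^ 2 * Q.eval (lam j) :=
            mul_le_mul_of_nonneg_left (hQ1le _ (by rwa [hkk])) (hwnn j)
    have e0 : 0 < ∑ j ∈ Finset.univ.filter (fun j => ¬ j ≤ ℓ k), ‖w j‖ ^ 2 * Q.eval (lam j) := by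
      have hj0mem : j0 ∈ Finset.univ.filter (fun j => ¬ j ≤ ℓ k) := by
        rw [Finset.mem_filter]
        exact ⟨Finset.mem_univ _, by rw [Fin.not_le]; exact hj0gt⟩
      have hpos : 0 < ‖w j0‖ ^ 2 * Q.eval (lam j0) := by
        apply mul_pos (hwpos j0)
        exact (hQmid (lam j0) (by rwa [hkk]) hj02).1
      calc (0:ℝ) < ‖w j0‖ ^ 2 * Q.eval (lam j0) := hpos
        _ ≤ ∑ j ∈ Finset.univ.filter (fun j => ¬ j ≤ ℓ k), ‖w j‖ ^ 2 * Q.eval (lam j) := by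
            apply Finset.single_le_sum (f := fun j => ‖w j‖ ^ 2 * Q.eval (lam j)) ?_ hj0mem
            intro i _
            exact mul_nonneg (hwnn i) (hQ0le _)
    linarith
  -- choose ν minimal
  set F : Finset (Fin n) := Finset.univ.filter
    (fun ν => ℓ k < ν ∧ S ≤ ∑ j ∈ Finset.univ.filter (fun j => j ≤ ν), ‖w j‖ ^ 2) with hF
  have hℓlt : ℓ k < ℓ c1 := lt_of_lt_of_le hj0gt hj0le
  have hFne : F.Nonempty := ⟨ℓ c1, by
    rw [hF, Finset.mem_filter]
    exact ⟨Finset.mem_univ _, hℓlt, hB⟩⟩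
  set ν : Fin n := F.min' hFne with hν
  have hνmem : ν ∈ F := F.min'_mem hFne
  rw [hF, Finset.mem_filter] at hνmem
  have hν1 : ℓ k < ν := hνmem.2.1
  have hν2 : S ≤ ∑ j ∈ Finset.univ.filter (fun j => j ≤ ν), ‖w j‖ ^ 2 := hνmem.2.2
  have hνle : ν ≤ ℓ c1 := F.min'_le (ℓ c1) (by
    rw [hF, Finset.mem_filter]
    exact ⟨Finset.mem_univ _, hℓlt, hB⟩)
  set T : ℝ := ∑ j ∈ Finset.univ.filter (fun j => j < ν), ‖w j‖ ^ 2 with hT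
  have hsplit : ∑ j ∈ Finset.univ.filter (fun j => j ≤ ν), ‖w j‖ ^ 2 = T + ‖w ν‖ ^ 2 := by
    have e1 : Finset.univ.filter (fun j => j ≤ ν)
        = insert ν (Finset.univ.filter (fun j => j < ν)) := by
      ext j
      rw [Finset.mem_insert, Finset.mem_filter, Finset.mem_filter]
      constructor
      · rintro ⟨h1, h2⟩
        rcases lt_or_eq_of_le h2 with h | h
        · exact Or.inr ⟨h1, h⟩
        · exact Or.inl h
      · rintro (rfl | ⟨h1, h2⟩)
        · exact ⟨Finset.mem_univ _, le_refl _⟩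
        · exact ⟨h1, h2.le⟩
    rw [e1, Finset.sum_insert (by rw [Finset.mem_filter]; push_neg; intro _; exact le_refl _)]
    rw [hT]
    ring
  have hTlt : T < S := by
    have hν0 : 0 < (ν : ℕ) := by
      have := hν1
      rw [Fin.lt_def] at this
      omega
    set νp : Fin n := ⟨(ν : ℕ) - 1, by omega⟩ with hνp
    have hfil : Finset.univ.filter (fun j => j < ν) = Finset.univ.filter (fun j => j ≤ νp) := by
      ext j
      rw [Finset.mem_filter, Finset.mem_filter]
      constructor
      · rintro ⟨h1, h2⟩
        refine ⟨h1, ?_⟩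
        rw [Fin.le_def, hνp]
        rw [Fin.lt_def] at h2
        simp only []
        omega
      · rintro ⟨h1, h2⟩
        refine ⟨h1, ?_⟩
        rw [Fin.le_def, hνp] at h2
        rw [Fin.lt_def]
        simp only [] at h2
        omega
    have hνpge : ℓ k ≤ νp := by
      rw [Fin.le_def, hνp]
      have := hν1
      rw [Fin.lt_def] at this
      simp only []
      omega
    rcases lt_or_eq_of_le hνpge with h | h
    · -- νp > ℓ k : by minimality νp ∉ F
      have hνplt : νp < ν := by
        rw [Fin.lt_def, hνp]
        simp only []
        omega
      have hnmem : νp ∉ F := by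
        intro hmem
        have := F.min'_le νp hmem
        rw [← hν] at this
        exact absurd hνplt (by push_neg; exact this)
      rw [hF, Finset.mem_filter] at hnmem
      push_neg at hnmem
      have := hnmem (Finset.mem_univ _) h
      rw [hT, hfil]
      exact this
    · rw [hT, hfil, ← h]
      exact hA
  refine ⟨ν, (S - T) / ‖w ν‖ ^ 2, ?_, ?_, hν1, hνle, ?_⟩
  · exact div_pos (by linarith) (hwpos ν)
  · rw [div_le_one (hwpos ν)]
    have := hν2
    rw [hsplit] at this
    linarith
  · have hne : ‖w ν‖ ^ 2 ≠ 0 := (hwpos ν).ne'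
    rw [div_mul_cancel₀ _ hne]
    ring


end Helpers

end CMS6

/-- Under the hypotheses of the CMS separation theorem, with `ℓ(k)` the
largest index such that `lam (ℓ k) ≤ θ k` (and `lam (ℓ k) ≠ θ k`), for every
`k = 1,…,m−1` there exist an index `ν` with `ℓ(k) < ν ≤ ℓ(k+1)` and `ξ ∈ (0,1]` with
`∑_{j<ν} ‖w j‖² + ξ ‖w ν‖² = ∑_{j≤k} ‖c j‖²`. -/
theorem stmt_6 {n m : ℕ}
    (lam : Fin n → ℝ) (hlam : StrictMono lam)
    (w : Fin n → ℂ) (hw : ∀ j, w j ≠ 0)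
    (θ : Fin m → ℝ) (hθ : StrictMono θ)
    (c : Fin m → ℂ)
    (hinter : ∀ (k : Fin m) (hk : (k : ℕ) + 1 < m),
      ∃ j, θ k < lam j ∧ lam j < θ ⟨(k : ℕ) + 1, hk⟩)
    (hquad : ∀ p : Polynomial ℝ, p.natDegree ≤ 2 * m - 2 →
      ∑ j, ‖w j‖ ^ 2 * p.eval (lam j) = ∑ j, ‖c j‖ ^ 2 * p.eval (θ j))
    (ℓ : Fin m → Fin n)
    (hℓle : ∀ k, lam (ℓ k) ≤ θ k)
    (hℓmax : ∀ (k : Fin m) (i : Fin n), lam i ≤ θ k → i ≤ ℓ k)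
    (hℓne : ∀ k, lam (ℓ k) ≠ θ k) :
    ∀ (k : Fin m) (hk : (k : ℕ) + 1 < m),
      ∃ (ν : Fin n) (ξ : ℝ), 0 < ξ ∧ ξ ≤ 1 ∧
        ℓ k < ν ∧ ν ≤ ℓ ⟨(k : ℕ) + 1, hk⟩ ∧
        (∑ j ∈ Finset.univ.filter fun j => j < ν, ‖w j‖ ^ 2) + ξ * ‖w ν‖ ^ 2
          = ∑ j ∈ Finset.univ.filter fun j => j ≤ k, ‖c j‖ ^ 2 :=
  CMS6.stmt_6' lam hlam w hw θ hθ c hinter hquad ℓ hℓle hℓmax hℓne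
end

section
/- Let A ∈ ℂ^{n×n} be Hermitian, u ∈ ℂⁿ, and let V_m be an orthonormal basis of the Krylov subspace K_m(A,u) generated by the Lanczos method with Jacobi matrix J_m = V_m* A V_m and β_0 = ‖u‖. Then for every polynomial p of degree at most 2m−1, ⟨u, p(A)u⟩ = β_0² ⟨e_1, p(J_m) e_1⟩. -/
open Matrix Polynomial

/-- For an Hermitian matrix `A` and the Lanczos decomposition
`A V = V J + β_m v_{m+1} e_m*` with orthonormal `V`, tridiagonal Jacobi matrix
`J = Vᴴ A V`, `Vᴴ u = β₀ e₁` (with `β₀ = ‖u‖`), `u ∈ span V`, and residual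
orthogonal to the Krylov subspace, for every polynomial `p` of degree at most
`2m−1` one has `⟨u, p(A) u⟩ = β₀² ⟨e₁, p(J) e₁⟩`. -/
theorem stmt_7 {n m : ℕ} (hm : 0 < m)
    (A : Matrix (Fin n) (Fin n) ℂ) (hA : A.IsHermitian)
    (u : Fin n → ℂ)
    (V : Matrix (Fin n) (Fin m) ℂ) (hV : Vᴴ * V = 1)
    (J : Matrix (Fin m) (Fin m) ℂ) (hJ : J = Vᴴ * A * V)
    (htri : ∀ i j : Fin m, ((i : ℕ) + 1 < (j : ℕ) ∨ (j : ℕ) + 1 < (i : ℕ)) → J i j = 0)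
    (β₀ : ℝ) (hβ₀ : 0 ≤ β₀) (hβ : β₀ ^ 2 = ∑ i, ‖u i‖ ^ 2)
    (hVu : Vᴴ *ᵥ u = (β₀ : ℂ) • (Pi.single (⟨0, hm⟩ : Fin m) 1 : Fin m → ℂ))
    (hspan : u = V *ᵥ (Vᴴ *ᵥ u))
    (βm : ℂ) (v' : Fin n → ℂ)
    (hres : A * V = V * J + Matrix.of fun (i : Fin n) (j : Fin m) => βm * v' i * (if (j : ℕ) = m - 1 then 1 else 0))
    (horth : Vᴴ *ᵥ v' = 0) :
    ∀ p : Polynomial ℂ, p.natDegree ≤ 2 * m - 1 →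
      star u ⬝ᵥ ((Polynomial.aeval A p) *ᵥ u)
        = (β₀ : ℂ) ^ 2 *
          (star (Pi.single (⟨0, hm⟩ : Fin m) (1 : ℂ)) ⬝ᵥ
            ((Polynomial.aeval J p) *ᵥ (Pi.single (⟨0, hm⟩ : Fin m) 1 : Fin m → ℂ))) := by
  set e1 : Fin m → ℂ := Pi.single (⟨0, hm⟩ : Fin m) 1 with he1
  have hstar : star ((β₀ : ℂ)) = (β₀ : ℂ) := by
    rw [Complex.star_def, Complex.conj_ofReal]
  -- tridiagonal power lemma
  have htrik : ∀ k : ℕ, ∀ i j : Fin m, (j : ℕ) + k < (i : ℕ) → (J ^ k) i j = 0 := by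
    intro k
    induction k with
    | zero =>
      intro i j h
      simp only [pow_zero, Matrix.one_apply]
      have : i ≠ j := by
        intro hij; subst hij; omega
      simp [this]
    | succ k ih =>
      intro i j h
      rw [pow_succ', Matrix.mul_apply]
      apply Finset.sum_eq_zero
      intro l _
      by_cases hl : (l : ℕ) + 1 < (i : ℕ)
      · rw [htri i l (Or.inr hl), zero_mul]
      · rw [ih l j (by omega), mul_zero]
  have hE : ∀ x : Fin m → ℂ, x ⟨m - 1, by omega⟩ = 0 →
      (Matrix.of fun (i : Fin n) (j : Fin m) => βm * v' i * (if (j : ℕ) = m - 1 then 1 else 0)) *ᵥ x = 0 := by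
    intro x hx
    funext i
    simp only [Matrix.mulVec, dotProduct, Matrix.of_apply, Pi.zero_apply]
    apply Finset.sum_eq_zero
    intro j _
    by_cases hj : (j : ℕ) = m - 1
    · have : j = ⟨m - 1, by omega⟩ := Fin.ext hj
      rw [this, hx, mul_zero]
    · simp [hj]
  have hL1 : ∀ k : ℕ, k + 1 ≤ m → (A ^ k) *ᵥ u = (β₀ : ℂ) • (V *ᵥ ((J ^ k) *ᵥ e1)) := by
    intro k
    induction k with
    | zero =>
      intro _
      simp only [pow_zero, Matrix.one_mulVec]
      rw [hspan, hVu, Matrix.mulVec_smul]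
    | succ k ih =>
      intro hk
      have hk' : k + 1 ≤ m := by omega
      rw [pow_succ', ← Matrix.mulVec_mulVec, ih hk',
        Matrix.mulVec_smul, Matrix.mulVec_mulVec, hres, Matrix.add_mulVec]
      have hz : ((J ^ k) *ᵥ e1) ⟨m - 1, by omega⟩ = 0 := by
        rw [he1, Matrix.mulVec_single]
        simpa using htrik k ⟨m - 1, by omega⟩ ⟨0, hm⟩ (by simp; omega)
      rw [hE _ hz, add_zero]
      simp only [Matrix.mulVec_mulVec]
      rw [pow_succ', Matrix.mul_assoc]
  have hL2 : ∀ k : ℕ, k ≤ m → Vᴴ *ᵥ ((A ^ k) *ᵥ u) = (β₀ : ℂ) • ((J ^ k) *ᵥ e1) := by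
    intro k hk
    cases k with
    | zero => simpa using hVu
    | succ k =>
      rw [pow_succ', ← Matrix.mulVec_mulVec, hL1 k (by omega), Matrix.mulVec_smul,
        Matrix.mulVec_smul]
      simp only [Matrix.mulVec_mulVec]
      rw [← Matrix.mul_assoc, ← Matrix.mul_assoc, ← hJ, ← pow_succ']
  have hApow : ∀ k : ℕ, (A ^ k)ᴴ = A ^ k := fun k => by
    rw [Matrix.conjTranspose_pow, hA.eq]
  have hJH : Jᴴ = J := by
    rw [hJ]
    simp only [Matrix.conjTranspose_mul, Matrix.conjTranspose_conjTranspose, hA.eq]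
    rw [Matrix.mul_assoc]
  have hJpow : ∀ k : ℕ, (J ^ k)ᴴ = J ^ k := fun k => by
    rw [Matrix.conjTranspose_pow, hJH]
  -- monomial case
  have hmono : ∀ d : ℕ, d < 2 * m →
      star u ⬝ᵥ ((A ^ d) *ᵥ u) = (β₀ : ℂ) ^ 2 * (star e1 ⬝ᵥ ((J ^ d) *ᵥ e1)) := by
    intro d hd
    set i := min d (m - 1) with hi
    set j := d - i with hjd
    have hij : i + j = d := by omega
    have hi1 : i + 1 ≤ m := by omega
    have hjm : j ≤ m := by omega
    have key : star u ⬝ᵥ ((A ^ i) *ᵥ ((A ^ j) *ᵥ u)) =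
        star ((A ^ i) *ᵥ u) ⬝ᵥ ((A ^ j) *ᵥ u) := by
      rw [Matrix.dotProduct_mulVec, ← hApow i, ← Matrix.star_mulVec, hApow]
    rw [← hij, pow_add, ← Matrix.mulVec_mulVec, key, hL1 i hi1]
    have step : star ((β₀ : ℂ) • (V *ᵥ ((J ^ i) *ᵥ e1))) ⬝ᵥ ((A ^ j) *ᵥ u)
        = (β₀ : ℂ) * (star ((J ^ i) *ᵥ e1) ⬝ᵥ (Vᴴ *ᵥ ((A ^ j) *ᵥ u))) := by
      rw [star_smul, smul_dotProduct, smul_eq_mul, hstar]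
      congr 1
      rw [Matrix.star_mulVec]
      conv_rhs => rw [Matrix.dotProduct_mulVec]
    rw [step, hL2 j hjm, pow_add, ← Matrix.mulVec_mulVec]
    have key2 : star e1 ⬝ᵥ ((J ^ i) *ᵥ ((J ^ j) *ᵥ e1))
        = star ((J ^ i) *ᵥ e1) ⬝ᵥ ((J ^ j) *ᵥ e1) := by
      rw [Matrix.dotProduct_mulVec, ← hJpow i, ← Matrix.star_mulVec, hJpow]
    rw [key2, dotProduct_smul, smul_eq_mul]
    ring
  -- linearity helper
  have hlin : ∀ {k : ℕ} (s : Finset ℕ) (f : ℕ → Matrix (Fin k) (Fin k) ℂ) (x : Fin k → ℂ),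
      star x ⬝ᵥ ((∑ d ∈ s, f d) *ᵥ x) = ∑ d ∈ s, star x ⬝ᵥ (f d *ᵥ x) := by
    intro k s f x
    induction s using Finset.induction_on with
    | empty => simp
    | insert _ _ hd ih =>
      rw [Finset.sum_insert hd, Finset.sum_insert hd, Matrix.add_mulVec,
        dotProduct_add, ih]
  -- conclude by linearity
  intro p hp
  have hdeg : p.natDegree < 2 * m := by omega
  rw [Polynomial.aeval_eq_sum_range' hdeg, Polynomial.aeval_eq_sum_range' hdeg,
    hlin, hlin, Finset.mul_sum]
  refine Finset.sum_congr rfl fun d hd => ?_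
  rw [Matrix.smul_mulVec, dotProduct_smul, smul_eq_mul,
    Matrix.smul_mulVec, dotProduct_smul, smul_eq_mul,
    hmono d (Finset.mem_range.mp hd)]
  ring
end

section
/- Let A be Hermitian, let R_m(A,u) be the rational Krylov subspace with denominator q_{m−1} (with poles distinct from the eigenvalues of A), U_m an orthonormal basis of R_m(A,u), A_m = U_m* A U_m, and x = U_m* u. Then for every rational function r = p / |q_{m−1}|² with p a polynomial of degree at most 2m−1, ⟨u, r(A)u⟩ = ⟨x, r(A_m) x⟩. -/
open Matrix Polynomial

lemma krylov_sum_mulVec {a b : ℕ} {ι : Type*} (s : Finset ι) (f : ι → Matrix (Fin a) (Fin b) ℂ)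
    (v : Fin b → ℂ) : (∑ k ∈ s, f k) *ᵥ v = ∑ k ∈ s, f k *ᵥ v := by
  induction s using Finset.cons_induction with
  | empty => simp
  | cons c s hc ih => simp [Finset.sum_cons, Matrix.add_mulVec, ih]

lemma krylov_mulVec_sum {a b : ℕ} {ι : Type*} (s : Finset ι) (M : Matrix (Fin a) (Fin b) ℂ)
    (f : ι → (Fin b → ℂ)) : M *ᵥ (∑ k ∈ s, f k) = ∑ k ∈ s, M *ᵥ f k := by
  induction s using Finset.cons_induction with
  | empty => simp
  | cons c s hc ih => simp [Finset.sum_cons, Matrix.mulVec_add, ih]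

lemma krylov_dotProduct_sum {N : ℕ} {ι : Type*} (s : Finset ι) (v : Fin N → ℂ)
    (f : ι → (Fin N → ℂ)) : v ⬝ᵥ (∑ k ∈ s, f k) = ∑ k ∈ s, v ⬝ᵥ f k := by
  induction s using Finset.cons_induction with
  | empty => simp
  | cons c s hc ih => simp [Finset.sum_cons, dotProduct_add, ih]

lemma krylov_aeval_ct {N : ℕ} (M : Matrix (Fin N) (Fin N) ℂ) (hM : Mᴴ = M) (p : Polynomial ℂ) :
    (Polynomial.aeval M p)ᴴ = Polynomial.aeval M (p.map (starRingEnd ℂ)) := by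
  induction p using Polynomial.induction_on' with
  | add p q hp hq => simp [Polynomial.map_add, hp, hq]
  | monomial k c =>
      rw [Polynomial.map_monomial]
      simp [Polynomial.aeval_monomial, Matrix.conjTranspose_mul, Matrix.conjTranspose_pow, hM,
        Algebra.algebraMap_eq_smul_one]

lemma krylov_comm_inv {N : ℕ} (B C : Matrix (Fin N) (Fin N) ℂ) (hB : IsUnit B)
    (h : B * C = C * B) : B⁻¹ * C = C * B⁻¹ := by
  have hd : IsUnit B.det := (Matrix.isUnit_iff_isUnit_det _).mp hB
  calc B⁻¹ * C = B⁻¹ * (C * (B * B⁻¹)) := by rw [Matrix.mul_nonsing_inv _ hd, mul_one]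
    _ = B⁻¹ * (B * (C * B⁻¹)) := by rw [← mul_assoc C B, ← h, mul_assoc]
    _ = C * B⁻¹ := by rw [← mul_assoc, Matrix.nonsing_inv_mul _ hd, one_mul]

lemma krylov_shift {N m : ℕ} (P : Matrix (Fin N) (Fin m) ℂ) (a : Fin m → ℂ) (c : Fin N → ℂ) :
    star (P *ᵥ a) ⬝ᵥ c = star a ⬝ᵥ (Pᴴ *ᵥ c) := by
  rw [Matrix.star_mulVec, ← Matrix.dotProduct_mulVec]

lemma krylov_quad {N : ℕ} (M : Matrix (Fin N) (Fin N) ℂ) (hM : Mᴴ = M)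
    (q : Polynomial ℂ) (hq : IsUnit (Polynomial.aeval M q)) (v : Fin N → ℂ) (i j : ℕ) :
    star v ⬝ᵥ ((M ^ (i + j) * (Polynomial.aeval M (q.map (starRingEnd ℂ) * q))⁻¹) *ᵥ v)
      = star (M ^ i *ᵥ ((Polynomial.aeval M q)⁻¹ *ᵥ v))
          ⬝ᵥ (M ^ j *ᵥ ((Polynomial.aeval M q)⁻¹ *ᵥ v)) := by
  set B := Polynomial.aeval M q with hB
  have hcb : (Polynomial.aeval M (q.map (starRingEnd ℂ))) = Bᴴ := (krylov_aeval_ct M hM q).symm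
  have hBH : IsUnit Bᴴ := by
    rw [Matrix.isUnit_iff_isUnit_det, Matrix.det_conjTranspose]
    exact ((Matrix.isUnit_iff_isUnit_det _).mp hq).star
  have hMB : M * B = B * M := by
    have h1 : M * B = Polynomial.aeval M (X * q) := by rw [_root_.map_mul, Polynomial.aeval_X]
    have h2 : B * M = Polynomial.aeval M (q * X) := by rw [_root_.map_mul, Polynomial.aeval_X]
    rw [h1, h2, mul_comm q X]
  have hBBH : B * Bᴴ = Bᴴ * B := by rw [← hcb, ← _root_.map_mul, ← _root_.map_mul, mul_comm]
  have hMBH : Bᴴ * M = M * Bᴴ := by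
    have := congrArg Matrix.conjTranspose hMB
    simpa [Matrix.conjTranspose_mul, hM] using this
  have hpk : ∀ k : ℕ, Bᴴ * M ^ k = M ^ k * Bᴴ := by
    intro k
    induction k with
    | zero => simp
    | succ k ih =>
        rw [pow_succ, ← mul_assoc, ih, mul_assoc, hMBH, ← mul_assoc]
  have hinvk : ∀ k : ℕ, Bᴴ⁻¹ * M ^ k = M ^ k * Bᴴ⁻¹ := fun k =>
    krylov_comm_inv _ _ hBH (hpk k)
  have step1 : Bᴴ⁻¹ * B = B * Bᴴ⁻¹ := krylov_comm_inv _ _ hBH hBBH.symm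
  have step2 : B⁻¹ * Bᴴ⁻¹ = Bᴴ⁻¹ * B⁻¹ := krylov_comm_inv _ _ hq step1.symm
  have key : M ^ (i + j) * (Polynomial.aeval M (q.map (starRingEnd ℂ) * q))⁻¹
      = (M ^ i * B⁻¹)ᴴ * (M ^ j * B⁻¹) := by
    rw [_root_.map_mul, hcb, Matrix.mul_inv_rev, Matrix.conjTranspose_mul,
      Matrix.conjTranspose_nonsing_inv, Matrix.conjTranspose_pow, hM]
    calc M ^ (i + j) * (B⁻¹ * (Bᴴ)⁻¹)
        = M ^ (i + j) * (Bᴴ⁻¹ * B⁻¹) := by rw [step2]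
      _ = Bᴴ⁻¹ * M ^ (i + j) * B⁻¹ := by rw [← mul_assoc, ← hinvk, mul_assoc]
      _ = (Bᴴ)⁻¹ * M ^ i * (M ^ j * B⁻¹) := by
          rw [pow_add, mul_assoc, mul_assoc, mul_assoc]
  rw [Matrix.mulVec_mulVec, Matrix.mulVec_mulVec, krylov_shift, Matrix.mulVec_mulVec, key]

/-- Rational Gaussian quadrature identity in a rational Krylov subspace:
with `A` Hermitian, `q = q_{m−1}` the denominator built from the finite poles (which
are distinct from the eigenvalues of `A`, i.e. `q(A)` is invertible), `U` an
orthonormal basis of `R_m(A,u) = span{p(A) q(A)⁻¹ u : deg p ≤ m−1}`,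
`A_m = Uᴴ A U` and `x = Uᴴ u`, one has
`⟨u, r(A) u⟩ = ⟨x, r(A_m) x⟩` for every `r = p / (q̄ q)` with `deg p ≤ 2m−1`. -/
theorem stmt_8 {n m d : ℕ} (hd : d ≤ m - 1)
    (A : Matrix (Fin n) (Fin n) ℂ) (hA : A.IsHermitian)
    (u : Fin n → ℂ)
    (s : Fin d → ℂ) (q : Polynomial ℂ)
    (hq : q = ∏ j : Fin d, (Polynomial.X - Polynomial.C (s j)))
    (hqA : IsUnit (Polynomial.aeval A q))
    (U : Matrix (Fin n) (Fin m) ℂ) (hU : Uᴴ * U = 1)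
    (hspan : ∀ v : Fin n → ℂ,
      (∃ y, U *ᵥ y = v) ↔
        ∃ p : Polynomial ℂ, p.natDegree ≤ m - 1 ∧
          v = (Polynomial.aeval A p) *ᵥ ((Polynomial.aeval A q)⁻¹ *ᵥ u))
    (Am : Matrix (Fin m) (Fin m) ℂ) (hAm : Am = Uᴴ * A * U)
    (x : Fin m → ℂ) (hx : x = Uᴴ *ᵥ u)
    (hqAm : IsUnit (Polynomial.aeval Am (q.map (starRingEnd ℂ) * q))) :
    ∀ p : Polynomial ℂ, p.natDegree ≤ 2 * m - 1 →
      star u ⬝ᵥ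
          (((Polynomial.aeval A p) *
            (Polynomial.aeval A (q.map (starRingEnd ℂ) * q))⁻¹) *ᵥ u)
        = star x ⬝ᵥ
          (((Polynomial.aeval Am p) *
            (Polynomial.aeval Am (q.map (starRingEnd ℂ) * q))⁻¹) *ᵥ x) := by
  intro p hp
  by_cases hm : m = 0
  · subst hm
    obtain ⟨y, hy⟩ := (hspan ((Polynomial.aeval A (1 : Polynomial ℂ)) *ᵥ
        ((Polynomial.aeval A q)⁻¹ *ᵥ u))).mpr ⟨1, by simp, rfl⟩
    have hy0 : U *ᵥ y = 0 := by
      ext i; simp [Matrix.mulVec, dotProduct]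
    have hw0 : (Polynomial.aeval A q)⁻¹ *ᵥ u = 0 := by
      have h1 := hy.symm.trans hy0
      simpa using h1
    have hu0 : u = 0 := by
      have h2 := congrArg (fun t => (Polynomial.aeval A q) *ᵥ t) hw0
      simpa [Matrix.mulVec_mulVec,
        Matrix.mul_nonsing_inv _ ((Matrix.isUnit_iff_isUnit_det _).mp hqA)] using h2
    simp [hu0, hx]
  · have hm1 : 1 ≤ m := Nat.one_le_iff_ne_zero.mpr hm
    have hdet : IsUnit (Polynomial.aeval A q).det := (Matrix.isUnit_iff_isUnit_det _).mp hqA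
    have hAmH : Amᴴ = Am := by
      rw [hAm]
      simp [Matrix.conjTranspose_mul, hA.eq, Matrix.mul_assoc]
    have hqAmUnit : IsUnit (Polynomial.aeval Am q) := by
      refine (Matrix.isUnit_iff_isUnit_det _).mpr (Matrix.isUnit_det_of_left_inverse
        (B := (Polynomial.aeval Am (q.map (starRingEnd ℂ) * q))⁻¹ *
          Polynomial.aeval Am (q.map (starRingEnd ℂ))) ?_)
      rw [mul_assoc, ← _root_.map_mul,
        Matrix.nonsing_inv_mul _ ((Matrix.isUnit_iff_isUnit_det _).mp hqAm)]
    have hdetm : IsUnit (Polynomial.aeval Am q).det :=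
      (Matrix.isUnit_iff_isUnit_det _).mp hqAmUnit
    set w : Fin n → ℂ := (Polynomial.aeval A q)⁻¹ *ᵥ u with hw
    set z : Fin m → ℂ := (Polynomial.aeval Am q)⁻¹ *ᵥ x with hz
    have hC1 : ∀ i : ℕ, i ≤ m - 1 → U *ᵥ (Uᴴ *ᵥ (A ^ i *ᵥ w)) = A ^ i *ᵥ w := by
      intro i hi
      obtain ⟨y, hy⟩ := (hspan (A ^ i *ᵥ w)).mpr
        ⟨X ^ i, by rw [Polynomial.natDegree_X_pow]; exact hi, by rw [Polynomial.aeval_X_pow]⟩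
      rw [← hy, show Uᴴ *ᵥ (U *ᵥ y) = y from by
        rw [Matrix.mulVec_mulVec, hU, Matrix.one_mulVec]]
    have hC2 : ∀ j : ℕ, j ≤ m → Uᴴ *ᵥ (A ^ j *ᵥ w) = Am ^ j *ᵥ (Uᴴ *ᵥ w) := by
      intro j
      induction j with
      | zero => intro _; simp
      | succ j ih =>
          intro hj
          have hj' : j ≤ m - 1 := by omega
          have ihj := ih (by omega)
          calc Uᴴ *ᵥ (A ^ (j + 1) *ᵥ w) = Uᴴ *ᵥ (A *ᵥ (A ^ j *ᵥ w)) := by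
                rw [pow_succ', ← Matrix.mulVec_mulVec]
            _ = Uᴴ *ᵥ (A *ᵥ (U *ᵥ (Uᴴ *ᵥ (A ^ j *ᵥ w)))) := by rw [hC1 j hj']
            _ = (Uᴴ * A * U) *ᵥ (Uᴴ *ᵥ (A ^ j *ᵥ w)) := by
                simp only [Matrix.mulVec_mulVec, Matrix.mul_assoc]
            _ = Am *ᵥ (Am ^ j *ᵥ (Uᴴ *ᵥ w)) := by rw [← hAm, ihj]
            _ = Am ^ (j + 1) *ᵥ (Uᴴ *ᵥ w) := by rw [pow_succ', ← Matrix.mulVec_mulVec]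
    have hdq : q.natDegree < m := by
      have h1 : q.natDegree ≤ d := by
        rw [hq]
        refine le_trans (Polynomial.natDegree_prod_le _ _) ?_
        simp [Polynomial.natDegree_X_sub_C]
      omega
    have hC3 : Uᴴ *ᵥ ((Polynomial.aeval A q) *ᵥ w) = (Polynomial.aeval Am q) *ᵥ (Uᴴ *ᵥ w) := by
      rw [Polynomial.aeval_eq_sum_range' hdq A, Polynomial.aeval_eq_sum_range' hdq Am]
      simp only [krylov_sum_mulVec, krylov_mulVec_sum, Matrix.smul_mulVec,
        Matrix.mulVec_smul]
      exact Finset.sum_congr rfl fun k hk => by rw [hC2 k (Finset.mem_range.mp hk).le]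
    have hBw : (Polynomial.aeval A q) *ᵥ w = u := by
      rw [hw, Matrix.mulVec_mulVec, Matrix.mul_nonsing_inv _ hdet, Matrix.one_mulVec]
    have hxq : x = (Polynomial.aeval Am q) *ᵥ (Uᴴ *ᵥ w) := by
      rw [hx, ← hBw, hC3]
    have hC4 : Uᴴ *ᵥ w = z := by
      rw [hz, hxq]
      conv_rhs => rw [Matrix.mulVec_mulVec]
      rw [Matrix.nonsing_inv_mul _ hdetm, Matrix.one_mulVec]
    have hmono : ∀ k : ℕ, k < 2 * m →
        star u ⬝ᵥ ((A ^ k * (Polynomial.aeval A (q.map (starRingEnd ℂ) * q))⁻¹) *ᵥ u)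
          = star x ⬝ᵥ ((Am ^ k * (Polynomial.aeval Am (q.map (starRingEnd ℂ) * q))⁻¹) *ᵥ x) := by
      intro k hk
      obtain ⟨i, j, hik, hi, hj⟩ : ∃ i j, k = i + j ∧ i ≤ m - 1 ∧ j ≤ m :=
        ⟨min k (m - 1), k - min k (m - 1), by omega, min_le_right _ _, by omega⟩
      subst hik
      rw [krylov_quad A hA q hqA u i j, krylov_quad Am hAmH q hqAmUnit x i j, ← hw, ← hz]
      have e1 : A ^ i *ᵥ w = U *ᵥ (Am ^ i *ᵥ z) := by
        rw [← hC4, ← hC2 i (by omega), hC1 i hi]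
      have e2 : Uᴴ *ᵥ (A ^ j *ᵥ w) = Am ^ j *ᵥ z := by rw [hC2 j hj, hC4]
      rw [e1, krylov_shift, e2]
    have hp2 : p.natDegree < 2 * m := by omega
    rw [Polynomial.aeval_eq_sum_range' hp2 A, Polynomial.aeval_eq_sum_range' hp2 Am]
    simp only [Finset.sum_mul, krylov_sum_mulVec, krylov_dotProduct_sum, smul_mul_assoc,
      Matrix.smul_mulVec, dotProduct_smul]
    exact Finset.sum_congr rfl fun k hk => by rw [hmono k (Finset.mem_range.mp hk)]
end

section
/- Let A be Hermitian and R_m(A,u) a rational Krylov subspace with denominator q_{m−1}, U_m an orthonormal basis, x = U_m* u. Then for every rational function r = p/q_{m−1} with p a polynomial of degree at most m−1, r(A)u = U_m r(A_m) x, where A_m = U_m* A U_m. -/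
open Matrix Polynomial

/-- In a rational Krylov subspace with denominator `q = q_{m−1}`
(with `q(A)` and `q(A_m)` invertible), orthonormal basis `U` and `x = Uᴴ u`,
every rational function `r = p/q` with `deg p ≤ m−1` satisfies
`r(A) u = U r(A_m) x`, where `A_m = Uᴴ A U`. -/
theorem stmt_9 {n m d : ℕ} (hd : d ≤ m - 1)
    (A : Matrix (Fin n) (Fin n) ℂ) (hA : A.IsHermitian)
    (u : Fin n → ℂ)
    (s : Fin d → ℂ) (q : Polynomial ℂ)
    (hq : q = ∏ j : Fin d, (Polynomial.X - Polynomial.C (s j)))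
    (hqA : IsUnit (Polynomial.aeval A q))
    (U : Matrix (Fin n) (Fin m) ℂ) (hU : Uᴴ * U = 1)
    (hspan : ∀ v : Fin n → ℂ,
      (∃ y, U *ᵥ y = v) ↔
        ∃ p : Polynomial ℂ, p.natDegree ≤ m - 1 ∧
          v = (Polynomial.aeval A p) *ᵥ ((Polynomial.aeval A q)⁻¹ *ᵥ u))
    (Am : Matrix (Fin m) (Fin m) ℂ) (hAm : Am = Uᴴ * A * U)
    (hqAm : IsUnit (Polynomial.aeval Am q))
    (x : Fin m → ℂ) (hx : x = Uᴴ *ᵥ u) :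
    ∀ p : Polynomial ℂ, p.natDegree ≤ m - 1 →
      (Polynomial.aeval A p) *ᵥ ((Polynomial.aeval A q)⁻¹ *ᵥ u)
        = U *ᵥ ((Polynomial.aeval Am p) *ᵥ ((Polynomial.aeval Am q)⁻¹ *ᵥ x)) := by
  intro p hp
  set w : Fin n → ℂ := (Polynomial.aeval A q)⁻¹ *ᵥ u with hw
  -- membership of g(A)w in the range of U for deg g ≤ m-1
  have hmem : ∀ g : Polynomial ℂ, g.natDegree ≤ m - 1 →
      ∃ y, U *ᵥ y = (Polynomial.aeval A g) *ᵥ w := fun g hg =>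
    (hspan _).mpr ⟨g, hg, rfl⟩
  -- projection: U Uᴴ acts as identity on range U
  have hproj : ∀ v : Fin n → ℂ, (∃ y, U *ᵥ y = v) → U *ᵥ (Uᴴ *ᵥ v) = v := by
    rintro v ⟨y, rfl⟩
    rw [mulVec_mulVec, mulVec_mulVec, Matrix.mul_assoc, hU, Matrix.mul_one]
  -- key step: for v in range U, Uᴴ A v = Am Uᴴ v
  have hstep : ∀ v : Fin n → ℂ, (∃ y, U *ᵥ y = v) →
      Uᴴ *ᵥ (A *ᵥ v) = Am *ᵥ (Uᴴ *ᵥ v) := by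
    rintro v ⟨y, rfl⟩
    simp only [mulVec_mulVec, hAm, Matrix.mul_assoc, hU, Matrix.mul_one]
  -- powers
  have hpow : ∀ j : ℕ, j ≤ m - 1 →
      Uᴴ *ᵥ ((A ^ j) *ᵥ w) = (Am ^ j) *ᵥ (Uᴴ *ᵥ w) := by
    intro j
    induction j with
    | zero => intro _; simp
    | succ j ih =>
      intro hj
      have hj' : j ≤ m - 1 := le_trans (Nat.le_succ j) hj
      have hjmem : ∃ y, U *ᵥ y = (A ^ j) *ᵥ w := by
        have := hmem (Polynomial.X ^ j) (by
          simpa [Polynomial.natDegree_X_pow] using hj')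
        simpa [map_pow] using this
      calc Uᴴ *ᵥ ((A ^ (j + 1)) *ᵥ w)
          = Uᴴ *ᵥ (A *ᵥ ((A ^ j) *ᵥ w)) := by
            rw [pow_succ', ← mulVec_mulVec]
        _ = Am *ᵥ (Uᴴ *ᵥ ((A ^ j) *ᵥ w)) := hstep _ hjmem
        _ = Am *ᵥ ((Am ^ j) *ᵥ (Uᴴ *ᵥ w)) := by rw [ih hj']
        _ = (Am ^ (j + 1)) *ᵥ (Uᴴ *ᵥ w) := by
            rw [mulVec_mulVec, ← pow_succ']
  -- polynomial version
  have hpoly : ∀ g : Polynomial ℂ, g.natDegree ≤ m - 1 →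
      Uᴴ *ᵥ ((Polynomial.aeval A g) *ᵥ w) = (Polynomial.aeval Am g) *ᵥ (Uᴴ *ᵥ w) := by
    intro g hg
    rw [Polynomial.aeval_eq_sum_range (x := A), Polynomial.aeval_eq_sum_range (x := Am)]
    have h1 : (∑ i ∈ Finset.range (g.natDegree + 1), g.coeff i • A ^ i) *ᵥ w
        = ∑ i ∈ Finset.range (g.natDegree + 1), (g.coeff i • A ^ i) *ᵥ w :=
      map_sum (Matrix.mulVec.addMonoidHomLeft w) _ _
    have h2 : (∑ i ∈ Finset.range (g.natDegree + 1), g.coeff i • Am ^ i) *ᵥ (Uᴴ *ᵥ w)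
        = ∑ i ∈ Finset.range (g.natDegree + 1), (g.coeff i • Am ^ i) *ᵥ (Uᴴ *ᵥ w) :=
      map_sum (Matrix.mulVec.addMonoidHomLeft (Uᴴ *ᵥ w)) _ _
    have h3 : Uᴴ *ᵥ (∑ i ∈ Finset.range (g.natDegree + 1), (g.coeff i • A ^ i) *ᵥ w)
        = ∑ i ∈ Finset.range (g.natDegree + 1), Uᴴ *ᵥ ((g.coeff i • A ^ i) *ᵥ w) :=
      map_sum (Matrix.mulVecLin Uᴴ) _ _
    rw [h1, h3, h2]
    refine Finset.sum_congr rfl fun i hi => ?_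
    have hi' : i ≤ m - 1 := by
      have : i ≤ g.natDegree := Nat.lt_succ_iff.mp (Finset.mem_range.mp hi)
      exact le_trans this hg
    rw [smul_mulVec, smul_mulVec, mulVec_smul, hpow i hi']
  -- degree of q
  have hqdeg : q.natDegree ≤ m - 1 := by
    have : q.natDegree ≤ d := by
      rw [hq]
      refine le_trans (Polynomial.natDegree_prod_le _ _) ?_
      simp [Polynomial.natDegree_X_sub_C]
    exact le_trans this hd
  -- q(A) w = u
  have hqw : (Polynomial.aeval A q) *ᵥ w = u := by
    rw [hw, mulVec_mulVec,
      Matrix.mul_nonsing_inv _ ((Matrix.isUnit_iff_isUnit_det _).mp hqA), one_mulVec]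
  -- q(Am)⁻¹ x = Uᴴ w
  have hxw : (Polynomial.aeval Am q)⁻¹ *ᵥ x = Uᴴ *ᵥ w := by
    have h1 : x = (Polynomial.aeval Am q) *ᵥ (Uᴴ *ᵥ w) := by
      rw [hx, ← hqw, hpoly q hqdeg]
    rw [h1, mulVec_mulVec,
      Matrix.nonsing_inv_mul _ ((Matrix.isUnit_iff_isUnit_det _).mp hqAm), one_mulVec]
  calc (Polynomial.aeval A p) *ᵥ w
      = U *ᵥ (Uᴴ *ᵥ ((Polynomial.aeval A p) *ᵥ w)) := (hproj _ (hmem p hp)).symm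
    _ = U *ᵥ ((Polynomial.aeval Am p) *ᵥ (Uᴴ *ᵥ w)) := by rw [hpoly p hp]
    _ = U *ᵥ ((Polynomial.aeval Am p) *ᵥ ((Polynomial.aeval Am q)⁻¹ *ᵥ x)) := by rw [hxw]
end

section
/- Let p be a polynomial of degree at most m−1 and let the quasi-orthogonal Krylov decomposition A V_m = V_m T_m + v̂_{m+1} e_m* hold, where T_m is tridiagonal (Jacobi matrix with modified (m,m) entry ω_m) and v̂_{m+1} ∈ span{v_m, v_{m+1}}. Then β_0 V_m p(T_m) e_1 = p(A) u. -/
open Matrix Polynomial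

lemma band_aux {m : ℕ} (hm : 0 < m) (T : Matrix (Fin m) (Fin m) ℂ)
    (htri : ∀ i j : Fin m, ((i : ℕ) + 1 < (j : ℕ) ∨ (j : ℕ) + 1 < (i : ℕ)) → T i j = 0)
    (k : ℕ) : ∀ j : Fin m, k < (j : ℕ) →
      ((T ^ k) *ᵥ (Pi.single (⟨0, hm⟩ : Fin m) 1 : Fin m → ℂ)) j = 0 := by
  induction k with
  | zero =>
      intro j hj
      simp only [pow_zero, Matrix.one_mulVec]
      exact Pi.single_eq_of_ne (Fin.ne_of_val_ne (by simpa using hj.ne')) 1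
  | succ k ih =>
      intro j hj
      rw [pow_succ', ← Matrix.mulVec_mulVec]
      set w := (T ^ k) *ᵥ (Pi.single (⟨0, hm⟩ : Fin m) 1 : Fin m → ℂ) with hw
      simp only [Matrix.mulVec, dotProduct]
      apply Finset.sum_eq_zero
      intro i _
      by_cases hik : k < (i : ℕ)
      · rw [ih i hik, mul_zero]
      · push_neg at hik
        rw [htri j i (Or.inr (by omega)), zero_mul]

lemma my_sum_mulVec {a b : ℕ} (s : Finset ℕ) (f : ℕ → Matrix (Fin a) (Fin b) ℂ)
    (v : Fin b → ℂ) : (∑ i ∈ s, f i) *ᵥ v = ∑ i ∈ s, (f i) *ᵥ v := by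
  induction s using Finset.cons_induction with
  | empty => simp [Matrix.zero_mulVec]
  | cons x s h ih => rw [Finset.sum_cons, Finset.sum_cons, Matrix.add_mulVec, ih]

lemma my_mulVec_sum {a b : ℕ} (s : Finset ℕ) (M : Matrix (Fin a) (Fin b) ℂ)
    (f : ℕ → Fin b → ℂ) : M *ᵥ (∑ i ∈ s, f i) = ∑ i ∈ s, M *ᵥ (f i) := by
  induction s using Finset.cons_induction with
  | empty => simp [Matrix.mulVec_zero]
  | cons x s h ih => rw [Finset.sum_cons, Finset.sum_cons, Matrix.mulVec_add, ih]

/-- Given the quasi-orthogonal Krylov decomposition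
`A V = V T + v̂ e_m*` with `T` tridiagonal and `u = β₀ V e₁`, every polynomial `p`
of degree at most `m−1` satisfies `β₀ V p(T) e₁ = p(A) u`. -/
theorem stmt_13 {n m : ℕ} (hm : 0 < m)
    (A : Matrix (Fin n) (Fin n) ℂ) (u : Fin n → ℂ)
    (V : Matrix (Fin n) (Fin m) ℂ) (T : Matrix (Fin m) (Fin m) ℂ)
    (htri : ∀ i j : Fin m, ((i : ℕ) + 1 < (j : ℕ) ∨ (j : ℕ) + 1 < (i : ℕ)) → T i j = 0)
    (vhat : Fin n → ℂ)
    (hdecomp : A * V = V * T +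
      Matrix.of fun (i : Fin n) (j : Fin m) => vhat i * (if (j : ℕ) = m - 1 then 1 else 0))
    (β₀ : ℂ)
    (hu : u = β₀ • (V *ᵥ (Pi.single (⟨0, hm⟩ : Fin m) 1 : Fin m → ℂ))) :
    ∀ p : Polynomial ℂ, p.natDegree ≤ m - 1 →
      β₀ • (V *ᵥ ((Polynomial.aeval T p) *ᵥ (Pi.single (⟨0, hm⟩ : Fin m) 1 : Fin m → ℂ)))
        = (Polynomial.aeval A p) *ᵥ u := by
  set e₁ : Fin m → ℂ := (Pi.single (⟨0, hm⟩ : Fin m) 1 : Fin m → ℂ) with he₁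
  have hmono : ∀ k : ℕ, k ≤ m - 1 →
      β₀ • (V *ᵥ ((T ^ k) *ᵥ e₁)) = (A ^ k) *ᵥ u := by
    intro k
    induction k with
    | zero =>
        intro _
        simp [hu]
    | succ k ih =>
        intro hk
        have hk' : k ≤ m - 1 := by omega
        have h2 : (Matrix.of fun (i : Fin n) (j : Fin m) =>
            vhat i * (if (j : ℕ) = m - 1 then 1 else 0)) *ᵥ ((T ^ k) *ᵥ e₁) = 0 := by
          set w := (T ^ k) *ᵥ e₁ with hwdef
          have hband : ∀ j : Fin m, (j : ℕ) = m - 1 → w j = 0 := fun j hj =>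
            band_aux hm T htri k j (by omega)
          funext i
          simp only [Matrix.mulVec, dotProduct, Matrix.of_apply, Pi.zero_apply]
          apply Finset.sum_eq_zero
          intro j _
          by_cases hj : (j : ℕ) = m - 1
          · rw [hband j hj, mul_zero]
          · simp [hj]
        have h1 : (A ^ (k + 1)) *ᵥ u = A *ᵥ ((A ^ k) *ᵥ u) := by
          rw [Matrix.mulVec_mulVec, pow_succ']
        rw [h1, ← ih hk', Matrix.mulVec_smul, Matrix.mulVec_mulVec, Matrix.mulVec_mulVec,
          hdecomp, Matrix.add_mulVec, h2, add_zero, Matrix.mulVec_mulVec,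
          show V * T * T ^ k = V * T ^ (k + 1) by rw [Matrix.mul_assoc, ← pow_succ']]
  intro p hp
  rw [Polynomial.aeval_eq_sum_range (x := T), Polynomial.aeval_eq_sum_range (x := A),
    my_sum_mulVec, my_sum_mulVec, my_mulVec_sum, Finset.smul_sum]
  apply Finset.sum_congr rfl
  intro k hk
  have hk' : k ≤ m - 1 := by
    simp only [Finset.mem_range] at hk
    omega
  rw [Matrix.smul_mulVec, Matrix.smul_mulVec, Matrix.mulVec_smul,
    smul_comm β₀ (p.coeff k), hmono k hk']
end

section
/- With the quasi-orthogonal residual representation T_m (tridiagonal with modified last diagonal entry), for every polynomial p of degree at most 2m−2, ⟨u, p(A)u⟩ = β_0² ⟨e_1, p(T_m) e_1⟩. -/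
open Matrix Polynomial

lemma band_pow {m : ℕ} (T : Matrix (Fin m) (Fin m) ℂ)
    (htri : ∀ i j : Fin m, ((i : ℕ) + 1 < (j : ℕ) ∨ (j : ℕ) + 1 < (i : ℕ)) → T i j = 0) :
    ∀ (k : ℕ) (i j : Fin m), ((i : ℕ) + k < (j : ℕ) ∨ (j : ℕ) + k < (i : ℕ)) →
      (T ^ k) i j = 0 := by
  intro k
  induction k with
  | zero =>
    intro i j h
    have hij : i ≠ j := Fin.ne_of_val_ne (by omega)
    simp [Matrix.one_apply, hij]
  | succ k ih =>
    intro i j h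
    rw [pow_succ', Matrix.mul_apply]
    apply Finset.sum_eq_zero
    intro l _
    rcases h with h | h
    · by_cases hl : (i : ℕ) + 1 < (l : ℕ)
      · rw [htri i l (Or.inl hl), zero_mul]
      · rw [ih l j (Or.inl (by omega)), mul_zero]
    · by_cases hl : (l : ℕ) + 1 < (i : ℕ)
      · rw [htri i l (Or.inr hl), zero_mul]
      · rw [ih l j (Or.inr (by omega)), mul_zero]

/-- With the quasi-orthogonal residual representation `T`
(Hermitian tridiagonal, `A V = V T + v̂ e_m*`, `V` orthonormal, `u = β₀ V e₁`),
for every polynomial `p` of degree at most `2m−2`,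
`⟨u, p(A) u⟩ = β₀² ⟨e₁, p(T) e₁⟩`. -/
theorem stmt_14 {n m : ℕ} (hm : 0 < m)
    (A : Matrix (Fin n) (Fin n) ℂ) (hA : A.IsHermitian)
    (u : Fin n → ℂ)
    (V : Matrix (Fin n) (Fin m) ℂ) (hV : Vᴴ * V = 1)
    (T : Matrix (Fin m) (Fin m) ℂ) (hT : T.IsHermitian)
    (htri : ∀ i j : Fin m, ((i : ℕ) + 1 < (j : ℕ) ∨ (j : ℕ) + 1 < (i : ℕ)) → T i j = 0)
    (vhat : Fin n → ℂ)
    (hdecomp : A * V = V * T +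
      Matrix.of fun (i : Fin n) (j : Fin m) => vhat i * (if (j : ℕ) = m - 1 then 1 else 0))
    (β₀ : ℝ)
    (hu : u = (β₀ : ℂ) • (V *ᵥ (Pi.single (⟨0, hm⟩ : Fin m) 1 : Fin m → ℂ))) :
    ∀ p : Polynomial ℂ, p.natDegree ≤ 2 * m - 2 →
      star u ⬝ᵥ ((Polynomial.aeval A p) *ᵥ u)
        = (β₀ : ℂ) ^ 2 *
          (star (Pi.single (⟨0, hm⟩ : Fin m) (1 : ℂ)) ⬝ᵥ
            ((Polynomial.aeval T p) *ᵥ (Pi.single (⟨0, hm⟩ : Fin m) 1 : Fin m → ℂ))) := by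
  set e1 : Fin m → ℂ := Pi.single (⟨0, hm⟩ : Fin m) 1 with he1
  -- Krylov lemma
  have kry : ∀ k, k ≤ m - 1 → (A ^ k) *ᵥ u = (β₀ : ℂ) • (V *ᵥ ((T ^ k) *ᵥ e1)) := by
    intro k
    induction k with
    | zero => intro _; simpa [Matrix.one_mulVec] using hu
    | succ k ih =>
      intro hk
      have hk' : k ≤ m - 1 := by omega
      have h1 : (A ^ (k+1)) *ᵥ u = A *ᵥ ((A ^ k) *ᵥ u) := by
        rw [pow_succ', Matrix.mulVec_mulVec]
      rw [h1, ih hk', Matrix.mulVec_smul, Matrix.mulVec_mulVec, hdecomp,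
        Matrix.add_mulVec]
      have hlast : ∀ x : Fin m, (T ^ k) ⟨m - 1, by omega⟩ x * e1 x = 0 := by
        intro x
        rcases eq_or_ne x ⟨0, hm⟩ with hx | hx
        · subst hx
          rw [band_pow T htri k _ _ (Or.inr (by simp; omega)), zero_mul]
        · simp [he1, Pi.single_eq_of_ne hx]
      have hE : (Matrix.of fun (i : Fin n) (j : Fin m) =>
          vhat i * (if (j : ℕ) = m - 1 then 1 else 0)) *ᵥ ((T ^ k) *ᵥ e1) = 0 := by
        funext i
        simp only [Matrix.mulVec, dotProduct, Matrix.of_apply, Pi.zero_apply]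
        apply Finset.sum_eq_zero
        intro j _
        by_cases hj : (j : ℕ) = m - 1
        · have hje : j = ⟨m - 1, by omega⟩ := Fin.ext hj
          rw [hje, Finset.sum_eq_zero (fun x _ => hlast x), mul_zero]
        · simp [hj]
      rw [hE, add_zero, ← Matrix.mulVec_mulVec,
        show T *ᵥ ((T ^ k) *ᵥ e1) = (T ^ (k + 1)) *ᵥ e1 by
          rw [Matrix.mulVec_mulVec, ← pow_succ']]
  -- orthonormality contraction
  have hVV : ∀ a b : Fin m → ℂ, star (V *ᵥ a) ⬝ᵥ (V *ᵥ b) = star a ⬝ᵥ b := by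
    intro a b
    rw [Matrix.star_mulVec, Matrix.dotProduct_mulVec, Matrix.vecMul_vecMul, hV,
      Matrix.vecMul_one]
  -- monomial case
  have mono : ∀ k, k ≤ 2 * m - 2 →
      star u ⬝ᵥ ((A ^ k) *ᵥ u) = (β₀ : ℂ) ^ 2 * (star e1 ⬝ᵥ ((T ^ k) *ᵥ e1)) := by
    intro k hk
    set k₁ := min k (m - 1) with hk1
    set k₂ := k - k₁ with hk2
    have hk1' : k₁ ≤ m - 1 := min_le_right _ _
    have hk2' : k₂ ≤ m - 1 := by omega
    have hksum : k₁ + k₂ = k := by omega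
    have hsplit : (A ^ k) *ᵥ u = (A ^ k₁) *ᵥ ((A ^ k₂) *ᵥ u) := by
      rw [Matrix.mulVec_mulVec, ← pow_add, hksum]
    have hherm : star u ⬝ᵥ ((A ^ k₁) *ᵥ ((A ^ k₂) *ᵥ u))
        = star ((A ^ k₁) *ᵥ u) ⬝ᵥ ((A ^ k₂) *ᵥ u) := by
      rw [Matrix.star_mulVec, Matrix.dotProduct_mulVec, (hA.pow k₁).eq]
    rw [hsplit, hherm, kry k₁ hk1', kry k₂ hk2']
    have hTherm : star ((T ^ k₁) *ᵥ e1) ⬝ᵥ ((T ^ k₂) *ᵥ e1)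
        = star e1 ⬝ᵥ ((T ^ k) *ᵥ e1) := by
      rw [Matrix.star_mulVec, (hT.pow k₁).eq, Matrix.dotProduct_mulVec,
        Matrix.vecMul_vecMul, ← pow_add, hksum, ← Matrix.dotProduct_mulVec]
    rw [star_smul, smul_dotProduct, dotProduct_smul, hVV, hTherm]
    simp only [smul_eq_mul, starRingEnd_apply, Pi.star_apply]
    rw [show star ((β₀ : ℝ) : ℂ) = ((β₀ : ℝ) : ℂ) from Complex.conj_ofReal β₀]
    ring
  -- polynomial case
  intro p hp
  rw [Polynomial.aeval_eq_sum_range]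
  rw [Polynomial.aeval_eq_sum_range (x := T)]
  have hsum : ∀ (q : ℕ) (M : ℕ → Matrix (Fin q) (Fin q) ℂ) (s : Finset ℕ) (v : Fin q → ℂ),
      (∑ i ∈ s, M i) *ᵥ v = ∑ i ∈ s, M i *ᵥ v := fun q M s v =>
    map_sum (Matrix.mulVec.addMonoidHomLeft v) M s
  have hdp : ∀ (q : ℕ) (v : Fin q → ℂ) (s : Finset ℕ) (f : ℕ → Fin q → ℂ),
      v ⬝ᵥ (∑ i ∈ s, f i) = ∑ i ∈ s, v ⬝ᵥ f i := by
    intro q v s f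
    induction s using Finset.induction_on with
    | empty => simp
    | insert _ _ h ih => rw [Finset.sum_insert h, Finset.sum_insert h, dotProduct_add, ih]
  rw [hsum, hsum, hdp, hdp, Finset.mul_sum]
  apply Finset.sum_congr rfl
  intro k hkmem
  have hk : k ≤ 2 * m - 2 := le_trans (by
    have := Finset.mem_range.mp hkmem; omega) le_rfl
  rw [Matrix.smul_mulVec, dotProduct_smul,
    Matrix.smul_mulVec, dotProduct_smul]
  rw [smul_eq_mul, smul_eq_mul]
  rw [mono k hk]
  ring
end

section
/- In the setting of the separation theorem for a single real pole s with s ∈ (θ_1, θ_m), the accumulated quadrature weights satisfy μ_n([θ_1, θ_k]) ≤ |c_1|² + ... + |c_k|² ≤ μ_n((−∞, θ_{k+1}) ∪ (θ_m, ∞)) for k = 1,...,m−1, where μ_n(R) = ∑_{j: λ_j ∈ R} |w_j|². -/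
open Polynomial Set


-- coprimality of distinct linear factors
lemma cop_lin {a b : ℝ} (h : a ≠ b) : IsCoprime (X - C a : ℝ[X]) (X - C b) :=
  Polynomial.isCoprime_X_sub_C_of_isUnit_sub (isUnit_iff_ne_zero.2 (sub_ne_zero.2 h))

lemma pair_pos_lt {x u v : ℝ} (h1 : x < u) (h2 : x < v) : 0 < (x - u) * (x - v) :=
  mul_pos_of_neg_of_neg (by linarith) (by linarith)

lemma pair_pos_gt {x u v : ℝ} (h1 : u < x) (h2 : v < x) : 0 < (x - u) * (x - v) :=
  mul_pos (by linarith) (by linarith)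

lemma pair_neg {x u v : ℝ} (h1 : u < x) (h2 : x < v) : (x - u) * (x - v) < 0 :=
  mul_neg_of_pos_of_neg (by linarith) (by linarith)

set_option maxHeartbeats 4000000 in
/-- Core one-sided certificate lemma. -/
lemma OSL_core (M r : ℕ) (y : ℕ → ℝ) (hy : StrictMono y) (hr : 1 ≤ r) (hrM : r < M) :
    ∃ q : ℝ[X], q.natDegree ≤ 2*M - 2 ∧ (∀ i, i < r → q.eval (y i) = 1) ∧
      (∀ j, r ≤ j → j < M → q.eval (y j) = 0) ∧ (∀ x, 0 ≤ q.eval x) ∧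
      (∀ x, x ≤ y (r-1) → 1 ≤ q.eval x) := by
  classical
  have hyinj : Function.Injective y := hy.injective
  set π : ℝ[X] := ∏ i ∈ Finset.range (r-1), (X - C (y i)) with hπ
  set ρ : ℝ[X] := ∏ j ∈ Finset.Ico r M, (X - C (y j)) with hρ
  set ω : ℝ[X] := (X - C (y (r-1))) * π^2 with hω
  have hπm : π.Monic := monic_prod_of_monic _ _ fun i _ => monic_X_sub_C _
  have hρm : ρ.Monic := monic_prod_of_monic _ _ fun i _ => monic_X_sub_C _
  have hωm : ω.Monic := (monic_X_sub_C _).mul (hπm.pow _)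
  have hcop : IsCoprime (ρ^2) ω := by
    refine IsCoprime.pow_left ?_
    refine IsCoprime.prod_left fun j hj => ?_
    rcases Finset.mem_Ico.mp hj with ⟨hj1, hj2⟩
    refine IsCoprime.mul_right ?_ (IsCoprime.pow_right ?_)
    · exact cop_lin fun h => by have := hyinj h; omega
    · refine IsCoprime.prod_right fun i hi => ?_
      have hi' := Finset.mem_range.mp hi
      exact cop_lin fun h => by have := hyinj h; omega
  obtain ⟨u, v, huv⟩ := hcop
  set F := u %ₘ ω with hFdef
  set q := F * ρ^2 with hqdef
  set A := -(u /ₘ ω * ρ^2 + v) with hA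
  have key : q = 1 + ω * A := by
    have hFu : F = u - ω * (u /ₘ ω) := by
      have h := modByMonic_add_div u ω
      linear_combination h
    rw [hqdef, hFu, hA]
    linear_combination huv
  -- evaluation facts
  have hπeval : ∀ i, i < r - 1 → π.eval (y i) = 0 := by
    intro i hi
    rw [hπ, eval_prod]
    exact Finset.prod_eq_zero (Finset.mem_range.mpr hi) (by simp)
  have hρeval : ∀ j, r ≤ j → j < M → ρ.eval (y j) = 0 := by
    intro j hj1 hj2
    rw [hρ, eval_prod]
    exact Finset.prod_eq_zero (Finset.mem_Ico.mpr ⟨hj1, hj2⟩) (by simp)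
  have hωeval : ∀ i, i < r → ω.eval (y i) = 0 := by
    intro i hi
    rw [hω, eval_mul, eval_pow]
    by_cases hir : i = r - 1
    · subst hir; simp
    · rw [hπeval i (by omega)]; ring
  have hq_block : ∀ i, i < r → q.eval (y i) = 1 := by
    intro i hi
    rw [key, eval_add, eval_mul, hωeval i hi, eval_one]; ring
  have hq_tail : ∀ j, r ≤ j → j < M → q.eval (y j) = 0 := by
    intro j hj1 hj2
    rw [hqdef, eval_mul, eval_pow, hρeval j hj1 hj2]; ring
  -- degree bounds
  have hπdeg : π.natDegree = r - 1 := by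
    rw [hπ, natDegree_prod _ _ fun i _ => X_sub_C_ne_zero (y i)]
    simp
  have hρdeg : ρ.natDegree = M - r := by
    rw [hρ, natDegree_prod _ _ fun i _ => X_sub_C_ne_zero (y i)]
    simp
  have hωdeg : ω.natDegree = 2*r - 1 := by
    rw [hω, natDegree_mul (X_sub_C_ne_zero _) (pow_ne_zero _ hπm.ne_zero),
      natDegree_X_sub_C, natDegree_pow, hπdeg]
    omega
  have hFdeg : F.natDegree ≤ 2*r - 2 := by
    by_cases hF0 : F = 0
    · simp [hF0]
    · have h1 : F.degree < ω.degree := degree_modByMonic_lt u hωm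
      have h2 := natDegree_lt_natDegree hF0 h1
      omega
  have hqdeg : q.natDegree ≤ 2*M - 2 := by
    have h1 : q.natDegree ≤ F.natDegree + (ρ^2).natDegree := natDegree_mul_le
    have h2 : (ρ^2).natDegree = 2*(M - r) := by rw [natDegree_pow, hρdeg]
    omega
  -- derivative vanishing
  set q' := derivative q with hq'def
  have hq'_tail : ∀ j, r ≤ j → j < M → q'.eval (y j) = 0 := by
    intro j hj1 hj2
    rw [hq'def, hqdef, derivative_mul, derivative_pow, eval_add, eval_mul, eval_mul, eval_mul,
      eval_pow, hρeval j hj1 hj2]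
    norm_num
    simp [eval_pow, hρeval j hj1 hj2]
  have hq'_block : ∀ i, i < r - 1 → q'.eval (y i) = 0 := by
    intro i hi
    have h0 : q' = derivative (ω * A) := by rw [hq'def, key]; simp
    rw [h0, derivative_mul, hω, derivative_mul, derivative_pow, eval_add, eval_mul, eval_add,
      eval_mul, eval_mul, eval_mul, eval_mul, eval_pow, hπeval i hi]
    have : eval (y i) (X - C (y (r-1))) * (eval (y i) π)^2 * eval (y i) A = 0 := by
      rw [hπeval i hi]; ring
    simp [hπeval i hi]
  -- Rolle points
  have rolle : ∀ i, i + 1 < M → i ≠ r - 1 → ∃ z, y i < z ∧ z < y (i+1) ∧ q'.eval z = 0 := by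
    intro i h1 h2
    have hab : y i < y (i+1) := hy (Nat.lt_succ_self i)
    have hval : q.eval (y i) = q.eval (y (i+1)) := by
      rcases lt_or_ge i (r-1) with h | h
      · rw [hq_block i (by omega), hq_block (i+1) (by omega)]
      · rw [hq_tail i (by omega) (by omega), hq_tail (i+1) (by omega) h1]
    obtain ⟨z, hz, hz0⟩ := exists_deriv_eq_zero hab ((Polynomial.continuous q).continuousOn) hval
    refine ⟨z, hz.1, hz.2, ?_⟩
    rwa [Polynomial.deriv] at hz0
  set Z : ℕ → ℝ := fun i => if h : i + 1 < M ∧ i ≠ r - 1 then (rolle i h.1 h.2).choose else 0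
    with hZdef
  have hZ1 : ∀ i, (i + 1 < M ∧ i ≠ r - 1) →
      y i < Z i ∧ Z i < y (i+1) ∧ q'.eval (Z i) = 0 := by
    intro i h
    rw [hZdef]
    simp only [dif_pos h]
    exact (rolle i h.1 h.2).choose_spec
  have hgb : ∀ i, i < r - 1 → i + 1 < M ∧ i ≠ r - 1 := by intro i hi; omega
  have hgt : ∀ j, r ≤ j → j < M - 1 → j + 1 < M ∧ j ≠ r - 1 := by intro j h1 h2; omega
  -- the factored derivative
  set Pb : ℝ[X] := ∏ i ∈ Finset.range (r-1), ((X - C (y i)) * (X - C (Z i))) with hPbdef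
  set Pt : ℝ[X] := ∏ j ∈ Finset.Ico r (M-1), ((X - C (y j)) * (X - C (Z j))) with hPtdef
  set P : ℝ[X] := (X - C (y (M-1))) * Pb * Pt with hPdef
  have hq'ne : q' ≠ 0 := by
    intro h
    have hdeg0 : q.natDegree = 0 := natDegree_eq_zero_of_derivative_eq_zero h
    have hqC := Polynomial.eq_C_of_natDegree_eq_zero hdeg0
    have e1 : q.eval (y (r-1)) = 1 := hq_block _ (by omega)
    have e0 : q.eval (y r) = 0 := hq_tail r le_rfl hrM
    rw [hqC] at e1 e0
    simp at e1 e0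
    rw [e0] at e1
    norm_num at e1
  have dvdy : ∀ i, i < M → i ≠ r - 1 → (X - C (y i)) ∣ q' := by
    intro i h1 h2
    refine dvd_iff_isRoot.mpr ?_
    rcases lt_or_ge i (r-1) with h | h
    · exact hq'_block i h
    · exact hq'_tail i (by omega) h1
  have dvdZ : ∀ i, (i + 1 < M ∧ i ≠ r - 1) → (X - C (Z i)) ∣ q' := by
    intro i h
    exact dvd_iff_isRoot.mpr (hZ1 i h).2.2
  -- ordering helpers
  have hyle : ∀ {i j : ℕ}, i ≤ j → y i ≤ y j := fun h => hy.monotone h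
  have hZne_y : ∀ i, (i + 1 < M ∧ i ≠ r - 1) → ∀ k, Z i ≠ y k := by
    intro i h k
    rcases le_or_gt k i with hk | hk
    · exact fun he => absurd (he ▸ (hZ1 i h).1) (not_lt.mpr (he ▸ (hyle hk)))
    · exact fun he => absurd (he ▸ (hZ1 i h).2.1) (not_lt.mpr (he ▸ (hyle hk)))
  have hZZ : ∀ i i', (i + 1 < M ∧ i ≠ r-1) → (i' + 1 < M ∧ i' ≠ r-1) → i < i' → Z i < Z i' := by
    intro i i' h h' hlt
    calc Z i < y (i+1) := (hZ1 i h).2.1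
    _ ≤ y i' := hyle hlt
    _ < Z i' := (hZ1 i' h').1
  have cop_pair : ∀ {a b u' v' : ℝ}, a ≠ u' → a ≠ v' → b ≠ u' → b ≠ v' →
      IsCoprime ((X - C a) * (X - C b) : ℝ[X]) ((X - C u') * (X - C v')) :=
    fun h1 h2 h3 h4 =>
      IsCoprime.mul_left ((cop_lin h1).mul_right (cop_lin h2))
        ((cop_lin h3).mul_right (cop_lin h4))
  have pair_cop_of_lt : ∀ i i', (i + 1 < M ∧ i ≠ r-1) → (i' + 1 < M ∧ i' ≠ r-1) → i < i' →
      IsCoprime ((X - C (y i)) * (X - C (Z i)) : ℝ[X]) ((X - C (y i')) * (X - C (Z i'))) := by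
    intro i i' h h' hlt
    have A1 : y i < y i' := hy hlt
    have A2 : y i' < Z i' := (hZ1 i' h').1
    have A3 : Z i < y i' := lt_of_lt_of_le (hZ1 i h).2.1 (hyle hlt)
    have A4 : Z i < Z i' := hZZ i i' h h' hlt
    exact cop_pair (ne_of_lt A1) (ne_of_lt (A1.trans A2)) (ne_of_lt A3) (ne_of_lt A4)
  have Pb_dvd : Pb ∣ q' := by
    rw [hPbdef]
    refine Finset.prod_dvd_of_coprime ?_ ?_
    · intro i hi i' hi' hne
      simp only [Finset.coe_range, Set.mem_Iio] at hi hi'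
      have h := hgb i hi
      have h' := hgb i' hi'
      rcases hne.lt_or_gt with hlt | hlt
      · exact pair_cop_of_lt i i' h h' hlt
      · exact (pair_cop_of_lt i' i h' h hlt).symm
    · intro i hi
      have h := hgb i (Finset.mem_range.mp hi)
      exact (cop_lin (hZne_y i h i).symm).mul_dvd (dvdy i (by omega) (by omega)) (dvdZ i h)
  have Pt_dvd : Pt ∣ q' := by
    rw [hPtdef]
    refine Finset.prod_dvd_of_coprime ?_ ?_
    · intro i hi i' hi' hne
      simp only [Finset.coe_Ico, Set.mem_Ico] at hi hi'
      have h := hgt i hi.1 hi.2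
      have h' := hgt i' hi'.1 hi'.2
      rcases hne.lt_or_gt with hlt | hlt
      · exact pair_cop_of_lt i i' h h' hlt
      · exact (pair_cop_of_lt i' i h' h hlt).symm
    · intro i hi
      rcases Finset.mem_Ico.mp hi with ⟨h1, h2⟩
      have h := hgt i h1 h2
      exact (cop_lin (hZne_y i h i).symm).mul_dvd (dvdy i (by omega) (by omega)) (dvdZ i h)
  have l_dvd : (X - C (y (M-1))) ∣ q' := dvdy (M-1) (by omega) (by omega)
  have copLb : IsCoprime (X - C (y (M-1)) : ℝ[X]) Pb := by
    rw [hPbdef]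
    refine IsCoprime.prod_right fun i hi => ?_
    have hi' := Finset.mem_range.mp hi
    have h := hgb i hi'
    have A1 : y i < y (M-1) := hy (by omega)
    have A2 : Z i < y (M-1) := lt_of_lt_of_le (hZ1 i h).2.1 (hyle (by omega))
    exact (cop_lin (ne_of_gt A1)).mul_right (cop_lin (ne_of_gt A2))
  have copLt : IsCoprime (X - C (y (M-1)) : ℝ[X]) Pt := by
    rw [hPtdef]
    refine IsCoprime.prod_right fun i hi => ?_
    rcases Finset.mem_Ico.mp hi with ⟨h1, h2⟩
    have h := hgt i h1 h2
    have A1 : y i < y (M-1) := hy (by omega)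
    have A2 : Z i < y (M-1) := lt_of_lt_of_le (hZ1 i h).2.1 (hyle (by omega))
    exact (cop_lin (ne_of_gt A1)).mul_right (cop_lin (ne_of_gt A2))
  have copbt : IsCoprime Pb Pt := by
    rw [hPbdef, hPtdef]
    refine IsCoprime.prod_left fun i hi => IsCoprime.prod_right fun j hj => ?_
    have hi' := Finset.mem_range.mp hi
    rcases Finset.mem_Ico.mp hj with ⟨h1, h2⟩
    exact pair_cop_of_lt i j (hgb i hi') (hgt j h1 h2) (by omega)
  have P_dvd : P ∣ q' := by
    rw [hPdef]
    exact (IsCoprime.mul_left copLt copbt).mul_dvd (copLb.mul_dvd l_dvd Pb_dvd) Pt_dvd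
  have pair_ne : ∀ a b : ℝ, ((X - C a) * (X - C b) : ℝ[X]) ≠ 0 := fun a b =>
    mul_ne_zero (X_sub_C_ne_zero a) (X_sub_C_ne_zero b)
  have hPbne : Pb ≠ 0 := by
    rw [hPbdef]; exact Finset.prod_ne_zero_iff.mpr fun i _ => pair_ne _ _
  have hPtne : Pt ≠ 0 := by
    rw [hPtdef]; exact Finset.prod_ne_zero_iff.mpr fun i _ => pair_ne _ _
  have hPne : P ≠ 0 := by
    rw [hPdef]; exact mul_ne_zero (mul_ne_zero (X_sub_C_ne_zero _) hPbne) hPtne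
  have pair_deg : ∀ a b : ℝ, ((X - C a) * (X - C b) : ℝ[X]).natDegree = 2 := by
    intro a b
    rw [natDegree_mul (X_sub_C_ne_zero a) (X_sub_C_ne_zero b), natDegree_X_sub_C,
      natDegree_X_sub_C]
  have hPbdeg : Pb.natDegree = 2*(r-1) := by
    rw [hPbdef, natDegree_prod _ _ fun i _ => pair_ne _ _]
    simp [pair_deg, mul_comm]
  have hPtdeg : Pt.natDegree = 2*(M-1-r) := by
    rw [hPtdef, natDegree_prod _ _ fun i _ => pair_ne _ _]
    simp [pair_deg, Nat.card_Ico, mul_comm]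
  have hPdeg : P.natDegree = 2*M - 3 := by
    rw [hPdef, natDegree_mul (mul_ne_zero (X_sub_C_ne_zero _) hPbne) hPtne,
      natDegree_mul (X_sub_C_ne_zero _) hPbne, natDegree_X_sub_C, hPbdeg, hPtdeg]
    omega
  obtain ⟨g, hg⟩ := P_dvd
  have hgne : g ≠ 0 := by rintro rfl; rw [mul_zero] at hg; exact hq'ne hg
  have hq'le : q'.natDegree ≤ 2*M - 3 := by
    have h1 : q'.natDegree ≤ q.natDegree - 1 := natDegree_derivative_le q
    omega
  have hsum : q'.natDegree = P.natDegree + g.natDegree := by rw [hg, natDegree_mul hPne hgne]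
  have hgdeg : g.natDegree = 0 := by omega
  have hgC : g = C (g.coeff 0) := Polynomial.eq_C_of_natDegree_eq_zero hgdeg
  set cg := g.coeff 0 with hcgdef
  have evalq' : ∀ x, q'.eval x = P.eval x * cg := by
    intro x
    rw [hg, eval_mul]
    nth_rewrite 1 [hgC]
    rw [eval_C]
  have evalP : ∀ x : ℝ, P.eval x =
      (x - y (M-1)) * (∏ i ∈ Finset.range (r-1), ((x - y i) * (x - Z i)))
        * (∏ j ∈ Finset.Ico r (M-1), ((x - y j) * (x - Z j))) := by
    intro x
    rw [hPdef, hPbdef, hPtdef]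
    simp [eval_prod]
  have hcgne : cg ≠ 0 := fun h0 => hgne (by rw [hgC, h0, map_zero])
  have hZl : ∀ i, i < r-1 → y i < Z i := fun i h => (hZ1 i (hgb i h)).1
  have hZu : ∀ i, i < r-1 → Z i < y (i+1) := fun i h => (hZ1 i (hgb i h)).2.1
  have hZlt : ∀ j, r ≤ j → j < M-1 → y j < Z j := fun j h1 h2 => (hZ1 j (hgt j h1 h2)).1
  have hZut : ∀ j, r ≤ j → j < M-1 → Z j < y (j+1) := fun j h1 h2 => (hZ1 j (hgt j h1 h2)).2.1
  -- anchor : cg > 0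
  have hanchor : 0 < cg := by
    have hab : y (r-1) < y r := hy (by omega)
    obtain ⟨ξ, hξ, hslope⟩ := exists_deriv_eq_slope (fun x => q.eval x) hab
      ((Polynomial.continuous q).continuousOn)
      ((Polynomial.differentiable q).differentiableOn)
    rw [Polynomial.deriv, hq_tail r le_rfl hrM, hq_block (r-1) (by omega)] at hslope
    have hd : q'.eval ξ < 0 := by
      rw [hq'def, hslope]
      apply div_neg_of_neg_of_pos
      · norm_num
      · linarith
    have hPneg : P.eval ξ < 0 := by
      rw [evalP]
      have h2 : 0 < ∏ i ∈ Finset.range (r-1), ((ξ - y i) * (ξ - Z i)) := by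
        refine Finset.prod_pos fun i hi => ?_
        have hi' := Finset.mem_range.mp hi
        have b1 : y i ≤ y (r-1) := hyle (by omega)
        have b2 : Z i < y (i+1) := hZu i hi'
        have b3 : y (i+1) ≤ y (r-1) := hyle (by omega)
        exact pair_pos_gt (by linarith [hξ.1]) (by linarith [hξ.1])
      have h3 : 0 < ∏ j ∈ Finset.Ico r (M-1), ((ξ - y j) * (ξ - Z j)) := by
        refine Finset.prod_pos fun j hj => ?_
        rcases Finset.mem_Ico.mp hj with ⟨g1, g2⟩
        have b1 : y r ≤ y j := hyle g1
        have b2 : y j < Z j := hZlt j g1 g2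
        exact pair_pos_lt (by linarith [hξ.2]) (by linarith [hξ.2])
      have h1 : ξ - y (M-1) < 0 := by
        have : y r ≤ y (M-1) := hyle (by omega)
        have := hξ.2
        linarith
      exact mul_neg_of_neg_of_pos (mul_neg_of_neg_of_pos h1 h2) h3
    rcases lt_trichotomy cg 0 with h | h | h
    · exfalso
      have : 0 < P.eval ξ * cg := mul_pos_of_neg_of_neg hPneg h
      rw [← evalq'] at this
      linarith
    · exact absurd h hcgne
    · exact h
  -- sign lemmas
  have Pneg : ∀ x : ℝ, (∀ i, i < r-1 → 0 < (x - y i) * (x - Z i)) →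
      (∀ j, r ≤ j → j < M-1 → 0 < (x - y j) * (x - Z j)) → x < y (M-1) →
      P.eval x * cg < 0 := by
    intro x h1 h2 h3
    rw [evalP]
    have p1 : 0 < ∏ i ∈ Finset.range (r-1), ((x - y i) * (x - Z i)) :=
      Finset.prod_pos fun i hi => h1 i (Finset.mem_range.mp hi)
    have p2 : 0 < ∏ j ∈ Finset.Ico r (M-1), ((x - y j) * (x - Z j)) :=
      Finset.prod_pos fun j hj => h2 j (Finset.mem_Ico.mp hj).1 (Finset.mem_Ico.mp hj).2
    have hneg : (x - y (M-1)) * (∏ i ∈ Finset.range (r-1), ((x - y i) * (x - Z i)))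
        * (∏ j ∈ Finset.Ico r (M-1), ((x - y j) * (x - Z j))) < 0 :=
      mul_neg_of_neg_of_pos (mul_neg_of_neg_of_pos (by linarith) p1) p2
    exact mul_neg_of_neg_of_pos hneg hanchor
  have Ppos_b : ∀ i0, i0 < r-1 → ∀ x, y i0 < x → x < Z i0 → 0 < P.eval x * cg := by
    intro i0 h0 x hx1 hx2
    rw [evalP]
    have hxu : x < y (i0+1) := lt_trans hx2 (hZu i0 h0)
    have hsplit : ∏ i ∈ Finset.range (r-1), ((x - y i) * (x - Z i)) =
        ((x - y i0) * (x - Z i0)) *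
          ∏ i ∈ (Finset.range (r-1)).erase i0, ((x - y i) * (x - Z i)) :=
      (Finset.mul_prod_erase _ _ (Finset.mem_range.mpr h0)).symm
    have hrest : 0 < ∏ i ∈ (Finset.range (r-1)).erase i0, ((x - y i) * (x - Z i)) := by
      refine Finset.prod_pos fun i hi => ?_
      have hi1 := Finset.mem_range.mp (Finset.mem_of_mem_erase hi)
      have hine := Finset.ne_of_mem_erase hi
      rcases hine.lt_or_gt with hlt | hlt
      · have b1 : Z i < y (i+1) := hZu i hi1
        have b2 : y (i+1) ≤ y i0 := hyle hlt
        exact pair_pos_gt (by linarith [hy.le_iff_le.mpr (le_of_lt hlt)]) (by linarith)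
      · have b1 : y (i0+1) ≤ y i := hyle hlt
        have b2 : y i < Z i := hZl i hi1
        exact pair_pos_lt (by linarith) (by linarith)
    have hblock : ∏ i ∈ Finset.range (r-1), ((x - y i) * (x - Z i)) < 0 := by
      rw [hsplit]
      exact mul_neg_of_neg_of_pos (pair_neg hx1 hx2) hrest
    have htail : 0 < ∏ j ∈ Finset.Ico r (M-1), ((x - y j) * (x - Z j)) := by
      refine Finset.prod_pos fun j hj => ?_
      rcases Finset.mem_Ico.mp hj with ⟨g1, g2⟩
      have b1 : y (i0+1) ≤ y j := hyle (by omega)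
      have b2 : y j < Z j := hZlt j g1 g2
      exact pair_pos_lt (by linarith) (by linarith)
    have hl : x - y (M-1) < 0 := by
      have : y (i0+1) ≤ y (M-1) := hyle (by omega)
      linarith
    have : 0 < (x - y (M-1)) * (∏ i ∈ Finset.range (r-1), ((x - y i) * (x - Z i)))
        * (∏ j ∈ Finset.Ico r (M-1), ((x - y j) * (x - Z j))) :=
      mul_pos (mul_pos_of_neg_of_neg hl hblock) htail
    exact mul_pos this hanchor
  have Ppos_t : ∀ j0, r ≤ j0 → j0 < M-1 → ∀ x, y j0 < x → x < Z j0 → 0 < P.eval x * cg := by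
    intro j0 g1 g2 x hx1 hx2
    rw [evalP]
    have hxu : x < y (j0+1) := lt_trans hx2 (hZut j0 g1 g2)
    have hblock : 0 < ∏ i ∈ Finset.range (r-1), ((x - y i) * (x - Z i)) := by
      refine Finset.prod_pos fun i hi => ?_
      have hi1 := Finset.mem_range.mp hi
      have b1 : Z i < y (i+1) := hZu i hi1
      have b2 : y (i+1) ≤ y j0 := hyle (by omega)
      have b3 : y i < y j0 := hy (by omega)
      exact pair_pos_gt (by linarith) (by linarith)
    have hsplit : ∏ j ∈ Finset.Ico r (M-1), ((x - y j) * (x - Z j)) =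
        ((x - y j0) * (x - Z j0)) *
          ∏ j ∈ (Finset.Ico r (M-1)).erase j0, ((x - y j) * (x - Z j)) :=
      (Finset.mul_prod_erase _ _ (Finset.mem_Ico.mpr ⟨g1, g2⟩)).symm
    have hrest : 0 < ∏ j ∈ (Finset.Ico r (M-1)).erase j0, ((x - y j) * (x - Z j)) := by
      refine Finset.prod_pos fun j hj => ?_
      rcases Finset.mem_Ico.mp (Finset.mem_of_mem_erase hj) with ⟨k1, k2⟩
      have hjne := Finset.ne_of_mem_erase hj
      rcases hjne.lt_or_gt with hlt | hlt
      · have b1 : Z j < y (j+1) := hZut j k1 k2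
        have b2 : y (j+1) ≤ y j0 := hyle hlt
        have b3 : y j < y j0 := hy hlt
        exact pair_pos_gt (by linarith) (by linarith)
      · have b1 : y (j0+1) ≤ y j := hyle hlt
        have b2 : y j < Z j := hZlt j k1 k2
        exact pair_pos_lt (by linarith) (by linarith)
    have htail : ∏ j ∈ Finset.Ico r (M-1), ((x - y j) * (x - Z j)) < 0 := by
      rw [hsplit]
      exact mul_neg_of_neg_of_pos (pair_neg hx1 hx2) hrest
    have hl : x - y (M-1) < 0 := by
      have : y (j0+1) ≤ y (M-1) := hyle (by omega)
      linarith
    have : 0 < (x - y (M-1)) * (∏ i ∈ Finset.range (r-1), ((x - y i) * (x - Z i)))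
        * (∏ j ∈ Finset.Ico r (M-1), ((x - y j) * (x - Z j))) :=
      mul_pos_of_neg_of_neg (mul_neg_of_neg_of_pos hl hblock) htail
    exact mul_pos this hanchor
  have Ppos_r : ∀ x, y (M-1) < x → 0 < P.eval x * cg := by
    intro x hx
    rw [evalP]
    have hblock : 0 < ∏ i ∈ Finset.range (r-1), ((x - y i) * (x - Z i)) := by
      refine Finset.prod_pos fun i hi => ?_
      have hi1 := Finset.mem_range.mp hi
      have b1 : Z i < y (i+1) := hZu i hi1
      have b2 : y (i+1) ≤ y (M-1) := hyle (by omega)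
      have b3 : y i < y (M-1) := hy (by omega)
      exact pair_pos_gt (by linarith) (by linarith)
    have htail : 0 < ∏ j ∈ Finset.Ico r (M-1), ((x - y j) * (x - Z j)) := by
      refine Finset.prod_pos fun j hj => ?_
      rcases Finset.mem_Ico.mp hj with ⟨k1, k2⟩
      have b1 : Z j < y (j+1) := hZut j k1 k2
      have b2 : y (j+1) ≤ y (M-1) := hyle (by omega)
      have b3 : y j < y (M-1) := hy (by omega)
      exact pair_pos_gt (by linarith) (by linarith)
    exact mul_pos (mul_pos (mul_pos (by linarith) hblock) htail) hanchor
  -- monotonicity machinery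
  have qmono : ∀ s : Set ℝ, Convex ℝ s → (∀ x ∈ interior s, 0 ≤ P.eval x * cg) →
      MonotoneOn (fun t : ℝ => q.eval t) s := by
    intro s hs h
    refine monotoneOn_of_deriv_nonneg hs ((Polynomial.continuous q).continuousOn)
      (fun x _ => (Polynomial.differentiable q).differentiableAt.differentiableWithinAt) ?_
    intro x hx
    rw [Polynomial.deriv]
    have e := evalq' x
    rw [hq'def] at e
    rw [e]
    exact h x hx
  have qanti : ∀ s : Set ℝ, Convex ℝ s → (∀ x ∈ interior s, P.eval x * cg ≤ 0) →
      AntitoneOn (fun t : ℝ => q.eval t) s := by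
    intro s hs h
    refine antitoneOn_of_deriv_nonpos hs ((Polynomial.continuous q).continuousOn)
      (fun x _ => (Polynomial.differentiable q).differentiableAt.differentiableWithinAt) ?_
    intro x hx
    rw [Polynomial.deriv]
    have e := evalq' x
    rw [hq'def] at e
    rw [e]
    exact h x hx
  -- monotone regions
  have monoB : ∀ i0, i0 < r-1 → MonotoneOn (fun t : ℝ => q.eval t) (Icc (y i0) (Z i0)) := by
    intro i0 h0
    refine qmono _ (convex_Icc _ _) ?_
    intro x hx
    rw [interior_Icc] at hx
    exact le_of_lt (Ppos_b i0 h0 x hx.1 hx.2)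
  have antiB : ∀ i0, i0 < r-1 → AntitoneOn (fun t : ℝ => q.eval t) (Icc (Z i0) (y (i0+1))) := by
    intro i0 h0
    refine qanti _ (convex_Icc _ _) ?_
    intro x hx
    rw [interior_Icc] at hx
    refine le_of_lt (Pneg x ?_ ?_ ?_)
    · intro i hi
      rcases lt_trichotomy i i0 with hlt | heq | hgt
      · have b1 : Z i < y (i+1) := hZu i hi
        have b2 : y (i+1) ≤ y i0 := hyle hlt
        have b3 : y i0 < Z i0 := hZl i0 h0
        have b4 : y i < Z i := hZl i hi
        exact pair_pos_gt (by linarith [hx.1]) (by linarith [hx.1])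
      · subst heq
        have b3 : y i < Z i := hZl i h0
        exact pair_pos_gt (by linarith [hx.1]) (by linarith [hx.1])
      · have b1 : y (i0+1) ≤ y i := hyle hgt
        have b2 : y i < Z i := hZl i hi
        exact pair_pos_lt (by linarith [hx.2]) (by linarith [hx.2])
    · intro j g1 g2
      have b1 : y (i0+1) ≤ y j := hyle (by omega)
      have b2 : y j < Z j := hZlt j g1 g2
      exact pair_pos_lt (by linarith [hx.2]) (by linarith [hx.2])
    · have b : y (i0+1) ≤ y (M-1) := hyle (by omega)
      linarith [hx.2]
  have antiL : AntitoneOn (fun t : ℝ => q.eval t) (Iic (y 0)) := by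
    refine qanti _ (convex_Iic _) ?_
    intro x hx
    rw [interior_Iic] at hx
    have hx0 : x < y 0 := hx
    refine le_of_lt (Pneg x ?_ ?_ ?_)
    · intro i hi
      have b1 : y 0 ≤ y i := hyle (Nat.zero_le i)
      have b2 : y i < Z i := hZl i hi
      exact pair_pos_lt (by linarith) (by linarith)
    · intro j g1 g2
      have b1 : y 0 ≤ y j := hyle (Nat.zero_le j)
      have b2 : y j < Z j := hZlt j g1 g2
      exact pair_pos_lt (by linarith) (by linarith)
    · have b : y 0 ≤ y (M-1) := hyle (Nat.zero_le _)
      linarith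
  have antiG : AntitoneOn (fun t : ℝ => q.eval t) (Icc (y (r-1)) (y r)) := by
    refine qanti _ (convex_Icc _ _) ?_
    intro x hx
    rw [interior_Icc] at hx
    refine le_of_lt (Pneg x ?_ ?_ ?_)
    · intro i hi
      have b1 : Z i < y (i+1) := hZu i hi
      have b2 : y (i+1) ≤ y (r-1) := hyle (by omega)
      have b3 : y i ≤ y (r-1) := hyle (by omega)
      exact pair_pos_gt (by linarith [hx.1]) (by linarith [hx.1])
    · intro j g1 g2
      have b1 : y r ≤ y j := hyle g1
      have b2 : y j < Z j := hZlt j g1 g2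
      exact pair_pos_lt (by linarith [hx.2]) (by linarith [hx.2])
    · have b : y r ≤ y (M-1) := hyle (by omega)
      linarith [hx.2]
  have monoT' : ∀ j0, r ≤ j0 → j0 < M-1 →
      MonotoneOn (fun t : ℝ => q.eval t) (Icc (y j0) (Z j0)) := by
    intro j0 g1 g2
    refine qmono _ (convex_Icc _ _) ?_
    intro x hx
    rw [interior_Icc] at hx
    exact le_of_lt (Ppos_t j0 g1 g2 x hx.1 hx.2)
  have antiT' : ∀ j0, r ≤ j0 → j0 < M-1 →
      AntitoneOn (fun t : ℝ => q.eval t) (Icc (Z j0) (y (j0+1))) := by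
    intro j0 g1 g2
    refine qanti _ (convex_Icc _ _) ?_
    intro x hx
    rw [interior_Icc] at hx
    have hyz : y j0 < Z j0 := hZlt j0 g1 g2
    refine le_of_lt (Pneg x ?_ ?_ ?_)
    · intro i hi
      have b1 : Z i < y (i+1) := hZu i hi
      have b2 : y (i+1) ≤ y j0 := hyle (by omega)
      have b3 : y i ≤ y j0 := hyle (by omega)
      exact pair_pos_gt (by linarith [hx.1]) (by linarith [hx.1])
    · intro j k1 k2
      rcases lt_trichotomy j j0 with hlt | heq | hgt
      · have b1 : Z j < y (j+1) := hZut j k1 k2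
        have b2 : y (j+1) ≤ y j0 := hyle hlt
        have b3 : y j < Z j := hZlt j k1 k2
        exact pair_pos_gt (by linarith [hx.1]) (by linarith [hx.1])
      · subst heq
        exact pair_pos_gt (by linarith [hx.1]) (by linarith [hx.1])
      · have b1 : y (j0+1) ≤ y j := hyle hgt
        have b2 : y j < Z j := hZlt j k1 k2
        exact pair_pos_lt (by linarith [hx.2]) (by linarith [hx.2])
    · have b : y (j0+1) ≤ y (M-1) := hyle (by omega)
      linarith [hx.2]
  have monoR : MonotoneOn (fun t : ℝ => q.eval t) (Ici (y (M-1))) := by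
    refine qmono _ (convex_Ici _) ?_
    intro x hx
    rw [interior_Ici] at hx
    exact le_of_lt (Ppos_r x hx)
  -- interval claims
  have claimA : ∀ i0, i0 < r-1 → ∀ x, y i0 ≤ x → x ≤ y (i0+1) → 1 ≤ q.eval x := by
    intro i0 h0 x hx1 hx2
    have hyz : y i0 < Z i0 := hZl i0 h0
    have hzy : Z i0 < y (i0+1) := hZu i0 h0
    rcases le_total x (Z i0) with h | h
    · have := monoB i0 h0 (Set.mem_Icc.mpr ⟨le_refl _, le_of_lt hyz⟩)
        (Set.mem_Icc.mpr ⟨hx1, h⟩) hx1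
      simpa [hq_block i0 (by omega)] using this
    · have := antiB i0 h0 (Set.mem_Icc.mpr ⟨h, hx2⟩)
        (Set.mem_Icc.mpr ⟨le_of_lt hzy, le_refl _⟩) hx2
      simpa [hq_block (i0+1) (by omega)] using this
  have claimT : ∀ j0, r ≤ j0 → j0+1 < M → ∀ x, y j0 ≤ x → x ≤ y (j0+1) → 0 ≤ q.eval x := by
    intro j0 g1 g2 x hx1 hx2
    have hyz : y j0 < Z j0 := hZlt j0 g1 (by omega)
    have hzy : Z j0 < y (j0+1) := hZut j0 g1 (by omega)
    rcases le_total x (Z j0) with h | h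
    · have := monoT' j0 g1 (by omega) (Set.mem_Icc.mpr ⟨le_refl _, le_of_lt hyz⟩)
        (Set.mem_Icc.mpr ⟨hx1, h⟩) hx1
      simpa [hq_tail j0 g1 (by omega)] using this
    · have := antiT' j0 g1 (by omega) (Set.mem_Icc.mpr ⟨h, hx2⟩)
        (Set.mem_Icc.mpr ⟨le_of_lt hzy, le_refl _⟩) hx2
      simpa [hq_tail (j0+1) (by omega) g2] using this
  have claimG : ∀ x, y (r-1) ≤ x → x ≤ y r → 0 ≤ q.eval x := by
    intro x hx1 hx2
    have := antiG (Set.mem_Icc.mpr ⟨hx1, hx2⟩)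
      (Set.mem_Icc.mpr ⟨le_of_lt (hy (by omega)), le_refl _⟩) hx2
    simpa [hq_tail r le_rfl hrM] using this
  have claimL : ∀ x, x ≤ y 0 → 1 ≤ q.eval x := by
    intro x hx
    have := antiL (Set.mem_Iic.mpr hx) (Set.mem_Iic.mpr (le_refl _)) hx
    simpa [hq_block 0 (by omega)] using this
  have claimR : ∀ x, y (M-1) ≤ x → 0 ≤ q.eval x := by
    intro x hx
    have := monoR (Set.mem_Ici.mpr (le_refl _)) (Set.mem_Ici.mpr hx) hx
    simpa [hq_tail (M-1) (by omega) (by omega)] using this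
  -- coverage
  have cov1 : ∀ d, d ≤ r-1 → ∀ x, y (r-1-d) ≤ x → x ≤ y (r-1) → 1 ≤ q.eval x := by
    intro d
    induction d with
    | zero =>
      intro _ x hx1 hx2
      have hxe : x = y (r-1) := le_antisymm hx2 (by simpa using hx1)
      rw [hxe, hq_block (r-1) (by omega)]
    | succ d ih =>
      intro hd x hx1 hx2
      rcases le_total x (y (r-1-d)) with h | h
      · have hstep : r-1-(d+1)+1 = r-1-d := by omega
        refine claimA (r-1-(d+1)) (by omega) x hx1 ?_
        rw [hstep]
        exact h
      · exact ih (by omega) x h hx2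
  have final1 : ∀ x, x ≤ y (r-1) → 1 ≤ q.eval x := by
    intro x hx
    rcases le_total x (y 0) with h | h
    · exact claimL x h
    · refine cov1 (r-1) (le_refl _) x ?_ hx
      rw [Nat.sub_self]
      exact h
  have cov2 : ∀ d, r + d < M → ∀ x, y r ≤ x → x ≤ y (r+d) → 0 ≤ q.eval x := by
    intro d
    induction d with
    | zero =>
      intro _ x hx1 hx2
      have hxe : x = y r := le_antisymm (by simpa using hx2) hx1
      rw [hxe, hq_tail r le_rfl hrM]
    | succ d ih =>
      intro hd x hx1 hx2
      rcases le_total x (y (r+d)) with h | h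
      · exact ih (by omega) x hx1 h
      · exact claimT (r+d) (by omega) (by omega) x h hx2
  have final0 : ∀ x, 0 ≤ q.eval x := by
    intro x
    rcases le_total x (y (r-1)) with h | h
    · linarith [final1 x h]
    · rcases le_total x (y r) with h2 | h2
      · exact claimG x h h2
      · rcases le_total x (y (M-1)) with h3 | h3
        · have hre : r + (M-1-r) = M-1 := by omega
          refine cov2 (M-1-r) (by omega) x h2 ?_
          rw [hre]
          exact h3
        · exact claimR x h3
  exact ⟨q, hqdeg, hq_block, hq_tail, final0, final1⟩

set_option maxHeartbeats 1600000 in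
/-- Finset version of the one-sided certificate lemma (region to the left). -/
lemma OSL_fin (A B : Finset ℝ) (hA : A.Nonempty) (hsep : ∀ a ∈ A, ∀ b ∈ B, a < b) :
    ∃ q : ℝ[X], q.natDegree ≤ 2*(A.card + B.card) - 2 ∧ (∀ a ∈ A, q.eval a = 1) ∧
      (∀ b ∈ B, q.eval b = 0) ∧ (∀ x : ℝ, 0 ≤ q.eval x) ∧
      (∀ x : ℝ, x ≤ A.max' hA → 1 ≤ q.eval x) := by
  classical
  rcases B.eq_empty_or_nonempty with rfl | hB
  · refine ⟨1, by simp, by simp, by simp, by simp, by simp⟩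
  have haA : 1 ≤ A.card := Finset.card_pos.mpr hA
  have hbB : 1 ≤ B.card := Finset.card_pos.mpr hB
  set a := A.card with hadef
  set b := B.card with hbdef
  set y : ℕ → ℝ := fun i =>
    if h : i < a then ((A.orderIsoOfFin rfl ⟨i, h⟩ : ℝ))
    else if h' : i - a < b then ((B.orderIsoOfFin rfl ⟨i - a, h'⟩ : ℝ))
    else (B.max' hB) + (i + 1 - (a + b) : ℕ) with hydef
  have hyA : ∀ i (h : i < a), y i = (A.orderIsoOfFin rfl ⟨i, h⟩ : ℝ) := by
    intro i h; rw [hydef]; simp [dif_pos h]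
  have hyB : ∀ i (h1 : a ≤ i) (h2 : i - a < b),
      y i = (B.orderIsoOfFin rfl ⟨i - a, h2⟩ : ℝ) := by
    intro i h1 h2; rw [hydef]; simp [dif_neg (by omega : ¬ i < a), dif_pos h2]
  have hyJ : ∀ i, a + b ≤ i → y i = (B.max' hB) + (i + 1 - (a + b) : ℕ) := by
    intro i h; rw [hydef]
    simp [dif_neg (by omega : ¬ i < a), dif_neg (by omega : ¬ i - a < b)]
  have hmemA : ∀ i (h : i < a), y i ∈ A := by
    intro i h; rw [hyA i h]; exact (A.orderIsoOfFin rfl ⟨i, h⟩).2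
  have hmemB : ∀ i (h1 : a ≤ i) (h2 : i - a < b), y i ∈ B := by
    intro i h1 h2; rw [hyB i h1 h2]; exact (B.orderIsoOfFin rfl ⟨i - a, h2⟩).2
  have hy : StrictMono y := by
    apply strictMono_nat_of_lt_succ
    intro i
    rcases lt_trichotomy (i+1) a with h1 | h1 | h1
    · rw [hyA i (by omega), hyA (i+1) h1]
      exact_mod_cast (A.orderIsoOfFin rfl).strictMono (by exact_mod_cast Nat.lt_succ_self i)
    · rw [hyA i (by omega), hyB (i+1) (by omega) (by omega)]
      exact hsep _ (A.orderIsoOfFin rfl ⟨i, by omega⟩).2 _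
        ((B.orderIsoOfFin rfl ⟨i + 1 - a, by omega⟩).2)
    · -- i + 1 > a
      rcases lt_or_ge (i + 1 - a) b with h2 | h2
      · rcases lt_or_ge i a with h3 | h3
        · omega
        · rw [hyB i h3 (by omega), hyB (i+1) (by omega) h2]
          have : (⟨i - a, by omega⟩ : Fin b) < ⟨i + 1 - a, h2⟩ := by
            simp [Fin.lt_def]; omega
          exact_mod_cast (B.orderIsoOfFin rfl).strictMono this
      · rcases lt_or_ge i a with h3 | h3
        · omega
        · rcases lt_or_ge (i - a) b with h4 | h4
          · rw [hyB i h3 h4, hyJ (i+1) (by omega)]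
            have hle : (B.orderIsoOfFin rfl ⟨i - a, h4⟩ : ℝ) ≤ B.max' hB :=
              B.le_max' _ (B.orderIsoOfFin rfl ⟨i - a, h4⟩).2
            have : (1 : ℝ) ≤ ((i + 1 + 1 - (a + b) : ℕ) : ℝ) := by
              have : 1 ≤ i + 1 + 1 - (a + b) := by omega
              exact_mod_cast this
            linarith
          · rw [hyJ i (by omega), hyJ (i+1) (by omega)]
            have : ((i + 1 - (a + b) : ℕ) : ℝ) < ((i + 1 + 1 - (a + b) : ℕ) : ℝ) := by
              exact_mod_cast (by omega : i + 1 - (a + b) < i + 1 + 1 - (a + b))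
            linarith
  obtain ⟨q, hdeg, hval1, hval0, hpos, hreg⟩ := OSL_core (a + b) a y hy haA (by omega)
  have hmax : A.max' hA = y (a - 1) := by
    apply le_antisymm
    · apply Finset.max'_le
      intro v hv
      obtain ⟨⟨i, hi⟩, hvi⟩ := (A.orderIsoOfFin rfl).surjective ⟨v, hv⟩
      have : v = y i := by rw [hyA i hi, hvi]
      rw [this]
      exact hy.monotone (by omega)
    · exact A.le_max' _ (hmemA (a-1) (by omega))
  refine ⟨q, hdeg, ?_, ?_, hpos, ?_⟩
  · intro v hv
    obtain ⟨⟨i, hi⟩, hvi⟩ := (A.orderIsoOfFin rfl).surjective ⟨v, hv⟩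
    have hvy : v = y i := by rw [hyA i hi, hvi]
    rw [hvy]
    exact hval1 i hi
  · intro w hw
    obtain ⟨⟨j, hj⟩, hwj⟩ := (B.orderIsoOfFin rfl).surjective ⟨w, hw⟩
    have h2 : (a + j) - a < b := by omega
    have hwy : w = y (a + j) := by
      rw [hyB (a + j) (by omega) h2]
      have he : (⟨a + j - a, h2⟩ : Fin b) = ⟨j, hj⟩ := by
        apply Fin.ext
        simp
      rw [he, hwj]
    rw [hwy]
    exact hval0 (a + j) (by omega) (by omega)
  · intro x hx
    refine hreg x ?_
    rw [← hmax]
    exact hx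


set_option maxHeartbeats 1600000 in
/-- Mirror image of `OSL_fin`: region to the right. -/
lemma OSL_fin' (A B : Finset ℝ) (hA : A.Nonempty) (hsep : ∀ a ∈ A, ∀ b ∈ B, b < a) :
    ∃ q : ℝ[X], q.natDegree ≤ 2*(A.card + B.card) - 2 ∧ (∀ a ∈ A, q.eval a = 1) ∧
      (∀ b ∈ B, q.eval b = 0) ∧ (∀ x : ℝ, 0 ≤ q.eval x) ∧
      (∀ x : ℝ, A.min' hA ≤ x → 1 ≤ q.eval x) := by
  classical
  set A' := A.image (fun t : ℝ => -t) with hA'def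
  set B' := B.image (fun t : ℝ => -t) with hB'def
  have hA' : A'.Nonempty := hA.image _
  have hsep' : ∀ a ∈ A', ∀ b ∈ B', a < b := by
    intro a ha b hb
    obtain ⟨a0, ha0, rfl⟩ := Finset.mem_image.mp ha
    obtain ⟨b0, hb0, rfl⟩ := Finset.mem_image.mp hb
    have := hsep a0 ha0 b0 hb0
    linarith
  obtain ⟨q0, hdeg, hv1, hv0, hpos, hreg⟩ := OSL_fin A' B' hA' hsep'
  have hinj : Function.Injective (fun t : ℝ => -t) := fun a b h => by
    simpa using congrArg Neg.neg h
  have hcards : A'.card = A.card ∧ B'.card = B.card :=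
    ⟨Finset.card_image_of_injective _ hinj, Finset.card_image_of_injective _ hinj⟩
  set q : ℝ[X] := q0.comp (-X) with hqdef
  have hqeval : ∀ x : ℝ, q.eval x = q0.eval (-x) := by
    intro x
    rw [hqdef, eval_comp]
    simp
  have hmaxmin : A'.max' hA' = - (A.min' hA) := by
    apply le_antisymm
    · apply Finset.max'_le
      intro v hv
      obtain ⟨v0, hv0, rfl⟩ := Finset.mem_image.mp hv
      have := A.min'_le v0 hv0
      linarith
    · apply Finset.le_max'
      exact Finset.mem_image.mpr ⟨A.min' hA, A.min'_mem hA, rfl⟩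
  refine ⟨q, ?_, ?_, ?_, ?_, ?_⟩
  · have h1 : q.natDegree = q0.natDegree := by
      rw [hqdef, natDegree_comp]
      simp
    rw [h1, ← hcards.1, ← hcards.2]
    exact hdeg
  · intro a ha
    rw [hqeval]
    exact hv1 (-a) (Finset.mem_image.mpr ⟨a, ha, rfl⟩)
  · intro b hb
    rw [hqeval]
    exact hv0 (-b) (Finset.mem_image.mpr ⟨b, hb, rfl⟩)
  · intro x
    rw [hqeval]
    exact hpos (-x)
  · intro x hx
    rw [hqeval]
    refine hreg (-x) ?_
    rw [hmaxmin]
    linarith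




set_option maxHeartbeats 1600000 in
/-- Certificate for a middle interval block. -/
lemma cert_interval (A B : Finset ℝ) (hA : A.Nonempty)
    (hB : ∀ w ∈ B, w < A.min' hA ∨ A.max' hA < w) :
    ∃ q : ℝ[X], q.natDegree ≤ 2*(A.card + B.card) - 2 ∧ (∀ a ∈ A, q.eval a = 1) ∧
      (∀ b ∈ B, q.eval b = 0) ∧ (∀ x : ℝ, 0 ≤ q.eval x) ∧
      (∀ x : ℝ, A.min' hA ≤ x → x ≤ A.max' hA → 1 ≤ q.eval x) := by
  classical
  set BL := B.filter (fun w => w < A.min' hA) with hBL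
  set BR := B.filter (fun w => A.max' hA < w) with hBR
  have hBsplit : ∀ w ∈ B, w ∈ BL ∨ w ∈ BR := by
    intro w hw
    rcases hB w hw with h | h
    · exact Or.inl (Finset.mem_filter.mpr ⟨hw, h⟩)
    · exact Or.inr (Finset.mem_filter.mpr ⟨hw, h⟩)
  have hALne : (A ∪ BL).Nonempty := hA.mono Finset.subset_union_left
  have hARne : (A ∪ BR).Nonempty := hA.mono Finset.subset_union_left
  have hsepA : ∀ a ∈ A ∪ BL, ∀ b ∈ BR, a < b := by
    intro a ha b hb
    have hbmax := (Finset.mem_filter.mp hb).2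
    rcases Finset.mem_union.mp ha with h | h
    · exact lt_of_le_of_lt (A.le_max' a h) hbmax
    · have := (Finset.mem_filter.mp h).2
      have hmm : A.min' hA ≤ A.max' hA := A.min'_le _ (A.max'_mem hA)
      linarith
  have hsepB : ∀ a ∈ A ∪ BR, ∀ b ∈ BL, b < a := by
    intro a ha b hb
    have hbmin := (Finset.mem_filter.mp hb).2
    rcases Finset.mem_union.mp ha with h | h
    · exact lt_of_lt_of_le hbmin (A.min'_le a h)
    · have := (Finset.mem_filter.mp h).2
      have hmm : A.min' hA ≤ A.max' hA := A.min'_le _ (A.max'_mem hA)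
      linarith
  obtain ⟨qA, hdegA, hv1A, hv0A, hposA, hregA⟩ := OSL_fin (A ∪ BL) BR hALne hsepA
  obtain ⟨qB, hdegB, hv1B, hv0B, hposB, hregB⟩ := OSL_fin' (A ∪ BR) BL hARne hsepB
  have hmaxA : (A ∪ BL).max' hALne = A.max' hA := by
    apply le_antisymm
    · apply Finset.max'_le
      intro v hv
      rcases Finset.mem_union.mp hv with h | h
      · exact A.le_max' v h
      · have := (Finset.mem_filter.mp h).2
        have hmm : A.min' hA ≤ A.max' hA := A.min'_le _ (A.max'_mem hA)
        linarith
    · exact Finset.le_max' _ _ (Finset.mem_union_left _ (A.max'_mem hA))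
  have hminB : (A ∪ BR).min' hARne = A.min' hA := by
    apply le_antisymm
    · exact Finset.min'_le _ _ (Finset.mem_union_left _ (A.min'_mem hA))
    · apply Finset.le_min'
      intro v hv
      rcases Finset.mem_union.mp hv with h | h
      · exact A.min'_le v h
      · have := (Finset.mem_filter.mp h).2
        have hmm : A.min' hA ≤ A.max' hA := A.min'_le _ (A.max'_mem hA)
        linarith
  have hdisjL : Disjoint A BL := by
    refine Finset.disjoint_left.mpr fun a ha hb => ?_
    have := (Finset.mem_filter.mp hb).2
    have := A.min'_le a ha
    linarith
  have hdisjR : Disjoint A BR := by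
    refine Finset.disjoint_left.mpr fun a ha hb => ?_
    have := (Finset.mem_filter.mp hb).2
    have := A.le_max' a ha
    linarith
  have hcardL : (A ∪ BL).card + BR.card ≤ A.card + B.card := by
    rw [Finset.card_union_of_disjoint hdisjL]
    have h1 : BL.card + BR.card ≤ B.card := by
      have hd : Disjoint BL BR := by
        refine Finset.disjoint_left.mpr fun w hw hw' => ?_
        have h1 := (Finset.mem_filter.mp hw).2
        have h2 := (Finset.mem_filter.mp hw').2
        have hmm : A.min' hA ≤ A.max' hA := A.min'_le _ (A.max'_mem hA)
        linarith
      calc BL.card + BR.card = (BL ∪ BR).card := (Finset.card_union_of_disjoint hd).symm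
      _ ≤ B.card := Finset.card_le_card (Finset.union_subset
            (Finset.filter_subset _ _) (Finset.filter_subset _ _))
    omega
  have hcardR : (A ∪ BR).card + BL.card ≤ A.card + B.card := by
    rw [Finset.card_union_of_disjoint hdisjR]
    have h1 : BL.card + BR.card ≤ B.card := by
      have hd : Disjoint BL BR := by
        refine Finset.disjoint_left.mpr fun w hw hw' => ?_
        have h1 := (Finset.mem_filter.mp hw).2
        have h2 := (Finset.mem_filter.mp hw').2
        have hmm : A.min' hA ≤ A.max' hA := A.min'_le _ (A.max'_mem hA)
        linarith
      calc BL.card + BR.card = (BL ∪ BR).card := (Finset.card_union_of_disjoint hd).symm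
      _ ≤ B.card := Finset.card_le_card (Finset.union_subset
            (Finset.filter_subset _ _) (Finset.filter_subset _ _))
    omega
  refine ⟨qA + qB - 1, ?_, ?_, ?_, ?_, ?_⟩
  · have h1 : (qA + qB - 1 : ℝ[X]).natDegree ≤ max (max qA.natDegree qB.natDegree) (1 : ℝ[X]).natDegree := by
      calc (qA + qB - 1 : ℝ[X]).natDegree ≤ max (qA + qB).natDegree (1 : ℝ[X]).natDegree :=
            natDegree_sub_le _ _
      _ ≤ max (max qA.natDegree qB.natDegree) (1 : ℝ[X]).natDegree := by
            exact max_le_max (natDegree_add_le _ _) le_rfl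
    simp only [natDegree_one] at h1
    have : qA.natDegree ≤ 2*(A.card + B.card) - 2 := le_trans hdegA (by omega)
    have : qB.natDegree ≤ 2*(A.card + B.card) - 2 := le_trans hdegB (by omega)
    omega
  · intro a ha
    simp only [eval_sub, eval_add, eval_one]
    rw [hv1A a (Finset.mem_union_left _ ha), hv1B a (Finset.mem_union_left _ ha)]
    ring
  · intro w hw
    simp only [eval_sub, eval_add, eval_one]
    rcases hBsplit w hw with h | h
    · rw [hv1A w (Finset.mem_union_right _ h), hv0B w h]
      ring
    · rw [hv0A w h, hv1B w (Finset.mem_union_right _ h)]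
      ring
  · intro x
    simp only [eval_sub, eval_add, eval_one]
    rcases le_total x (A.max' hA) with h | h
    · have h1 : 1 ≤ qA.eval x := hregA x (by rw [hmaxA]; exact h)
      have h2 : 0 ≤ qB.eval x := hposB x
      linarith
    · have h1 : 1 ≤ qB.eval x := by
        refine hregB x ?_
        rw [hminB]
        have hmm : A.min' hA ≤ A.max' hA := A.min'_le _ (A.max'_mem hA)
        linarith
      have h2 : 0 ≤ qA.eval x := hposA x
      linarith
  · intro x hx1 hx2
    simp only [eval_sub, eval_add, eval_one]
    have h1 : 1 ≤ qA.eval x := hregA x (by rw [hmaxA]; exact hx2)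
    have h2 : 1 ≤ qB.eval x := hregB x (by rw [hminB]; exact hx1)
    linarith

set_option maxHeartbeats 1600000 in
/-- Certificate for the complement of an interval (two rays). -/
lemma cert_coint (A B : Finset ℝ) (α β : ℝ) (hα : α ∈ A) (hβ : β ∈ A) (hαβ : α < β)
    (hsplit : ∀ v ∈ A, v ≤ α ∨ β ≤ v) (hB : ∀ w ∈ B, α < w ∧ w < β) :
    ∃ q : ℝ[X], q.natDegree ≤ 2*(A.card + B.card) - 2 ∧ (∀ a ∈ A, q.eval a = 1) ∧
      (∀ b ∈ B, q.eval b = 0) ∧ (∀ x : ℝ, 0 ≤ q.eval x) ∧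
      (∀ x : ℝ, x ≤ α → 1 ≤ q.eval x) ∧ (∀ x : ℝ, β ≤ x → 1 ≤ q.eval x) := by
  classical
  set AL := A.filter (fun v => v ≤ α) with hAL
  set AR := A.filter (fun v => β ≤ v) with hAR
  have hALne : AL.Nonempty := ⟨α, Finset.mem_filter.mpr ⟨hα, le_refl _⟩⟩
  have hARne : AR.Nonempty := ⟨β, Finset.mem_filter.mpr ⟨hβ, le_refl _⟩⟩
  have hsepL : ∀ a ∈ AL, ∀ b ∈ B ∪ AR, a < b := by
    intro a ha b hb
    have ha' := (Finset.mem_filter.mp ha).2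
    rcases Finset.mem_union.mp hb with h | h
    · have := (hB b h).1
      linarith
    · have := (Finset.mem_filter.mp h).2
      linarith
  have hsepR : ∀ a ∈ AR, ∀ b ∈ B ∪ AL, b < a := by
    intro a ha b hb
    have ha' := (Finset.mem_filter.mp ha).2
    rcases Finset.mem_union.mp hb with h | h
    · have := (hB b h).2
      linarith
    · have := (Finset.mem_filter.mp h).2
      linarith
  obtain ⟨qL, hdegL, hv1L, hv0L, hposL, hregL⟩ := OSL_fin AL (B ∪ AR) hALne hsepL
  obtain ⟨qR, hdegR, hv1R, hv0R, hposR, hregR⟩ := OSL_fin' AR (B ∪ AL) hARne hsepR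
  have hmaxL : AL.max' hALne = α := by
    apply le_antisymm
    · exact Finset.max'_le _ _ _ fun v hv => (Finset.mem_filter.mp hv).2
    · exact Finset.le_max' AL α (Finset.mem_filter.mpr ⟨hα, le_refl _⟩)
  have hminR : AR.min' hARne = β := by
    apply le_antisymm
    · exact Finset.min'_le AR β (Finset.mem_filter.mpr ⟨hβ, le_refl _⟩)
    · exact Finset.le_min' _ _ _ fun v hv => (Finset.mem_filter.mp hv).2
  have hdisjLR : Disjoint AL AR := by
    refine Finset.disjoint_left.mpr fun v hv hv' => ?_
    have h1 := (Finset.mem_filter.mp hv).2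
    have h2 := (Finset.mem_filter.mp hv').2
    linarith
  have hALR : AL.card + AR.card ≤ A.card := by
    calc AL.card + AR.card = (AL ∪ AR).card := (Finset.card_union_of_disjoint hdisjLR).symm
    _ ≤ A.card := Finset.card_le_card (Finset.union_subset
          (Finset.filter_subset _ _) (Finset.filter_subset _ _))
  have hdisjBL : Disjoint B AL := by
    refine Finset.disjoint_left.mpr fun w hw hw' => ?_
    have h1 := (hB w hw).1
    have h2 := (Finset.mem_filter.mp hw').2
    linarith
  have hdisjBR : Disjoint B AR := by
    refine Finset.disjoint_left.mpr fun w hw hw' => ?_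
    have h1 := (hB w hw).2
    have h2 := (Finset.mem_filter.mp hw').2
    linarith
  have hcardL : AL.card + (B ∪ AR).card ≤ A.card + B.card := by
    have := Finset.card_union_le B AR
    rw [Finset.card_union_of_disjoint hdisjBR]
    omega
  have hcardR : AR.card + (B ∪ AL).card ≤ A.card + B.card := by
    rw [Finset.card_union_of_disjoint hdisjBL]
    omega
  refine ⟨qL + qR, ?_, ?_, ?_, ?_, ?_, ?_⟩
  · have h1 : (qL + qR).natDegree ≤ max qL.natDegree qR.natDegree := natDegree_add_le _ _
    have h2 : qL.natDegree ≤ 2*(A.card + B.card) - 2 := le_trans hdegL (by omega)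
    have h3 : qR.natDegree ≤ 2*(A.card + B.card) - 2 := le_trans hdegR (by omega)
    omega
  · intro v hv
    simp only [eval_add]
    rcases hsplit v hv with h | h
    · rw [hv1L v (Finset.mem_filter.mpr ⟨hv, h⟩),
        hv0R v (Finset.mem_union_right _ (Finset.mem_filter.mpr ⟨hv, h⟩))]
      ring
    · rw [hv1R v (Finset.mem_filter.mpr ⟨hv, h⟩),
        hv0L v (Finset.mem_union_right _ (Finset.mem_filter.mpr ⟨hv, h⟩))]
      ring
  · intro w hw
    simp only [eval_add]
    rw [hv0L w (Finset.mem_union_left _ hw), hv0R w (Finset.mem_union_left _ hw)]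
    ring
  · intro x
    simp only [eval_add]
    have := hposL x
    have := hposR x
    linarith
  · intro x hx
    simp only [eval_add]
    have h1 : 1 ≤ qL.eval x := hregL x (by rw [hmaxL]; exact hx)
    have h2 : 0 ≤ qR.eval x := hposR x
    linarith
  · intro x hx
    simp only [eval_add]
    have h1 : 1 ≤ qR.eval x := hregR x (by rw [hminR]; exact hx)
    have h2 : 0 ≤ qL.eval x := hposL x
    linarith



lemma inv_le_inv_side {s t1 t2 : ℝ} (h : t1 ≤ t2) (hside : s < t1 ∨ t2 < s) :
    (t2 - s)⁻¹ ≤ (t1 - s)⁻¹ := by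
  rcases hside with hs | hs
  · exact inv_anti₀ (by linarith) (by linarith)
  · rw [inv_le_inv_of_neg (by linarith) (by linarith)]
    linarith

lemma inv_lt_inv_side {s t1 t2 : ℝ} (h : t1 < t2) (hside : s < t1 ∨ t2 < s) :
    (t2 - s)⁻¹ < (t1 - s)⁻¹ := by
  rcases hside with hs | hs
  · exact inv_strictAnti₀ (by linarith) (by linarith)
  · rw [inv_lt_inv_of_neg (by linarith) (by linarith)]
    linarith

lemma transfer_natDegree (q : ℝ[X]) (s : ℝ) (N : ℕ) :
    (∑ i ∈ Finset.range (N+1), C (q.coeff i) * (X - C s)^(N-i)).natDegree ≤ N := by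
  refine natDegree_sum_le_of_forall_le _ _ fun i _ => ?_
  refine le_trans natDegree_mul_le ?_
  rw [natDegree_C, natDegree_pow, natDegree_X_sub_C]
  omega

lemma transfer_eval (q : ℝ[X]) (s : ℝ) (N : ℕ) (hdeg : q.natDegree ≤ N) (x : ℝ) (hx : x ≠ s) :
    (∑ i ∈ Finset.range (N+1), C (q.coeff i) * (X - C s)^(N-i)).eval x
      = (x - s)^N * q.eval (x - s)⁻¹ := by
  rw [eval_finset_sum]
  rw [Polynomial.eval_eq_sum_range' (lt_of_le_of_lt hdeg (Nat.lt_succ_self N)) ((x - s)⁻¹)]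
  rw [Finset.mul_sum]
  refine Finset.sum_congr rfl fun i hi => ?_
  have hiN : i ≤ N := by
    have := Finset.mem_range.mp hi
    omega
  have hxs : x - s ≠ 0 := sub_ne_zero.mpr hx
  rw [eval_mul, eval_C, eval_pow, eval_sub, eval_X, eval_C]
  rw [pow_sub₀ _ hxs hiN, inv_pow]
  ring

lemma eval_nonneg_at (p : ℝ[X]) (s : ℝ) (h : ∀ x : ℝ, x ≠ s → 0 ≤ p.eval x) : 0 ≤ p.eval s := by
  have ht : Filter.Tendsto (fun x : ℝ => p.eval x) (nhdsWithin s {s}ᶜ) (nhds (p.eval s)) :=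
    ((Polynomial.continuous p).tendsto s).mono_left nhdsWithin_le_nhds
  refine ge_of_tendsto ht ?_
  filter_upwards [self_mem_nhdsWithin] with x hx
  exact h x hx



set_option maxHeartbeats 3200000 in
/-- The rational certificate in `λ`-space. -/
lemma certC (m : ℕ) (θ : ℕ → ℝ) (hθ : StrictMono θ) (s : ℝ) (l u : ℕ)
    (hlu : l ≤ u) (hum : u < m) (hm : 1 ≤ m) :
    ∃ p : ℝ[X], p.natDegree ≤ 2*m - 2 ∧ (∀ x : ℝ, 0 ≤ p.eval x) ∧
      (∀ x : ℝ, x ≠ s → θ l ≤ x → x ≤ θ u → (x - s)^(2*m-2) ≤ p.eval x) ∧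
      (∀ i, l ≤ i → i ≤ u → θ i ≠ s → p.eval (θ i) = (θ i - s)^(2*m-2)) ∧
      (∀ i, i < m → (i < l ∨ u < i) → θ i ≠ s → p.eval (θ i) = 0) := by
  classical
  set N := 2*m - 2 with hNdef
  set g : ℕ → ℝ := fun i => (θ i - s)⁻¹ with hgdef
  set blockIdx := (Finset.range m).filter (fun i => l ≤ i ∧ i ≤ u ∧ θ i ≠ s) with hbi
  set offIdx := (Finset.range m).filter (fun i => (i < l ∨ u < i) ∧ θ i ≠ s) with hoi
  set A := blockIdx.image g with hAdef
  set B := offIdx.image g with hBdef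
  have hNeven : ∀ t : ℝ, t ≠ s → 0 < (t - s)^N := by
    intro t ht
    have h1 : (t - s)^N = ((t - s)^(m-1))^2 := by
      rw [← pow_mul]
      congr 1
      omega
    rw [h1]
    have := pow_ne_zero (m-1) (sub_ne_zero.mpr ht)
    positivity
  have hcard : A.card + B.card ≤ m := by
    have h1 : A.card ≤ blockIdx.card := Finset.card_image_le
    have h2 : B.card ≤ offIdx.card := Finset.card_image_le
    have hd : Disjoint blockIdx offIdx := by
      refine Finset.disjoint_left.mpr fun i hi hi' => ?_
      have p1 := (Finset.mem_filter.mp hi).2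
      have p2 := (Finset.mem_filter.mp hi').2
      omega
    have h3 : blockIdx.card + offIdx.card ≤ m := by
      calc blockIdx.card + offIdx.card = (blockIdx ∪ offIdx).card :=
            (Finset.card_union_of_disjoint hd).symm
      _ ≤ (Finset.range m).card := Finset.card_le_card (Finset.union_subset
            (Finset.filter_subset _ _) (Finset.filter_subset _ _))
      _ = m := Finset.card_range m
    omega
  have hmemA : ∀ i, l ≤ i → i ≤ u → θ i ≠ s → g i ∈ A := by
    intro i h1 h2 h3
    exact Finset.mem_image.mpr ⟨i, Finset.mem_filter.mpr ⟨Finset.mem_range.mpr (by omega),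
      h1, h2, h3⟩, rfl⟩
  have hmemB : ∀ i, i < m → (i < l ∨ u < i) → θ i ≠ s → g i ∈ B := by
    intro i h1 h2 h3
    exact Finset.mem_image.mpr ⟨i, Finset.mem_filter.mpr ⟨Finset.mem_range.mpr h1, h2, h3⟩, rfl⟩
  -- the builder
  have build : ∀ q : ℝ[X], q.natDegree ≤ 2*(A.card + B.card) - 2 →
      (∀ a ∈ A, q.eval a = 1) → (∀ b ∈ B, q.eval b = 0) → (∀ t : ℝ, 0 ≤ q.eval t) →
      (∀ x : ℝ, x ≠ s → θ l ≤ x → x ≤ θ u → 1 ≤ q.eval ((x - s)⁻¹)) →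
      ∃ p : ℝ[X], p.natDegree ≤ 2*m - 2 ∧ (∀ x : ℝ, 0 ≤ p.eval x) ∧
      (∀ x : ℝ, x ≠ s → θ l ≤ x → x ≤ θ u → (x - s)^(2*m-2) ≤ p.eval x) ∧
      (∀ i, l ≤ i → i ≤ u → θ i ≠ s → p.eval (θ i) = (θ i - s)^(2*m-2)) ∧
      (∀ i, i < m → (i < l ∨ u < i) → θ i ≠ s → p.eval (θ i) = 0) := by
    intro q hqdeg hq1 hq0 hqpos hqreg
    have hqdeg' : q.natDegree ≤ N := by omega
    set p : ℝ[X] := ∑ i ∈ Finset.range (N+1), C (q.coeff i) * (X - C s)^(N-i) with hpdef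
    have hpeval : ∀ x : ℝ, x ≠ s → p.eval x = (x - s)^N * q.eval ((x - s)⁻¹) := by
      intro x hx
      rw [hpdef]
      exact transfer_eval q s N hqdeg' x hx
    have hppos : ∀ x : ℝ, 0 ≤ p.eval x := by
      have hoff : ∀ x : ℝ, x ≠ s → 0 ≤ p.eval x := by
        intro x hx
        rw [hpeval x hx]
        exact mul_nonneg (le_of_lt (hNeven x hx)) (hqpos _)
      intro x
      rcases eq_or_ne x s with rfl | hx
      · exact eval_nonneg_at p x hoff
      · exact hoff x hx
    refine ⟨p, ?_, hppos, ?_, ?_, ?_⟩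
    · rw [hpdef]
      have := transfer_natDegree q s N
      omega
    · intro x hx hx1 hx2
      rw [hpeval x hx]
      have h1 : 1 ≤ q.eval ((x - s)⁻¹) := hqreg x hx hx1 hx2
      calc (x - s)^(2*m-2) = (x - s)^N := by rw [hNdef]
      _ ≤ (x - s)^N * q.eval ((x - s)⁻¹) :=
            le_mul_of_one_le_right (le_of_lt (hNeven x hx)) h1
    · intro i h1 h2 h3
      rw [hpeval _ h3, hq1 _ (hmemA i h1 h2 h3)]
      rw [hNdef]
      ring
    · intro i h1 h2 h3
      rw [hpeval _ h3, hq0 _ (hmemB i h1 h2 h3)]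
      ring
  -- case analysis on the position of s
  have caseInt : (s < θ l ∨ θ u < s) → ∃ p : ℝ[X], p.natDegree ≤ 2*m - 2 ∧ (∀ x : ℝ, 0 ≤ p.eval x) ∧
      (∀ x : ℝ, x ≠ s → θ l ≤ x → x ≤ θ u → (x - s)^(2*m-2) ≤ p.eval x) ∧
      (∀ i, l ≤ i → i ≤ u → θ i ≠ s → p.eval (θ i) = (θ i - s)^(2*m-2)) ∧
      (∀ i, i < m → (i < l ∨ u < i) → θ i ≠ s → p.eval (θ i) = 0) := by
    intro hside
    have hlne : θ l ≠ s := by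
      rcases hside with h | h
      · exact fun he => by rw [he] at h; exact lt_irrefl _ h
      · have h2 := hθ.monotone hlu
        exact fun he => by rw [he] at h2; linarith
    have hlneA : g l ∈ A := hmemA l le_rfl hlu hlne
    have hAne : A.Nonempty := ⟨g l, hlneA⟩
    have hsideof : ∀ i, l ≤ i → i ≤ u → (s < θ i ∨ θ i < s) ∧ θ i ≠ s := by
      intro i h1 h2
      rcases hside with h | h
      · have : θ l ≤ θ i := hθ.monotone h1
        exact ⟨Or.inl (by linarith), by intro he; rw [he] at this; linarith⟩
      · have : θ i ≤ θ u := hθ.monotone h2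
        exact ⟨Or.inr (by linarith), by intro he; rw [he] at this; linarith⟩
    have hbounds : ∀ v ∈ A, g u ≤ v ∧ v ≤ g l := by
      intro v hv
      obtain ⟨i, hi, rfl⟩ := Finset.mem_image.mp hv
      obtain ⟨_, h1, h2, h3⟩ := Finset.mem_filter.mp hi
      constructor
      · refine inv_le_inv_side (hθ.monotone h2) ?_
        rcases hside with h | h
        · exact Or.inl (lt_of_lt_of_le h (hθ.monotone h1))
        · exact Or.inr h
      · refine inv_le_inv_side (hθ.monotone h1) ?_
        rcases hside with h | h
        · exact Or.inl h
        · exact Or.inr (lt_of_le_of_lt (hθ.monotone h2) h)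
    have huA : g u ∈ A := hmemA u hlu le_rfl (hsideof u hlu le_rfl).2
    have hminA : A.min' hAne = g u := by
      apply le_antisymm (Finset.min'_le _ _ huA)
      exact Finset.le_min' _ _ _ fun v hv => (hbounds v hv).1
    have hmaxA : A.max' hAne = g l := by
      apply le_antisymm
      · exact Finset.max'_le _ _ _ fun v hv => (hbounds v hv).2
      · exact Finset.le_max' _ _ hlneA
    have hBout : ∀ w ∈ B, w < A.min' hAne ∨ A.max' hAne < w := by
      intro w hw
      rw [hminA, hmaxA]
      obtain ⟨j, hj, rfl⟩ := Finset.mem_image.mp hw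
      obtain ⟨hjr, hjlu, hjs⟩ := Finset.mem_filter.mp hj
      rcases hjlu with hjl | hju
      · have hθj : θ j < θ l := hθ hjl
        rcases lt_trichotomy (θ j) s with hc | hc | hc
        · rcases hside with h | h
          · left
            have h1 : (θ j - s)⁻¹ < 0 := inv_lt_zero.mpr (by linarith)
            have h2 : (0:ℝ) < (θ u - s)⁻¹ := inv_pos.mpr (by linarith [hθ.monotone hlu])
            have e1 : g j = (θ j - s)⁻¹ := rfl
            have e2 : g u = (θ u - s)⁻¹ := rfl
            rw [e1, e2]
            linarith
          · right
            exact inv_lt_inv_side hθj (Or.inr (by linarith [hθ.monotone hlu]))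
        · exact absurd hc hjs
        · right
          exact inv_lt_inv_side hθj (Or.inl hc)
      · have hθj : θ u < θ j := hθ hju
        rcases lt_trichotomy (θ j) s with hc | hc | hc
        · left
          exact inv_lt_inv_side hθj (Or.inr hc)
        · exact absurd hc hjs
        · rcases hside with h | h
          · left
            exact inv_lt_inv_side hθj (Or.inl (by linarith [hθ.monotone hlu]))
          · right
            have h1 : (0:ℝ) < (θ j - s)⁻¹ := inv_pos.mpr (by linarith)
            have h2 : (θ l - s)⁻¹ < 0 := inv_lt_zero.mpr (by linarith [hθ.monotone hlu])
            have e1 : g j = (θ j - s)⁻¹ := rfl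
            have e2 : g l = (θ l - s)⁻¹ := rfl
            rw [e1, e2]
            linarith
    obtain ⟨q, hd, h1, h0, hp, hreg⟩ := cert_interval A B hAne hBout
    refine build q hd h1 h0 hp ?_
    intro x hx hx1 hx2
    refine hreg _ ?_ ?_
    · rw [hminA]
      refine inv_le_inv_side hx2 ?_
      rcases hside with h | h
      · exact Or.inl (by linarith)
      · exact Or.inr h
    · rw [hmaxA]
      refine inv_le_inv_side hx1 ?_
      rcases hside with h | h
      · exact Or.inl h
      · exact Or.inr (by linarith)
  rcases lt_trichotomy s (θ l) with hsl | hsl | hsl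
  · exact caseInt (Or.inl hsl)
  · -- s = θ l
    by_cases hlu' : l = u
    · refine ⟨0, by simp, by simp, ?_, ?_, by simp⟩
      · intro x hx hx1 hx2
        rw [← hlu'] at hx2
        have : x = θ l := le_antisymm hx2 hx1
        rw [this, ← hsl] at hx
        exact absurd rfl hx
      · intro i h1 h2 h3
        rw [← hlu'] at h2
        have : i = l := le_antisymm h2 h1
        rw [this, ← hsl] at h3
        exact absurd rfl h3
    · have hlu2 : l < u := lt_of_le_of_ne hlu hlu'
      have hsu : s < θ u := by rw [hsl]; exact hθ hlu2
      have hApos : ∀ i, l ≤ i → i ≤ u → θ i ≠ s → s < θ i := by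
        intro i h1 h2 h3
        have h4 : θ l ≤ θ i := hθ.monotone h1
        rcases lt_or_eq_of_le h4 with h | h
        · linarith [hsl]
        · exfalso
          apply h3
          rw [← h, ← hsl]
      have huA : g u ∈ A := hmemA u hlu le_rfl (ne_of_gt (by linarith) : θ u ≠ s)
      have hAne : A.Nonempty := ⟨g u, huA⟩
      have hbounds : ∀ v ∈ A, g u ≤ v := by
        intro v hv
        obtain ⟨i, hi, rfl⟩ := Finset.mem_image.mp hv
        obtain ⟨_, h1, h2, h3⟩ := Finset.mem_filter.mp hi
        exact inv_le_inv_side (hθ.monotone h2) (Or.inl (hApos i h1 h2 h3))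
      have hminA : A.min' hAne = g u := by
        apply le_antisymm (Finset.min'_le _ _ huA)
        exact Finset.le_min' _ _ _ hbounds
      have hsep : ∀ a ∈ A, ∀ b ∈ B, b < a := by
        intro a ha b hb
        obtain ⟨i, hi, rfl⟩ := Finset.mem_image.mp ha
        obtain ⟨_, h1, h2, h3⟩ := Finset.mem_filter.mp hi
        obtain ⟨j, hj, rfl⟩ := Finset.mem_image.mp hb
        obtain ⟨hjr, hjlu, hjs⟩ := Finset.mem_filter.mp hj
        have hai : s < θ i := hApos i h1 h2 h3
        rcases hjlu with hjl | hju
        · have h5 : θ j < θ l := hθ hjl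
          have hgb : (θ j - s)⁻¹ < 0 := inv_lt_zero.mpr (by linarith [hsl])
          have hga : (0:ℝ) < (θ i - s)⁻¹ := inv_pos.mpr (by linarith)
          have e1 : g j = (θ j - s)⁻¹ := rfl
          have e2 : g i = (θ i - s)⁻¹ := rfl
          rw [e1, e2]
          linarith
        · have hθj : θ u < θ j := hθ hju
          have h5 : (θ j - s)⁻¹ < (θ u - s)⁻¹ := inv_lt_inv_side hθj (Or.inl hsu)
          exact lt_of_lt_of_le h5 (hbounds _ (Finset.mem_image.mpr ⟨i, hi, rfl⟩))
      obtain ⟨q, hd, h1, h0, hp, hreg⟩ := OSL_fin' A B hAne hsep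
      refine build q hd h1 h0 hp ?_
      intro x hx hx1 hx2
      refine hreg _ ?_
      rw [hminA]
      have hxs : s < x := by
        rcases lt_or_eq_of_le hx1 with h | h
        · linarith [hsl]
        · exfalso
          apply hx
          rw [← h, ← hsl]
      exact inv_le_inv_side hx2 (Or.inl hxs)
  · rcases lt_trichotomy s (θ u) with hsu | hsu | hsu
    · -- θ l < s < θ u : co-interval case
      have hlne : θ l ≠ s := ne_of_lt hsl
      have hune : θ u ≠ s := ne_of_gt hsu
      have hαA : g l ∈ A := hmemA l le_rfl hlu hlne
      have hβA : g u ∈ A := hmemA u hlu le_rfl hune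
      have hαβ : g l < g u := by
        have h1 : (θ l - s)⁻¹ < 0 := inv_lt_zero.mpr (by linarith)
        have h2 : (0:ℝ) < (θ u - s)⁻¹ := inv_pos.mpr (by linarith)
        have e1 : g l = (θ l - s)⁻¹ := rfl
        have e2 : g u = (θ u - s)⁻¹ := rfl
        rw [e1, e2]; linarith
      have hsplit : ∀ v ∈ A, v ≤ g l ∨ g u ≤ v := by
        intro v hv
        obtain ⟨i, hi, rfl⟩ := Finset.mem_image.mp hv
        obtain ⟨_, h1, h2, h3⟩ := Finset.mem_filter.mp hi
        rcases lt_trichotomy (θ i) s with hc | hc | hc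
        · exact Or.inl (inv_le_inv_side (hθ.monotone h1) (Or.inr hc))
        · exact absurd hc h3
        · exact Or.inr (inv_le_inv_side (hθ.monotone h2) (Or.inl hc))
      have hBmid : ∀ w ∈ B, g l < w ∧ w < g u := by
        intro w hw
        obtain ⟨j, hj, rfl⟩ := Finset.mem_image.mp hw
        obtain ⟨hjr, hjlu, hjs⟩ := Finset.mem_filter.mp hj
        rcases hjlu with hjl | hju
        · have hθj : θ j < θ l := hθ hjl
          constructor
          · exact inv_lt_inv_side hθj (Or.inr hsl)
          · have h1 : (θ j - s)⁻¹ < 0 := inv_lt_zero.mpr (by linarith)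
            have h2 : (0:ℝ) < (θ u - s)⁻¹ := inv_pos.mpr (by linarith)
            have e1 : g j = (θ j - s)⁻¹ := rfl
            have e2 : g u = (θ u - s)⁻¹ := rfl
            rw [e1, e2]; linarith
        · have hθj : θ u < θ j := hθ hju
          constructor
          · have h1 : (0:ℝ) < (θ j - s)⁻¹ := inv_pos.mpr (by linarith)
            have h2 : (θ l - s)⁻¹ < 0 := inv_lt_zero.mpr (by linarith)
            have e1 : g j = (θ j - s)⁻¹ := rfl
            have e2 : g l = (θ l - s)⁻¹ := rfl
            rw [e1, e2]; linarith
          · exact inv_lt_inv_side hθj (Or.inl hsu)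
      obtain ⟨q, hd, h1, h0, hp, hreg1, hreg2⟩ :=
        cert_coint A B (g l) (g u) hαA hβA hαβ hsplit hBmid
      refine build q hd h1 h0 hp ?_
      intro x hx hx1 hx2
      rcases lt_trichotomy x s with hc | hc | hc
      · exact hreg1 _ (inv_le_inv_side hx1 (Or.inr hc))
      · exact absurd hc hx
      · exact hreg2 _ (inv_le_inv_side hx2 (Or.inl hc))
    · -- s = θ u (mirror of the s = θ l case)
      by_cases hlu' : l = u
      · exfalso
        rw [hlu'] at hsl
        linarith [hsu]
      · have hlu2 : l < u := lt_of_le_of_ne hlu hlu'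
        have hANeg : ∀ i, l ≤ i → i ≤ u → θ i ≠ s → θ i < s := by
          intro i h1 h2 h3
          have h4 : θ i ≤ θ u := hθ.monotone h2
          rcases lt_or_eq_of_le h4 with h | h
          · linarith [hsu]
          · exfalso
            apply h3
            rw [h, ← hsu]
        have hlA : g l ∈ A := hmemA l le_rfl hlu (ne_of_lt (by linarith [hθ hlu2, hsu]))
        have hAne : A.Nonempty := ⟨g l, hlA⟩
        have hbounds : ∀ v ∈ A, v ≤ g l := by
          intro v hv
          obtain ⟨i, hi, rfl⟩ := Finset.mem_image.mp hv
          obtain ⟨_, h1, h2, h3⟩ := Finset.mem_filter.mp hi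
          exact inv_le_inv_side (hθ.monotone h1) (Or.inr (hANeg i h1 h2 h3))
        have hmaxA : A.max' hAne = g l := by
          apply le_antisymm
          · exact Finset.max'_le _ _ _ hbounds
          · exact Finset.le_max' _ _ hlA
        have hsep : ∀ a ∈ A, ∀ b ∈ B, a < b := by
          intro a ha b hb
          obtain ⟨i, hi, rfl⟩ := Finset.mem_image.mp ha
          obtain ⟨_, h1, h2, h3⟩ := Finset.mem_filter.mp hi
          obtain ⟨j, hj, rfl⟩ := Finset.mem_image.mp hb
          obtain ⟨hjr, hjlu, hjs⟩ := Finset.mem_filter.mp hj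
          have hai : θ i < s := hANeg i h1 h2 h3
          rcases hjlu with hjl | hju
          · have h5 : (θ l - s)⁻¹ < (θ j - s)⁻¹ := inv_lt_inv_side (hθ hjl) (Or.inr hsl)
            exact lt_of_le_of_lt (hbounds _ (Finset.mem_image.mpr ⟨i, hi, rfl⟩)) h5
          · have hθj : θ u < θ j := hθ hju
            have hgb : (0:ℝ) < (θ j - s)⁻¹ := inv_pos.mpr (by linarith [hsu])
            have hga : (θ i - s)⁻¹ < 0 := inv_lt_zero.mpr (by linarith)
            have e1 : g j = (θ j - s)⁻¹ := rfl
            have e2 : g i = (θ i - s)⁻¹ := rfl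
            rw [e1, e2]
            linarith
        obtain ⟨q, hd, h1, h0, hp, hreg⟩ := OSL_fin A B hAne hsep
        refine build q hd h1 h0 hp ?_
        intro x hx hx1 hx2
        refine hreg _ ?_
        rw [hmaxA]
        have hxs : x < s := by
          rcases lt_or_eq_of_le hx2 with h | h
          · linarith [hsu]
          · exfalso
            apply hx
            rw [h, ← hsu]
        exact inv_le_inv_side hx1 (Or.inr hxs)
    · exact caseInt (Or.inr hsu)



lemma even_pow_pos {t s : ℝ} (h : t ≠ s) (m : ℕ) (hm : 1 ≤ m) : 0 < (t - s)^(2*m - 2) := by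
  have h1 : (t - s)^(2*m-2) = ((t - s)^(m-1))^2 := by
    rw [← pow_mul]
    congr 1
    omega
  rw [h1]
  have := pow_ne_zero (m-1) (sub_ne_zero.mpr h)
  positivity



set_option maxHeartbeats 1600000 in
/-- In the setting of the separation theorem for a single real pole
`s ∈ (θ_1, θ_m)` (rational quadrature identity of degree `2m−2` with denominator
`(λ−s)^{2m−2}`, interlacing, equal total mass), the accumulated quadrature weights
satisfy `μ_n([θ_1, θ_k]) ≤ ∑_{j≤k} ‖c j‖² ≤ μ_n((−∞, θ_{k+1}) ∪ (θ_m, ∞))` for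
`k = 1,…,m−1`. -/
theorem stmt_17 {n m : ℕ} (hm : 0 < m)
    (lam : Fin n → ℝ) (hlam : StrictMono lam)
    (w : Fin n → ℂ) (hw : ∀ j, w j ≠ 0)
    (θ : Fin m → ℝ) (hθ : StrictMono θ) (c : Fin m → ℂ)
    (s : ℝ) (hslam : ∀ j, lam j ≠ s)
    (hsθ : θ ⟨0, hm⟩ < s ∧ s < θ ⟨m - 1, Nat.sub_lt hm Nat.one_pos⟩)
    (hinter : ∀ (k : Fin m) (hk : (k : ℕ) + 1 < m),
      ∃ j, θ k < lam j ∧ lam j < θ ⟨(k : ℕ) + 1, hk⟩)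
    (hquad : ∀ p : Polynomial ℝ, p.natDegree ≤ 2 * m - 2 →
      ∑ j, ‖w j‖ ^ 2 * (p.eval (lam j) / (lam j - s) ^ (2 * m - 2))
        = ∑ j, ‖c j‖ ^ 2 * (p.eval (θ j) / (θ j - s) ^ (2 * m - 2)))
    (hmass : ∑ j, ‖c j‖ ^ 2 = ∑ j, ‖w j‖ ^ 2) :
    ∀ (k : Fin m) (hk : (k : ℕ) + 1 < m),
      (∑ j ∈ Finset.univ.filter fun j => θ ⟨0, hm⟩ ≤ lam j ∧ lam j ≤ θ k, ‖w j‖ ^ 2)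
          ≤ (∑ j ∈ Finset.univ.filter fun j => j ≤ k, ‖c j‖ ^ 2) ∧
      (∑ j ∈ Finset.univ.filter fun j => j ≤ k, ‖c j‖ ^ 2)
          ≤ ∑ j ∈ Finset.univ.filter fun j =>
              lam j < θ ⟨(k : ℕ) + 1, hk⟩ ∨ θ ⟨m - 1, Nat.sub_lt hm Nat.one_pos⟩ < lam j,
              ‖w j‖ ^ 2 := by
  intro k hk
  classical
  have hm2 : 2 ≤ m := by omega
  -- extend θ to ℕ
  set θ' : ℕ → ℝ := fun i => if h : i < m then θ ⟨i, h⟩ else θ ⟨m-1, by omega⟩ + (i + 1 - m : ℕ)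
    with hθ'def
  have hθ'eq : ∀ (i : ℕ) (h : i < m), θ' i = θ ⟨i, h⟩ := by
    intro i h
    rw [hθ'def]
    simp [dif_pos h]
  have hθ' : StrictMono θ' := by
    apply strictMono_nat_of_lt_succ
    intro i
    rcases lt_trichotomy (i+1) m with h1 | h1 | h1
    · rw [hθ'eq i (by omega), hθ'eq (i+1) h1]
      exact hθ (by simp [Fin.lt_def])
    · have he2 : θ' (i+1) = θ ⟨m-1, by omega⟩ + ((i + 1 + 1 - m : ℕ) : ℝ) := by
        rw [hθ'def]
        simp only [dif_neg (by omega : ¬ i + 1 < m)]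
      rw [hθ'eq i (by omega), he2]
      have h2 : θ ⟨i, by omega⟩ ≤ θ ⟨m-1, by omega⟩ := hθ.monotone (by simp [Fin.le_def]; omega)
      have h3 : (0:ℝ) < (i + 1 + 1 - m : ℕ) := by
        have : 1 ≤ i + 1 + 1 - m := by omega
        exact_mod_cast this
      linarith
    · have he1 : θ' i = θ ⟨m-1, by omega⟩ + ((i + 1 - m : ℕ) : ℝ) := by
        rw [hθ'def]
        simp only [dif_neg (by omega : ¬ i < m)]
      have he2 : θ' (i+1) = θ ⟨m-1, by omega⟩ + ((i + 1 + 1 - m : ℕ) : ℝ) := by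
        rw [hθ'def]
        simp only [dif_neg (by omega : ¬ i + 1 < m)]
      rw [he1, he2]
      have : ((i + 1 - m : ℕ) : ℝ) < ((i + 1 + 1 - m : ℕ) : ℝ) := by
        exact_mod_cast (by omega : i + 1 - m < i + 1 + 1 - m)
      linarith
  have hdenom : ∀ x : ℝ, x ≠ s → 0 < (x - s)^(2*m-2) := fun x hx => even_pow_pos hx m (by omega)
  constructor
  · -- goal 1
    obtain ⟨p, hpdeg, hppos, hpdom, hpblock, hpoff⟩ :=
      certC m θ' hθ' s 0 (k : ℕ) (Nat.zero_le _) (by omega) (by omega)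
    have hq := hquad p hpdeg
    have hLHS : (∑ j ∈ Finset.univ.filter fun j => θ ⟨0, hm⟩ ≤ lam j ∧ lam j ≤ θ k, ‖w j‖ ^ 2)
        ≤ ∑ j, ‖w j‖ ^ 2 * (p.eval (lam j) / (lam j - s) ^ (2 * m - 2)) := by
      rw [Finset.sum_filter]
      refine Finset.sum_le_sum fun j _ => ?_
      by_cases hj : θ ⟨0, hm⟩ ≤ lam j ∧ lam j ≤ θ k
      · rw [if_pos hj]
        have h1 : (lam j - s)^(2*m-2) ≤ p.eval (lam j) := by
          refine hpdom (lam j) (hslam j) ?_ ?_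
          · rw [hθ'eq 0 (by omega)]
            exact hj.1
          · rw [hθ'eq (k:ℕ) (by omega)]
            have : (⟨(k:ℕ), by omega⟩ : Fin m) = k := by simp
            rw [this]
            exact hj.2
        have h2 : 1 ≤ p.eval (lam j) / (lam j - s) ^ (2*m-2) :=
          (one_le_div (hdenom _ (hslam j))).mpr h1
        have h3 : (0:ℝ) ≤ ‖w j‖^2 := by positivity
        calc ‖w j‖^2 = ‖w j‖^2 * 1 := by ring
        _ ≤ ‖w j‖^2 * (p.eval (lam j) / (lam j - s) ^ (2*m-2)) :=
              mul_le_mul_of_nonneg_left h2 h3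
      · rw [if_neg hj]
        have h2 : (0:ℝ) ≤ p.eval (lam j) / (lam j - s) ^ (2*m-2) :=
          div_nonneg (hppos _) (le_of_lt (hdenom _ (hslam j)))
        positivity
    have hRHS : (∑ i, ‖c i‖ ^ 2 * (p.eval (θ i) / (θ i - s) ^ (2 * m - 2)))
        ≤ ∑ i ∈ Finset.univ.filter fun i => i ≤ k, ‖c i‖ ^ 2 := by
      rw [Finset.sum_filter]
      refine Finset.sum_le_sum fun i _ => ?_
      have hθ'i : θ' (i : ℕ) = θ i := hθ'eq (i:ℕ) i.isLt
      by_cases hi : i ≤ k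
      · rw [if_pos hi]
        by_cases his : θ i ≠ s
        · have h1 : p.eval (θ i) = (θ i - s)^(2*m-2) := by
            have := hpblock (i : ℕ) (Nat.zero_le _) (by exact_mod_cast hi) (by rw [hθ'i]; exact his)
            rw [hθ'i] at this
            exact this
          rw [h1, div_self (ne_of_gt (hdenom _ his))]
          all_goals simp
        · push_neg at his
          rw [his, sub_self]
          rw [zero_pow (by omega : 2*m-2 ≠ 0), div_zero, mul_zero]
          positivity
      · rw [if_neg hi]
        have hik : (k : ℕ) < (i : ℕ) := by
          rcases lt_or_ge (k:ℕ) (i:ℕ) with h | h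
          · exact h
          · exact absurd (by exact_mod_cast h : i ≤ k) hi
        by_cases his : θ i ≠ s
        · have h1 : p.eval (θ i) = 0 := by
            have := hpoff (i : ℕ) i.isLt (Or.inr hik) (by rw [hθ'i]; exact his)
            rw [hθ'i] at this
            exact this
          rw [h1, zero_div, mul_zero]
        · push_neg at his
          rw [his, sub_self, zero_pow (by omega : 2*m-2 ≠ 0), div_zero, mul_zero]
    calc (∑ j ∈ Finset.univ.filter fun j => θ ⟨0, hm⟩ ≤ lam j ∧ lam j ≤ θ k, ‖w j‖ ^ 2)
        ≤ ∑ j, ‖w j‖ ^ 2 * (p.eval (lam j) / (lam j - s) ^ (2 * m - 2)) := hLHS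
    _ = ∑ i, ‖c i‖ ^ 2 * (p.eval (θ i) / (θ i - s) ^ (2 * m - 2)) := hq
    _ ≤ _ := hRHS
  · -- goal 2
    obtain ⟨p, hpdeg, hppos, hpdom, hpblock, hpoff⟩ :=
      certC m θ' hθ' s ((k : ℕ)+1) (m-1) (by omega) (by omega) (by omega)
    have hq := hquad p hpdeg
    have hLHS : (∑ j ∈ Finset.univ.filter fun j =>
          ¬(lam j < θ ⟨(k : ℕ) + 1, hk⟩ ∨ θ ⟨m - 1, Nat.sub_lt hm Nat.one_pos⟩ < lam j), ‖w j‖ ^ 2)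
        ≤ ∑ j, ‖w j‖ ^ 2 * (p.eval (lam j) / (lam j - s) ^ (2 * m - 2)) := by
      rw [Finset.sum_filter]
      refine Finset.sum_le_sum fun j _ => ?_
      by_cases hj : ¬(lam j < θ ⟨(k : ℕ) + 1, hk⟩ ∨ θ ⟨m - 1, Nat.sub_lt hm Nat.one_pos⟩ < lam j)
      · rw [if_pos hj]
        push_neg at hj
        have h1 : (lam j - s)^(2*m-2) ≤ p.eval (lam j) := by
          refine hpdom (lam j) (hslam j) ?_ ?_
          · rw [hθ'eq ((k:ℕ)+1) (by omega)]
            exact hj.1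
          · rw [hθ'eq (m-1) (by omega)]
            exact hj.2
        have h2 : 1 ≤ p.eval (lam j) / (lam j - s) ^ (2*m-2) :=
          (one_le_div (hdenom _ (hslam j))).mpr h1
        have h3 : (0:ℝ) ≤ ‖w j‖^2 := by positivity
        calc ‖w j‖^2 = ‖w j‖^2 * 1 := by ring
        _ ≤ ‖w j‖^2 * (p.eval (lam j) / (lam j - s) ^ (2*m-2)) :=
              mul_le_mul_of_nonneg_left h2 h3
      · rw [if_neg hj]
        have h2 : (0:ℝ) ≤ p.eval (lam j) / (lam j - s) ^ (2*m-2) :=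
          div_nonneg (hppos _) (le_of_lt (hdenom _ (hslam j)))
        positivity
    have hRHS : (∑ i, ‖c i‖ ^ 2 * (p.eval (θ i) / (θ i - s) ^ (2 * m - 2)))
        ≤ ∑ i ∈ Finset.univ.filter fun i => ¬ i ≤ k, ‖c i‖ ^ 2 := by
      rw [Finset.sum_filter]
      refine Finset.sum_le_sum fun i _ => ?_
      have hθ'i : θ' (i : ℕ) = θ i := hθ'eq (i:ℕ) i.isLt
      by_cases hi : ¬ i ≤ k
      · rw [if_pos hi]
        have hik : (k : ℕ) + 1 ≤ (i : ℕ) := by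
          rcases lt_or_ge (k:ℕ) (i:ℕ) with h | h
          · omega
          · exact absurd (by exact_mod_cast h : i ≤ k) hi
        by_cases his : θ i ≠ s
        · have h1 : p.eval (θ i) = (θ i - s)^(2*m-2) := by
            have := hpblock (i : ℕ) hik (by omega) (by rw [hθ'i]; exact his)
            rw [hθ'i] at this
            exact this
          rw [h1, div_self (ne_of_gt (hdenom _ his))]
          all_goals simp
        · push_neg at his
          rw [his, sub_self, zero_pow (by omega : 2*m-2 ≠ 0), div_zero, mul_zero]
          positivity
      · rw [if_neg hi]
        push_neg at hi
        have hik : (i : ℕ) < (k:ℕ) + 1 := by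
          have : (i:ℕ) ≤ (k:ℕ) := by exact_mod_cast hi
          omega
        by_cases his : θ i ≠ s
        · have h1 : p.eval (θ i) = 0 := by
            have := hpoff (i : ℕ) i.isLt (Or.inl hik) (by rw [hθ'i]; exact his)
            rw [hθ'i] at this
            exact this
          rw [h1, zero_div, mul_zero]
        · push_neg at his
          rw [his, sub_self, zero_pow (by omega : 2*m-2 ≠ 0), div_zero, mul_zero]
    have hmid : (∑ j ∈ Finset.univ.filter fun j =>
          ¬(lam j < θ ⟨(k : ℕ) + 1, hk⟩ ∨ θ ⟨m - 1, Nat.sub_lt hm Nat.one_pos⟩ < lam j), ‖w j‖ ^ 2)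
        ≤ ∑ i ∈ Finset.univ.filter fun i => ¬ i ≤ k, ‖c i‖ ^ 2 := by
      calc _ ≤ ∑ j, ‖w j‖ ^ 2 * (p.eval (lam j) / (lam j - s) ^ (2 * m - 2)) := hLHS
      _ = _ := hq
      _ ≤ _ := hRHS
    have hsplitc : (∑ i ∈ Finset.univ.filter fun i => i ≤ k, ‖c i‖ ^ 2)
        + (∑ i ∈ Finset.univ.filter fun i => ¬ i ≤ k, ‖c i‖ ^ 2) = ∑ i, ‖c i‖ ^ 2 :=
      Finset.sum_filter_add_sum_filter_not _ _ _
    have hsplitw : (∑ j ∈ Finset.univ.filter fun j =>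
          lam j < θ ⟨(k : ℕ) + 1, hk⟩ ∨ θ ⟨m - 1, Nat.sub_lt hm Nat.one_pos⟩ < lam j, ‖w j‖ ^ 2)
        + (∑ j ∈ Finset.univ.filter fun j =>
          ¬(lam j < θ ⟨(k : ℕ) + 1, hk⟩ ∨ θ ⟨m - 1, Nat.sub_lt hm Nat.one_pos⟩ < lam j), ‖w j‖ ^ 2)
        = ∑ j, ‖w j‖ ^ 2 :=
      Finset.sum_filter_add_sum_filter_not _ _ _
    linarith [hmass, hmid, hsplitc, hsplitw]
end
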